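/- arXiv:2005.13436 — 7 statements merged into one kernel-verified Lean document; each statement's English description precedes it below -/
import Mathlib

section
/- Let A ∈ ℝ^{N×N} be a nonnegative doubly stochastic matrix (all row sums and all column sums equal 1) that is irreducible (for every pair of indices i, j there exists k ≥ 1 with (A^k)_{ij} > 0) and has all diagonal entries strictly positive, and let J := (1/N)1_N 1_N^T. Then: (i) AJ = JA = J; (ii) ρ := ‖A − J‖ < 1, where ‖·‖ is the ℓ₂-operator (spectral) norm; and (iii) for every x ∈ ℝ^N, ‖Ax − Jx‖ ≤ ρ‖x − Jx‖. -/
noncomputable section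
open scoped BigOperators

/-- The averaging matrix `J = (1/N) 1_N 1_Nᵀ`. -/
def consensusJ (N : ℕ) : Matrix (Fin N) (Fin N) ℝ := Matrix.of fun _ _ => (N : ℝ)⁻¹

/-- The ℓ₂-operator (spectral) norm of a real matrix, viewed as an operator on
Euclidean space. -/
def matrixL2OpNorm {N : ℕ} (M : Matrix (Fin N) (Fin N) ℝ) : ℝ :=
  ‖LinearMap.toContinuousLinearMap (Matrix.toEuclideanLin M)‖

section aux

variable {N : ℕ} (A : Matrix (Fin N) (Fin N) ℝ)

lemma euclid_norm_sq (v : EuclideanSpace ℝ (Fin N)) : ‖v‖ ^ 2 = ∑ i, v i ^ 2 := by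
  rw [EuclideanSpace.norm_eq, Real.sq_sqrt (by positivity)]
  simp [sq_abs]

lemma pow_entry_nonneg (hnonneg : ∀ i j, 0 ≤ A i j) :
    ∀ k i j, 0 ≤ (A ^ k) i j := by
  intro k
  induction k with
  | zero => intro i j; simp [Matrix.one_apply]; split <;> norm_num
  | succ n ih =>
      intro i j
      rw [pow_succ, Matrix.mul_apply]
      exact Finset.sum_nonneg fun m _ => mul_nonneg (ih i m) (hnonneg m j)

/-- Constancy on the support graph of `S = AᵀA` plus irreducibility forces global constancy. -/
lemma constancy (hnonneg : ∀ i j, 0 ≤ A i j)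
    (hirr : ∀ i j, ∃ k : ℕ, 1 ≤ k ∧ 0 < (A ^ k) i j)
    (hdiag : ∀ i, 0 < A i i) (y : Fin N → ℝ)
    (hy : ∀ i j, 0 < (∑ k, A k i * A k j) → y i = y j) :
    ∀ i j, y i = y j := by
  have aux : ∀ k i j, 0 < (A ^ k) i j → y i = y j := by
    intro k
    induction k with
    | zero =>
        intro i j h
        rcases eq_or_ne i j with rfl | hne
        · rfl
        · simp [Matrix.one_apply, hne] at h
    | succ n ih =>
        intro i j h
        rw [pow_succ, Matrix.mul_apply] at h
        have : ∃ m ∈ Finset.univ, 0 < (A ^ n) i m * A m j := by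
          by_contra hc
          push_neg at hc
          have : (∑ m, (A ^ n) i m * A m j) ≤ 0 :=
            Finset.sum_nonpos fun m hm => hc m hm
          linarith
        obtain ⟨m, _, hm⟩ := this
        have hAn : 0 ≤ (A ^ n) i m := pow_entry_nonneg A hnonneg n i m
        have hAmj : 0 < A m j := by
          by_contra hb
          push_neg at hb
          nlinarith
        have h1 : y i = y m := ih i m (by nlinarith)
        have h2 : y m = y j := by
          apply hy m j
          apply Finset.sum_pos' (fun k _ => mul_nonneg (hnonneg k m) (hnonneg k j))
          exact ⟨m, Finset.mem_univ m, mul_pos (hdiag m) hAmj⟩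
        exact h1.trans h2
  intro i j
  obtain ⟨k, _, hk⟩ := hirr i j
  exact aux k i j hk

/-- The key quadratic inequality: for mean-zero nonzero `y`, `‖Ay‖² < ‖y‖²`. -/
lemma quad_lt (hN : 0 < N) (hnonneg : ∀ i j, 0 ≤ A i j)
    (hrow : ∀ i, ∑ j, A i j = 1) (hcol : ∀ j, ∑ i, A i j = 1)
    (hirr : ∀ i j, ∃ k : ℕ, 1 ≤ k ∧ 0 < (A ^ k) i j)
    (hdiag : ∀ i, 0 < A i i) (y : Fin N → ℝ)
    (hsum : ∑ i, y i = 0) (hy0 : y ≠ 0) :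
    ∑ i, (∑ j, A i j * y j) ^ 2 < ∑ i, y i ^ 2 := by
  set S : Fin N → Fin N → ℝ := fun j k => ∑ i, A i j * A i k with hS
  have hSnn : ∀ j k, 0 ≤ S j k := fun j k =>
    Finset.sum_nonneg fun i _ => mul_nonneg (hnonneg i j) (hnonneg i k)
  have hSsymm : ∀ j k, S j k = S k j := by
    intro j k; simp only [hS]
    exact Finset.sum_congr rfl fun i _ => mul_comm _ _
  have hSrow : ∀ j, ∑ k, S j k = 1 := by
    intro j
    simp only [hS]
    rw [Finset.sum_comm]
    calc ∑ i, ∑ k, A i j * A i k = ∑ i, A i j * ∑ k, A i k := by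
          simp [Finset.mul_sum]
      _ = ∑ i, A i j := by simp [hrow]
      _ = 1 := hcol j
  -- LHS as quadratic form in S
  have hLHS : ∑ i, (∑ j, A i j * y j) ^ 2 = ∑ j, ∑ k, S j k * (y j * y k) := by
    have : ∀ i, (∑ j, A i j * y j) ^ 2 = ∑ j, ∑ k, (A i j * y j) * (A i k * y k) := by
      intro i
      rw [sq, Finset.sum_mul_sum]
    rw [Finset.sum_congr rfl fun i _ => this i]
    rw [Finset.sum_comm]
    refine Finset.sum_congr rfl fun j _ => ?_
    rw [Finset.sum_comm]
    refine Finset.sum_congr rfl fun k _ => ?_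
    simp only [hS]
    rw [Finset.sum_mul]
    exact Finset.sum_congr rfl fun i _ => by ring
  -- the energy identity
  have hE1 : ∑ j, ∑ k, S j k * y j ^ 2 = ∑ i, y i ^ 2 := by
    refine Finset.sum_congr rfl fun j _ => ?_
    rw [← Finset.sum_mul, hSrow j, one_mul]
  have hE2 : ∑ j, ∑ k, S j k * y k ^ 2 = ∑ i, y i ^ 2 := by
    rw [Finset.sum_comm]
    refine Finset.sum_congr rfl fun k _ => ?_
    calc ∑ j, S j k * y k ^ 2 = (∑ j, S k j) * y k ^ 2 := by
          rw [Finset.sum_mul]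
          exact Finset.sum_congr rfl fun j _ => by rw [hSsymm j k]
      _ = y k ^ 2 := by rw [hSrow k, one_mul]
  have hident : ∑ j, ∑ k, S j k * (y j - y k) ^ 2
      = 2 * (∑ i, y i ^ 2) - 2 * (∑ j, ∑ k, S j k * (y j * y k)) := by
    have expand : ∀ j k, S j k * (y j - y k) ^ 2
        = S j k * y j ^ 2 + S j k * y k ^ 2 - 2 * (S j k * (y j * y k)) := by
      intro j k; ring
    calc ∑ j, ∑ k, S j k * (y j - y k) ^ 2
        = ∑ j, ∑ k, (S j k * y j ^ 2 + S j k * y k ^ 2 - 2 * (S j k * (y j * y k))) := by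
          refine Finset.sum_congr rfl fun j _ => Finset.sum_congr rfl fun k _ => expand j k
      _ = (∑ j, ∑ k, S j k * y j ^ 2) + (∑ j, ∑ k, S j k * y k ^ 2)
            - 2 * (∑ j, ∑ k, S j k * (y j * y k)) := by
          simp [Finset.sum_add_distrib, Finset.sum_sub_distrib, Finset.mul_sum]
      _ = 2 * (∑ i, y i ^ 2) - 2 * (∑ j, ∑ k, S j k * (y j * y k)) := by
          rw [hE1, hE2]; ring
  -- strict positivity of the Dirichlet energy
  have hnotconst : ∃ j k, 0 < S j k ∧ y j ≠ y k := by
    by_contra hc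
    push_neg at hc
    have hconst : ∀ i j, y i = y j := by
      apply constancy A hnonneg hirr hdiag y
      intro i j h
      exact hc i j h
    obtain ⟨i0⟩ := Fin.pos_iff_nonempty.mp hN
    have hNy : (0 : ℝ) = (N : ℝ) * y i0 := by
      have h1 : ∑ i, y i = ∑ _i : Fin N, y i0 :=
        Finset.sum_congr rfl fun i _ => hconst i i0
      rw [hsum, Finset.sum_const, Finset.card_univ, Fintype.card_fin, nsmul_eq_mul] at h1
      exact h1
    have hNne : (N : ℝ) ≠ 0 := Nat.cast_ne_zero.mpr hN.ne'
    have hy0' : y i0 = 0 := by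
      rcases mul_eq_zero.mp hNy.symm with h | h
      · exact absurd h hNne
      · exact h
    apply hy0
    funext i
    rw [hconst i i0, hy0']
    rfl
  obtain ⟨j0, k0, hSpos, hyne⟩ := hnotconst
  have hD : 0 < ∑ j, ∑ k, S j k * (y j - y k) ^ 2 := by
    apply Finset.sum_pos'
    · intro j _
      exact Finset.sum_nonneg fun k _ => mul_nonneg (hSnn j k) (sq_nonneg _)
    · refine ⟨j0, Finset.mem_univ j0, ?_⟩
      apply Finset.sum_pos' (fun k _ => mul_nonneg (hSnn j0 k) (sq_nonneg _))
      refine ⟨k0, Finset.mem_univ k0, ?_⟩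
      have hne2 : y j0 - y k0 ≠ 0 := sub_ne_zero.mpr hyne
      exact mul_pos hSpos (lt_of_le_of_ne (sq_nonneg _) (Ne.symm (pow_ne_zero 2 hne2)))
  rw [hLHS]
  nlinarith [hident, hD]

end aux

/-- For a nonnegative, doubly stochastic, irreducible matrix `A` with strictly
positive diagonal: (i) `AJ = JA = J`; (ii) `ρ := ‖A - J‖ < 1` in the ℓ₂-operator norm; and
(iii) `‖Ax - Jx‖ ≤ ρ‖x - Jx‖` for all `x`. -/
theorem doubly_stochastic_consensus_contraction (N : ℕ) (hN : 0 < N)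
    (A : Matrix (Fin N) (Fin N) ℝ)
    (hnonneg : ∀ i j, 0 ≤ A i j)
    (hrow : ∀ i, ∑ j, A i j = 1) (hcol : ∀ j, ∑ i, A i j = 1)
    (hirr : ∀ i j, ∃ k : ℕ, 1 ≤ k ∧ 0 < (A ^ k) i j)
    (hdiag : ∀ i, 0 < A i i) :
    (A * consensusJ N = consensusJ N ∧ consensusJ N * A = consensusJ N) ∧
    matrixL2OpNorm (A - consensusJ N) < 1 ∧
    ∀ x : EuclideanSpace ℝ (Fin N),
      ‖Matrix.toEuclideanLin A x - Matrix.toEuclideanLin (consensusJ N) x‖ ≤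
        matrixL2OpNorm (A - consensusJ N) * ‖x - Matrix.toEuclideanLin (consensusJ N) x‖ := by
  have hN' : (N : ℝ) ≠ 0 := Nat.cast_ne_zero.mpr hN.ne'
  set T : EuclideanSpace ℝ (Fin N) →L[ℝ] EuclideanSpace ℝ (Fin N) :=
    LinearMap.toContinuousLinearMap (Matrix.toEuclideanLin (A - consensusJ N)) with hTdef
  have hnorm : matrixL2OpNorm (A - consensusJ N) = ‖T‖ := rfl
  -- coordinates of T
  have hTapp : ∀ (x : EuclideanSpace ℝ (Fin N)) (i : Fin N),
      T x i = ∑ j, (A i j - (N : ℝ)⁻¹) * x j := by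
    intro x i
    show (Matrix.toEuclideanLin (A - consensusJ N)) x i = _
    rw [Matrix.toEuclideanLin_apply]
    simp [Matrix.mulVec, dotProduct, consensusJ, Matrix.sub_apply]
  -- coordinates of Jx
  have hJapp : ∀ (x : EuclideanSpace ℝ (Fin N)) (i : Fin N),
      (Matrix.toEuclideanLin (consensusJ N)) x i = (∑ l, x l) / N := by
    intro x i
    rw [Matrix.toEuclideanLin_apply]
    simp [Matrix.mulVec, dotProduct, consensusJ]
    rw [← Finset.mul_sum]
    ring
  -- T applied in terms of the centered vector
  have hTcentered : ∀ (x : EuclideanSpace ℝ (Fin N)) (i : Fin N),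
      T x i = ∑ j, A i j * (x j - (∑ l, x l) / N) := by
    intro x i
    rw [hTapp]
    have h1 : ∑ j, (A i j - (N : ℝ)⁻¹) * x j
        = (∑ j, A i j * x j) - (N : ℝ)⁻¹ * ∑ j, x j := by
      simp [sub_mul, Finset.sum_sub_distrib, Finset.mul_sum]
    have h2 : ∑ j, A i j * (x j - (∑ l, x l) / N)
        = (∑ j, A i j * x j) - (∑ j, A i j) * ((∑ l, x l) / N) := by
      simp [mul_sub, Finset.sum_sub_distrib, Finset.sum_mul]
    rw [h1, h2, hrow i]
    ring
  -- key strict bound on the unit sphere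
  have key : ∀ x : EuclideanSpace ℝ (Fin N), ‖x‖ = 1 → ‖T x‖ < 1 := by
    intro x hx
    set m : ℝ := (∑ l, x l) / N with hm
    set y : Fin N → ℝ := fun i => x i - m with hy
    have hysum : ∑ i, y i = 0 := by
      simp only [hy, Finset.sum_sub_distrib, Finset.sum_const, Finset.card_univ,
        Fintype.card_fin, nsmul_eq_mul, hm]
      field_simp
      ring
    have hxsq : ∑ i, (x i : ℝ) ^ 2 = 1 := by
      have := euclid_norm_sq x
      rw [hx] at this; simpa using this.symm
    have hyle : ∑ i, y i ^ 2 ≤ 1 := by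
      have hex : ∑ i, y i ^ 2
          = ∑ i, x i ^ 2 - 2 * m * (∑ i, (x i : ℝ)) + N * m ^ 2 := by
        simp only [hy, sub_sq]
        rw [Finset.sum_add_distrib, Finset.sum_sub_distrib, Finset.sum_const,
          Finset.card_univ, Fintype.card_fin, nsmul_eq_mul]
        have h2 : ∑ i, 2 * x i * m = 2 * m * ∑ i, (x i : ℝ) := by
          rw [Finset.mul_sum]
          refine Finset.sum_congr rfl fun i _ => by ring
        rw [h2]
      have hsx : (∑ i, (x i : ℝ)) = N * m := by rw [hm]; field_simp
      rw [hex, hsx, hxsq]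
      have hNpos : (0 : ℝ) < N := by exact_mod_cast hN
      nlinarith [sq_nonneg m]
    have hTx : ∀ i, T x i = ∑ j, A i j * y j := fun i => hTcentered x i
    by_cases hy0 : y = 0
    · have : T x = 0 := by
        ext i
        rw [hTx i]
        simp [hy0]
      rw [this]; norm_num
    · have hquad := quad_lt A hN hnonneg hrow hcol hirr hdiag y hysum hy0
      have hTn : ‖T x‖ ^ 2 < 1 := by
        rw [euclid_norm_sq]
        calc ∑ i, (T x i) ^ 2 = ∑ i, (∑ j, A i j * y j) ^ 2 :=
              Finset.sum_congr rfl fun i _ => by rw [hTx i]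
          _ < ∑ i, y i ^ 2 := hquad
          _ ≤ 1 := hyle
      nlinarith [norm_nonneg (T x)]
  -- part (ii): the operator norm is < 1
  have hρ : matrixL2OpNorm (A - consensusJ N) < 1 := by
    rw [hnorm]
    have hne : (Metric.sphere (0 : EuclideanSpace ℝ (Fin N)) 1).Nonempty := by
      refine ⟨EuclideanSpace.single ⟨0, hN⟩ (1 : ℝ), ?_⟩
      rw [mem_sphere_zero_iff_norm, EuclideanSpace.norm_single]
      norm_num
    obtain ⟨z, hz, hmax⟩ := (isCompact_sphere (0 : EuclideanSpace ℝ (Fin N)) 1).exists_isMaxOn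
      hne (T.continuous.norm.continuousOn)
    have hzn : ‖z‖ = 1 := mem_sphere_zero_iff_norm.mp hz
    have h1 : ‖T‖ ≤ ‖T z‖ := by
      apply ContinuousLinearMap.opNorm_le_of_unit_norm (norm_nonneg _)
      intro w hw
      exact hmax (mem_sphere_zero_iff_norm.mpr hw)
    exact lt_of_le_of_lt h1 (key z hzn)
  refine ⟨⟨?_, ?_⟩, hρ, ?_⟩
  · ext i j
    simp only [Matrix.mul_apply, consensusJ, Matrix.of_apply]
    rw [← Finset.sum_mul, hrow i, one_mul]
  · ext i j
    simp only [Matrix.mul_apply, consensusJ, Matrix.of_apply]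
    rw [← Finset.mul_sum, hcol j, mul_one]
  · intro x
    set y : EuclideanSpace ℝ (Fin N) := x - Matrix.toEuclideanLin (consensusJ N) x with hy
    have hyi : ∀ i, y i = x i - (∑ l, x l) / N := by
      intro i
      rw [hy]
      show x i - (Matrix.toEuclideanLin (consensusJ N)) x i = _
      rw [hJapp]
    have hLHS : Matrix.toEuclideanLin A x - Matrix.toEuclideanLin (consensusJ N) x = T x := by
      show _ = (Matrix.toEuclideanLin (A - consensusJ N)) x
      rw [map_sub]
      rfl
    have hTxTy : T x = T y := by
      ext i
      rw [hTcentered x i, hTcentered y i]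
      have hys : ∑ l, y l = 0 := by
        simp only [hyi, Finset.sum_sub_distrib, Finset.sum_const, Finset.card_univ,
          Fintype.card_fin, nsmul_eq_mul]
        field_simp
        ring
      rw [hys]
      refine Finset.sum_congr rfl fun j _ => ?_
      rw [hyi j]
      ring_nf
    rw [hLHS, hTxTy, hnorm]
    exact T.le_opNorm y
end
end

section
/- Let M ∈ ℝ^{n×n}, n ≥ 2, be a nonnegative irreducible matrix (for every pair of indices i, j there exists k ≥ 1 with (M^k)_{ij} > 0). Then: (i) the spectral radius ρ(M) is strictly positive and is an eigenvalue of M; (ii) there exists a vector x ∈ ℝ^n with all entries strictly positive such that Mx = ρ(M)x; (iii) ρ(M) is an algebraically simple eigenvalue of M, i.e. it is a simple root of the characteristic polynomial of M. -/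
noncomputable section
open scoped BigOperators
open Matrix Polynomial

section PFAux

variable {n : ℕ}

/-- The Collatz–Wielandt set. -/
def pfSet (n : ℕ) (M : Matrix (Fin n) (Fin n) ℝ) : Set ℝ :=
  {lam | 0 ≤ lam ∧ ∃ x : Fin n → ℝ, (∀ i, 0 ≤ x i) ∧ (∑ i, x i = 1) ∧
    ∀ i, lam * x i ≤ (M *ᵥ x) i}

noncomputable def pfR (n : ℕ) (M : Matrix (Fin n) (Fin n) ℝ) : ℝ := sSup (pfSet n M)

lemma pow_entry_nonneg_s3 (M : Matrix (Fin n) (Fin n) ℝ) (hM : ∀ i j, 0 ≤ M i j) :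
    ∀ (k : ℕ) (i j : Fin n), 0 ≤ (M ^ k) i j := by
  intro k
  induction k with
  | zero => intro i j; by_cases h : i = j <;> simp [pow_zero, Matrix.one_apply, h]
  | succ k ih =>
    intro i j
    rw [pow_succ, Matrix.mul_apply]
    exact Finset.sum_nonneg fun l _ => mul_nonneg (ih i l) (hM l j)

lemma mulVec_entry_nonneg (M : Matrix (Fin n) (Fin n) ℝ) (hM : ∀ i j, 0 ≤ M i j)
    {z : Fin n → ℝ} (hz : ∀ i, 0 ≤ z i) (i : Fin n) : 0 ≤ (M *ᵥ z) i :=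
  by
  rw [Matrix.mulVec, dotProduct]
  exact Finset.sum_nonneg fun j _ => mul_nonneg (hM i j) (hz j)

lemma mem_pfSet (M : Matrix (Fin n) (Fin n) ℝ)
    {lam : ℝ} (hlam : 0 ≤ lam) {z : Fin n → ℝ} (hz : ∀ i, 0 ≤ z i) (hz0 : z ≠ 0)
    (h : ∀ i, lam * z i ≤ (M *ᵥ z) i) : lam ∈ pfSet n M := by
  have hs : 0 < ∑ i, z i := by
    rcases Function.ne_iff.mp hz0 with ⟨j, hj⟩
    have : 0 < z j := lt_of_le_of_ne (hz j) (Ne.symm (by simpa using hj))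
    exact Finset.sum_pos' (fun i _ => hz i) ⟨j, Finset.mem_univ j, this⟩
  refine ⟨hlam, (∑ i, z i)⁻¹ • z, fun i => mul_nonneg (inv_nonneg.2 hs.le) (hz i), ?_, ?_⟩
  · simp only [Pi.smul_apply, smul_eq_mul, ← Finset.mul_sum]
    field_simp
  · intro i
    rw [Matrix.mulVec_smul]
    simp only [Pi.smul_apply, smul_eq_mul]
    rw [mul_left_comm]
    exact mul_le_mul_of_nonneg_left (h i) (inv_nonneg.2 hs.le)

lemma pfSet_nonempty (hn : 0 < n) (M : Matrix (Fin n) (Fin n) ℝ)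
    (hM : ∀ i j, 0 ≤ M i j) : (pfSet n M).Nonempty := by
  have : Fin n := ⟨0, hn⟩
  refine ⟨0, mem_pfSet M le_rfl (z := fun _ => 1) (fun i => zero_le_one) ?_ ?_⟩
  · intro h; have := congrFun h this; simp at this
  · intro i
    simpa using mulVec_entry_nonneg M hM (z := fun _ => 1) (fun _ => zero_le_one) i

lemma pfSet_bddAbove (M : Matrix (Fin n) (Fin n) ℝ) (hM : ∀ i j, 0 ≤ M i j) :
    ∀ lam ∈ pfSet n M, lam ≤ ∑ i, ∑ j, M i j := by
  rintro lam ⟨hlam, x, hx, hsum, hineq⟩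
  have hne : (Finset.univ : Finset (Fin n)).Nonempty := by
    by_contra h
    rw [Finset.not_nonempty_iff_eq_empty] at h
    rw [h, Finset.sum_empty] at hsum; norm_num at hsum
  obtain ⟨i, _, hi⟩ := Finset.exists_max_image Finset.univ x hne
  have hxi : 0 < x i := by
    rcases lt_or_eq_of_le (hx i) with h | h
    · exact h
    · exfalso
      have : ∀ j, x j = 0 := fun j => le_antisymm (h ▸ hi j (Finset.mem_univ j)) (hx j)
      rw [Finset.sum_congr rfl fun j _ => this j] at hsum
      simp at hsum
  have h1 : lam * x i ≤ (∑ j, M i j) * x i := by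
    calc lam * x i ≤ (M *ᵥ x) i := hineq i
    _ = ∑ j, M i j * x j := by rw [Matrix.mulVec, dotProduct]
    _ ≤ ∑ j, M i j * x i :=
      Finset.sum_le_sum fun j _ => mul_le_mul_of_nonneg_left (hi j (Finset.mem_univ j)) (hM i j)
    _ = (∑ j, M i j) * x i := by rw [Finset.sum_mul]
  have h2 : lam ≤ ∑ j, M i j := le_of_mul_le_mul_right (by linarith) hxi
  refine h2.trans ?_
  exact Finset.single_le_sum (fun k _ => Finset.sum_nonneg fun j _ => hM k j) (Finset.mem_univ i)

lemma sSup_mem_pfSet (hn : 0 < n) (M : Matrix (Fin n) (Fin n) ℝ)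
    (hM : ∀ i j, 0 ≤ M i j) : pfR n M ∈ pfSet n M := by
  set C : ℝ := ∑ i, ∑ j, M i j with hC
  set K : Set (ℝ × (Fin n → ℝ)) :=
    {p | p.1 ∈ Set.Icc 0 C ∧ (∀ i, p.2 i ∈ Set.Icc (0:ℝ) 1) ∧ (∑ i, p.2 i = 1) ∧
      ∀ i, p.1 * p.2 i ≤ (M *ᵥ p.2) i} with hK
  have hKclosed : IsClosed K := by
    have h1 : IsClosed {p : ℝ × (Fin n → ℝ) | p.1 ∈ Set.Icc 0 C} :=
      (isClosed_Icc).preimage continuous_fst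
    have h2 : IsClosed {p : ℝ × (Fin n → ℝ) | ∀ i, p.2 i ∈ Set.Icc (0:ℝ) 1} := by
      rw [Set.setOf_forall]
      exact isClosed_iInter fun i => isClosed_Icc.preimage (by fun_prop)
    have h3 : IsClosed {p : ℝ × (Fin n → ℝ) | ∑ i, p.2 i = 1} :=
      isClosed_eq (by fun_prop) continuous_const
    have h4 : IsClosed {p : ℝ × (Fin n → ℝ) | ∀ i, p.1 * p.2 i ≤ (M *ᵥ p.2) i} := by
      rw [Set.setOf_forall]
      refine isClosed_iInter fun i => isClosed_le (by fun_prop) ?_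
      simp only [Matrix.mulVec, dotProduct]
      fun_prop
    have : K = ({p : ℝ × (Fin n → ℝ) | p.1 ∈ Set.Icc 0 C} ∩
        {p | ∀ i, p.2 i ∈ Set.Icc (0:ℝ) 1} ∩ {p | ∑ i, p.2 i = 1} ∩
        {p | ∀ i, p.1 * p.2 i ≤ (M *ᵥ p.2) i}) := by
      ext p; simp only [hK, Set.mem_setOf_eq, Set.mem_inter_iff]; tauto
    rw [this]
    exact ((h1.inter h2).inter h3).inter h4
  have hKcompact : IsCompact K := by
    refine IsCompact.of_isClosed_subset ((isCompact_Icc (a := (0:ℝ)) (b := C)).prod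
      (isCompact_Icc (a := (0:(Fin n → ℝ))) (b := 1))) hKclosed ?_
    rintro p ⟨hp1, hp2, -, -⟩
    refine ⟨hp1, ?_⟩
    rw [Set.mem_Icc]
    constructor <;> intro i
    · exact (hp2 i).1
    · exact (hp2 i).2
  have hset : pfSet n M = Prod.fst '' K := by
    ext lam
    constructor
    · rintro ⟨hlam, x, hx, hsum, hineq⟩
      refine ⟨(lam, x), ⟨⟨hlam, pfSet_bddAbove M hM lam ⟨hlam, x, hx, hsum, hineq⟩⟩,
        fun i => ⟨hx i, ?_⟩, hsum, hineq⟩, rfl⟩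
      calc x i ≤ ∑ j, x j := Finset.single_le_sum (fun j _ => hx j) (Finset.mem_univ i)
      _ = 1 := hsum
    · rintro ⟨⟨l, x⟩, ⟨h1, h2, h3, h4⟩, rfl⟩
      exact ⟨h1.1, x, fun i => (h2 i).1, h3, h4⟩
  have hcompact : IsCompact (pfSet n M) := by
    rw [hset]; exact hKcompact.image continuous_fst
  exact hcompact.sSup_mem (pfSet_nonempty hn M hM)

lemma sum_mulVec' {s : Finset ℕ} (A : ℕ → Matrix (Fin n) (Fin n) ℝ) (v : Fin n → ℝ) :
    (∑ k ∈ s, A k) *ᵥ v = ∑ k ∈ s, (A k) *ᵥ v := by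
  induction s using Finset.induction with
  | empty => simp [Matrix.mulVec, dotProduct]
  | insert a s h ih => rw [Finset.sum_insert h, Finset.sum_insert h, Matrix.add_mulVec, ih]

lemma pfR_nonneg (hn : 0 < n) (M : Matrix (Fin n) (Fin n) ℝ) (hM : ∀ i j, 0 ≤ M i j) :
    0 ≤ pfR n M := (sSup_mem_pfSet hn M hM).1

lemma le_pfR (M : Matrix (Fin n) (Fin n) ℝ) (hM : ∀ i j, 0 ≤ M i j)
    {lam : ℝ} (hlam : 0 ≤ lam) {z : Fin n → ℝ} (hz : ∀ i, 0 ≤ z i) (hz0 : z ≠ 0)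
    (h : ∀ i, lam * z i ≤ (M *ᵥ z) i) : lam ≤ pfR n M :=
  le_csSup ⟨∑ i, ∑ j, M i j, fun _ hb => pfSet_bddAbove M hM _ hb⟩ (mem_pfSet M hlam hz hz0 h)

/-- Key step: a Collatz–Wielandt "subinvariant" vector at level `r = pfR` is an eigenvector. -/
lemma pf_eq_of_le (hn : 0 < n) (M : Matrix (Fin n) (Fin n) ℝ)
    (hM : ∀ i j, 0 ≤ M i j) (hirr : ∀ i j, ∃ k : ℕ, 1 ≤ k ∧ 0 < (M ^ k) i j)
    {z : Fin n → ℝ} (hz : ∀ i, 0 ≤ z i) (hz0 : z ≠ 0)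
    (h : ∀ i, pfR n M * z i ≤ (M *ᵥ z) i) : M *ᵥ z = pfR n M • z := by
  set r := pfR n M with hr
  set w : Fin n → ℝ := M *ᵥ z - r • z with hw
  have hwnn : ∀ i, 0 ≤ w i := fun i => by
    rw [hw]
    simp only [Pi.sub_apply, Pi.smul_apply, smul_eq_mul, sub_nonneg]
    exact h i
  by_contra hne
  have hwne : w ≠ 0 := by
    intro h0
    exact hne (sub_eq_zero.mp (hw ▸ h0))
  rcases Function.ne_iff.mp hwne with ⟨j, hj⟩
  have hwj : 0 < w j := lt_of_le_of_ne (hwnn j) (Ne.symm (by simpa using hj))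
  -- choose powers reaching j from each i
  choose kk hkk1 hkk2 using fun i => hirr i j
  set K : ℕ := Finset.univ.sup kk with hKdef
  set B : Matrix (Fin n) (Fin n) ℝ := ∑ k ∈ Finset.range (K + 1), M ^ k with hB
  have hBnn : ∀ i l, 0 ≤ B i l := fun i l => by
    rw [hB, Matrix.sum_apply]
    exact Finset.sum_nonneg fun k _ => pow_entry_nonneg_s3 M hM k i l
  have hBM : B * M = M * B := by
    rw [hB, Finset.sum_mul, Finset.mul_sum]
    exact Finset.sum_congr rfl fun k _ => pow_mul_comm' M k
  set y : Fin n → ℝ := B *ᵥ z with hy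
  -- y ≥ z entrywise
  have hyz : ∀ i, z i ≤ y i := by
    intro i
    rw [hy, hB, sum_mulVec']
    rw [Finset.sum_apply]
    have h0 : (0:ℕ) ∈ Finset.range (K+1) := Finset.mem_range.mpr (Nat.succ_pos K)
    calc z i = ((M ^ 0) *ᵥ z) i := by simp
    _ ≤ ∑ k ∈ Finset.range (K+1), ((M ^ k) *ᵥ z) i := by
        refine Finset.single_le_sum (f := fun k => ((M ^ k) *ᵥ z) i) (fun k _ => ?_) h0
        exact mulVec_entry_nonneg (M ^ k) (pow_entry_nonneg_s3 M hM k) hz i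
  have hynn : ∀ i, 0 ≤ y i := fun i => le_trans (hz i) (hyz i)
  have hyne : y ≠ 0 := by
    rcases Function.ne_iff.mp hz0 with ⟨l, hl⟩
    have : 0 < z l := lt_of_le_of_ne (hz l) (Ne.symm (by simpa using hl))
    intro h0
    have := lt_of_lt_of_le this (hyz l)
    rw [h0] at this; simp at this
  -- B w is strictly positive
  have hBw : ∀ i, 0 < (B *ᵥ w) i := by
    intro i
    have hki : kk i ∈ Finset.range (K + 1) := by
      rw [Finset.mem_range, Nat.lt_succ_iff, hKdef]
      exact Finset.le_sup (Finset.mem_univ i)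
    rw [hB, sum_mulVec', Finset.sum_apply]
    have hpos : 0 < ((M ^ kk i) *ᵥ w) i := by
      have : (M ^ kk i) i j * w j ≤ ((M ^ kk i) *ᵥ w) i := by
        rw [Matrix.mulVec, dotProduct]
        exact Finset.single_le_sum
          (fun l _ => mul_nonneg (pow_entry_nonneg_s3 M hM _ i l) (hwnn l)) (Finset.mem_univ j)
      exact lt_of_lt_of_le (mul_pos (hkk2 i) hwj) this
    refine lt_of_lt_of_le hpos ?_
    refine Finset.single_le_sum (f := fun k => ((M ^ k) *ᵥ w) i) (fun k _ => ?_) hki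
    exact mulVec_entry_nonneg (M ^ k) (pow_entry_nonneg_s3 M hM k) hwnn i
  -- M y = r y + B w
  have hMy : M *ᵥ y = r • y + B *ᵥ w := by
    have hBw' : B *ᵥ w = B *ᵥ (M *ᵥ z) - r • (B *ᵥ z) := by
      rw [hw, Matrix.mulVec_sub, Matrix.mulVec_smul]
    rw [hy, Matrix.mulVec_mulVec, ← hBM, ← Matrix.mulVec_mulVec, hBw']
    abel
  -- strict improvement
  set eps : ℝ := (Finset.univ.inf' (Finset.univ_nonempty_iff.mpr ⟨⟨0, hn⟩⟩)
    fun i => (B *ᵥ w) i / (y i + 1)) with heps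
  have hepspos : 0 < eps := by
    rw [heps]
    apply Finset.lt_inf'_iff _ |>.mpr
    intro i _
    exact div_pos (hBw i) (by linarith [hynn i])
  have himp : ∀ i, (r + eps) * y i ≤ (M *ᵥ y) i := by
    intro i
    have h1 : eps ≤ (B *ᵥ w) i / (y i + 1) := Finset.inf'_le _ (Finset.mem_univ i)
    have h2 : eps * (y i + 1) ≤ (B *ᵥ w) i := by
      rw [div_eq_mul_inv] at h1
      have hy1 : 0 < y i + 1 := by linarith [hynn i]
      calc eps * (y i + 1) ≤ ((B *ᵥ w) i * (y i + 1)⁻¹) * (y i + 1) :=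
        mul_le_mul_of_nonneg_right h1 hy1.le
      _ = (B *ᵥ w) i := by field_simp
    have h3 : eps * y i ≤ (B *ᵥ w) i := by nlinarith [hepspos]
    rw [hMy]
    simp only [Pi.add_apply, Pi.smul_apply, smul_eq_mul]
    nlinarith
  have : r + eps ≤ r :=
    le_pfR M hM (lam := r + eps) (by linarith [pfR_nonneg hn M hM]) hynn hyne himp
  linarith

lemma pf_pow_mulVec (M : Matrix (Fin n) (Fin n) ℝ) {r : ℝ} {z : Fin n → ℝ}
    (hz : M *ᵥ z = r • z) (k : ℕ) : (M ^ k) *ᵥ z = r ^ k • z := by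
  induction k with
  | zero => simp
  | succ k ih =>
    rw [pow_succ', ← Matrix.mulVec_mulVec, ih, Matrix.mulVec_smul, hz, smul_smul, pow_succ']
    ring_nf

lemma pf_pos_of_eig (M : Matrix (Fin n) (Fin n) ℝ)
    (hM : ∀ i j, 0 ≤ M i j) (hirr : ∀ i j, ∃ k : ℕ, 1 ≤ k ∧ 0 < (M ^ k) i j)
    {r : ℝ} {z : Fin n → ℝ} (hz : ∀ i, 0 ≤ z i) (hz0 : z ≠ 0)
    (heig : M *ᵥ z = r • z) : ∀ i, 0 < z i := by
  rcases Function.ne_iff.mp hz0 with ⟨j, hj⟩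
  have hzj : 0 < z j := lt_of_le_of_ne (hz j) (Ne.symm (by simpa using hj))
  intro i
  obtain ⟨k, -, hk⟩ := hirr i j
  have h1 : (M ^ k) i j * z j ≤ ((M ^ k) *ᵥ z) i := by
    rw [Matrix.mulVec, dotProduct]
    exact Finset.single_le_sum (f := fun l => (M ^ k) i l * z l)
      (fun l _ => mul_nonneg (pow_entry_nonneg_s3 M hM k i l) (hz l)) (Finset.mem_univ j)
  have h2 : 0 < ((M ^ k) *ᵥ z) i := lt_of_lt_of_le (mul_pos hk hzj) h1
  rw [pf_pow_mulVec M heig k] at h2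
  simp only [Pi.smul_apply, smul_eq_mul] at h2
  rcases lt_or_eq_of_le (hz i) with h | h
  · exact h
  · exfalso; rw [← h] at h2; simp at h2

/-- Main existence result over ℝ. -/
lemma pf_exists (hn : 0 < n) (M : Matrix (Fin n) (Fin n) ℝ)
    (hM : ∀ i j, 0 ≤ M i j) (hirr : ∀ i j, ∃ k : ℕ, 1 ≤ k ∧ 0 < (M ^ k) i j) :
    0 < pfR n M ∧ ∃ x : Fin n → ℝ, (∀ i, 0 < x i) ∧ M *ᵥ x = pfR n M • x := by
  obtain ⟨hr0, x, hx, hsum, hineq⟩ := sSup_mem_pfSet hn M hM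
  have hx0 : x ≠ 0 := by
    intro h0; rw [h0] at hsum; simp at hsum
  have heig : M *ᵥ x = pfR n M • x := pf_eq_of_le hn M hM hirr hx hx0 hineq
  have hpos := pf_pos_of_eig M hM hirr hx hx0 heig
  refine ⟨?_, x, hpos, heig⟩
  -- r > 0
  obtain ⟨k, hk1, hk⟩ := hirr ⟨0, hn⟩ ⟨0, hn⟩
  set i : Fin n := ⟨0, hn⟩
  have h1 : (M ^ k) i i * x i ≤ ((M ^ k) *ᵥ x) i := by
    rw [Matrix.mulVec, dotProduct]
    exact Finset.single_le_sum (f := fun l => (M ^ k) i l * x l)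
      (fun l _ => mul_nonneg (pow_entry_nonneg_s3 M hM k i l) (hx l)) (Finset.mem_univ i)
  have h2 : 0 < ((M ^ k) *ᵥ x) i := lt_of_lt_of_le (mul_pos hk (hpos i)) h1
  rw [pf_pow_mulVec M heig k] at h2
  simp only [Pi.smul_apply, smul_eq_mul] at h2
  have hrk : 0 < pfR n M ^ k := by
    by_contra hc
    push_neg at hc
    nlinarith [hpos i]
  have hr : 0 ≤ pfR n M := pfR_nonneg hn M hM
  by_contra hle
  push_neg at hle
  have : pfR n M = 0 := le_antisymm hle hr
  rw [this, zero_pow (by omega)] at hrk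
  exact lt_irrefl 0 hrk


/-- Geometric simplicity: any real eigenvector for `pfR` is a multiple of the positive one. -/
lemma pf_unique (hn : 0 < n) (M : Matrix (Fin n) (Fin n) ℝ)
    (hM : ∀ i j, 0 ≤ M i j) (hirr : ∀ i j, ∃ k : ℕ, 1 ≤ k ∧ 0 < (M ^ k) i j)
    {x : Fin n → ℝ} (hx : ∀ i, 0 < x i) (heig : M *ᵥ x = pfR n M • x)
    {y : Fin n → ℝ} (hy : M *ᵥ y = pfR n M • y) : ∃ c : ℝ, y = c • x := by
  have hne : (Finset.univ : Finset (Fin n)).Nonempty := ⟨⟨0, hn⟩, Finset.mem_univ _⟩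
  set s : ℝ := Finset.univ.inf' hne (fun i => y i / x i) with hs
  obtain ⟨i0, -, hi0⟩ := Finset.exists_mem_eq_inf' hne (fun i => y i / x i)
  set z : Fin n → ℝ := y - s • x with hz
  have hznn : ∀ i, 0 ≤ z i := by
    intro i
    have h1 : s ≤ y i / x i := Finset.inf'_le _ (Finset.mem_univ i)
    have h2 : s * x i ≤ y i := by
      rw [div_eq_mul_inv] at h1
      calc s * x i ≤ (y i * (x i)⁻¹) * x i := mul_le_mul_of_nonneg_right h1 (hx i).le
      _ = y i := by field_simp [(hx i).ne']
    simpa [hz, sub_nonneg] using h2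
  have hzi0 : z i0 = 0 := by
    simp only [hz, Pi.sub_apply, Pi.smul_apply, smul_eq_mul]
    rw [hs, hi0, div_mul_cancel₀ _ (hx i0).ne']
    ring
  have hzeig : M *ᵥ z = pfR n M • z := by
    rw [hz, Matrix.mulVec_sub, Matrix.mulVec_smul, heig, hy, smul_sub, smul_comm]
  by_cases hz0 : z = 0
  · exact ⟨s, by rw [← sub_eq_zero, ← hz, hz0]⟩
  · exfalso
    have := pf_pos_of_eig M hM hirr hznn hz0 hzeig i0
    rw [hzi0] at this
    exact lt_irrefl 0 this

/-- Evaluation of the characteristic polynomial. -/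
lemma charpoly_eval {R : Type*} [CommRing R] {m : ℕ} (A : Matrix (Fin m) (Fin m) R) (t : R) :
    A.charpoly.eval t = (t • (1 : Matrix (Fin m) (Fin m) R) - A).det := by
  rw [Matrix.charpoly, ← Polynomial.coe_evalRingHom, RingHom.map_det]
  congr 1
  ext i j
  by_cases h : i = j
  · subst h
    simp [Matrix.charmatrix_apply_eq, Matrix.one_apply_eq]
  · simp [Matrix.charmatrix_apply_ne _ _ _ h, Matrix.one_apply_ne h]

/-- Roots of the characteristic polynomial are eigenvalues (over a field). -/
lemma eigenvector_of_root {K : Type*} [Field K] {m : ℕ} (A : Matrix (Fin m) (Fin m) K) {t : K}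
    (h : A.charpoly.IsRoot t) : ∃ v : Fin m → K, v ≠ 0 ∧ A *ᵥ v = t • v := by
  have hdet : (t • (1 : Matrix (Fin m) (Fin m) K) - A).det = 0 := by
    rw [← charpoly_eval]; exact h
  obtain ⟨v, hv0, hv⟩ := (Matrix.exists_mulVec_eq_zero_iff).mpr hdet
  refine ⟨v, hv0, ?_⟩
  rw [Matrix.sub_mulVec, Matrix.smul_mulVec, Matrix.one_mulVec] at hv
  rw [← sub_eq_zero]
  rw [sub_eq_zero] at hv ⊢
  exact hv.symm

/-- All complex roots of the characteristic polynomial are bounded by `pfR`. -/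
lemma pf_root_bound (hn : 0 < n) (M : Matrix (Fin n) (Fin n) ℝ)
    (hM : ∀ i j, 0 ≤ M i j) {mu : ℂ}
    (h : ((M.map fun a => (a : ℂ)).charpoly).IsRoot mu) : ‖mu‖ ≤ pfR n M := by
  obtain ⟨v, hv0, hv⟩ := eigenvector_of_root (M.map fun a => (a : ℂ)) h
  set z : Fin n → ℝ := fun i => ‖v i‖ with hzdef
  have hznn : ∀ i, 0 ≤ z i := fun i => norm_nonneg _
  have hz0 : z ≠ 0 := by
    intro h0
    apply hv0
    funext i
    have := congrFun h0 i
    simpa [hzdef, norm_eq_zero] using this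
  refine le_pfR M hM (norm_nonneg mu) hznn hz0 ?_
  intro i
  have hvi : ((M.map fun a => (a : ℂ)) *ᵥ v) i = mu * v i := by
    rw [hv]; rfl
  have : ‖mu‖ * z i = ‖∑ j, (M i j : ℂ) * v j‖ := by
    rw [hzdef, ← norm_mul, ← hvi]
    simp [Matrix.mulVec, dotProduct, Matrix.map_apply]
  rw [this]
  calc ‖∑ j, (M i j : ℂ) * v j‖ ≤ ∑ j, ‖(M i j : ℂ) * v j‖ :=
    norm_sum_le _ _
  _ = ∑ j, M i j * z j := by
      refine Finset.sum_congr rfl fun j _ => ?_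
      rw [norm_mul, Complex.norm_real, Real.norm_eq_abs, abs_of_nonneg (hM i j)]
  _ = (M *ᵥ z) i := by rw [Matrix.mulVec, dotProduct]

lemma charpoly_transpose' {R : Type*} [CommRing R] {m : ℕ} (A : Matrix (Fin m) (Fin m) R) :
    Aᵀ.charpoly = A.charpoly := by
  rw [Matrix.charpoly, Matrix.charpoly, ← Matrix.det_transpose (Matrix.charmatrix Aᵀ)]
  congr 1
  ext i j
  by_cases h : i = j
  · subst h; simp [Matrix.charmatrix_apply_eq]
  · rw [Matrix.transpose_apply, Matrix.charmatrix_apply_ne _ _ _ (Ne.symm h),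
      Matrix.charmatrix_apply_ne _ _ _ h, Matrix.transpose_apply]

lemma charpoly_shift {R : Type*} [CommRing R] {m : ℕ} (A : Matrix (Fin m) (Fin m) R) (t : R) :
    (A - t • (1 : Matrix (Fin m) (Fin m) R)).charpoly = A.charpoly.comp (X + C t) := by
  have : A.charpoly.comp (X + C t) = Polynomial.eval₂RingHom Polynomial.C (X + C t) A.charpoly :=
    rfl
  rw [this, Matrix.charpoly, Matrix.charpoly, RingHom.map_det, RingHom.mapMatrix_apply]
  congr 1
  apply Matrix.ext
  intro i j
  by_cases h : i = j
  · subst h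
    simp only [Matrix.map_apply, Matrix.charmatrix_apply_eq, Matrix.sub_apply,
      Matrix.smul_apply, Matrix.one_apply_eq, smul_eq_mul, mul_one,
      Polynomial.coe_eval₂RingHom, Polynomial.eval₂_sub, Polynomial.eval₂_X, Polynomial.eval₂_C,
      Polynomial.C_sub]
    ring
  · simp only [Matrix.map_apply, Matrix.charmatrix_apply_ne _ _ _ h, Matrix.sub_apply,
      Matrix.smul_apply, Matrix.one_apply_ne h, smul_eq_mul, mul_zero, sub_zero,
      Polynomial.coe_eval₂RingHom, Polynomial.eval₂_neg, Polynomial.eval₂_C]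

lemma pf_mult_one (hn : 0 < n) (M : Matrix (Fin n) (Fin n) ℝ)
    (hM : ∀ i j, 0 ≤ M i j) (hirr : ∀ i j, ∃ k : ℕ, 1 ≤ k ∧ 0 < (M ^ k) i j)
    {x u : Fin n → ℝ} (hx : ∀ i, 0 < x i) (heig : M *ᵥ x = pfR n M • x)
    (hu : ∀ i, 0 < u i) (huleft : Mᵀ *ᵥ u = pfR n M • u) :
    rootMultiplicity (pfR n M) M.charpoly = 1 := by
  set r := pfR n M with hr
  set φ : Module.End ℝ (Fin n → ℝ) := Matrix.toLin' (M - r • (1 : Matrix (Fin n) (Fin n) ℝ))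
    with hφ
  have hφapp : ∀ y, φ y = M *ᵥ y - r • y := by
    intro y
    rw [hφ, Matrix.toLin'_apply, Matrix.sub_mulVec, Matrix.smul_mulVec, Matrix.one_mulVec]
  have hxne : x ≠ 0 := fun h0 => by
    have := hx ⟨0, hn⟩; rw [h0] at this; simp at this
  -- u ⬝ᵥ (φ y) = 0 for all y
  have hudot : ∀ y, u ⬝ᵥ (φ y) = 0 := by
    intro y
    rw [hφapp, dotProduct_sub, dotProduct_smul, Matrix.dotProduct_mulVec,
      ← Matrix.mulVec_transpose, huleft]
    simp [dotProduct_smul, smul_eq_mul]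
  have hux : 0 < u ⬝ᵥ x :=
    Finset.sum_pos (fun i _ => mul_pos (hu i) (hx i)) ⟨⟨0, hn⟩, Finset.mem_univ _⟩
  -- kernel of φ is the span of x
  have hkerx : LinearMap.ker φ = Submodule.span ℝ {x} := by
    apply le_antisymm
    · intro y hy
      rw [LinearMap.mem_ker, hφapp, sub_eq_zero] at hy
      obtain ⟨c, hc⟩ := pf_unique hn M hM hirr hx heig hy
      rw [hc]
      exact Submodule.smul_mem _ c (Submodule.mem_span_singleton_self x)
    · rw [Submodule.span_singleton_le_iff_mem, LinearMap.mem_ker, hφapp, heig, sub_self]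
  -- no generalized eigenvectors
  have hsq : ∀ y, φ (φ y) = 0 → φ y = 0 := by
    intro y hy
    have h1 : M *ᵥ (φ y) = r • (φ y) := by
      have := hφapp (φ y)
      rw [hy] at this
      exact sub_eq_zero.mp this.symm
    obtain ⟨c, hc⟩ := pf_unique hn M hM hirr hx heig h1
    have h2 : u ⬝ᵥ (φ y) = c * (u ⬝ᵥ x) := by
      rw [hc]; simp [dotProduct_smul, smul_eq_mul]
    rw [hudot y] at h2
    have hc0 : c = 0 := by
      rcases mul_eq_zero.mp h2.symm with h | h
      · exact h
      · exact absurd h hux.ne'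
    rw [hc, hc0, zero_smul]
  have hkerpow : ∀ k : ℕ, 1 ≤ k → LinearMap.ker (φ ^ k) = LinearMap.ker φ := by
    intro k hk
    induction k with
    | zero => omega
    | succ k ih =>
      rcases Nat.eq_or_lt_of_le hk with h | h
      · rw [← h, pow_one]
      · have hk1 : 1 ≤ k := by omega
        apply le_antisymm
        · intro y hy
          rw [LinearMap.mem_ker] at hy ⊢
          have : (φ ^ k) (φ y) = 0 := by
            rw [← Module.End.mul_apply, ← pow_succ]
            exact hy
          have h2 : φ y ∈ LinearMap.ker (φ ^ k) := this
          rw [ih hk1, LinearMap.mem_ker] at h2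
          exact hsq y h2
        · intro y hy
          rw [LinearMap.mem_ker] at hy ⊢
          rw [pow_succ, Module.End.mul_apply, hy, map_zero]
  have hmax : φ.maxGenEigenspace 0 = LinearMap.ker φ := by
    ext y
    rw [Module.End.mem_maxGenEigenspace]
    constructor
    · rintro ⟨k, hk⟩
      simp only [zero_smul, sub_zero] at hk
      rcases Nat.eq_zero_or_pos k with h | h
      · rw [h, pow_zero, Module.End.one_apply] at hk
        rw [hk]; exact Submodule.zero_mem _
      · have : y ∈ LinearMap.ker (φ ^ k) := hk
        rwa [hkerpow k h] at this
    · intro h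
      exact ⟨1, by simpa using h⟩
  have hdim : Module.finrank ℝ (φ.maxGenEigenspace 0) = 1 := by
    rw [hmax, hkerx, finrank_span_singleton hxne]
  have hcp : φ.charpoly = (M - r • (1 : Matrix (Fin n) (Fin n) ℝ)).charpoly := by
    rw [hφ]
    conv_rhs => rw [← LinearMap.toMatrix'_toLin' (M - r • (1 : Matrix (Fin n) (Fin n) ℝ))]
    rw [← LinearMap.toMatrix_eq_toMatrix']
    exact (LinearMap.charpoly_toMatrix _ _).symm
  rw [Polynomial.rootMultiplicity_eq_natTrailingDegree, ← charpoly_shift, ← hcp,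
    ← LinearMap.finrank_maxGenEigenspace_zero_eq, hdim]

lemma mult_map_one {p : Polynomial ℝ} (hp : p ≠ 0) {r : ℝ}
    (h1 : rootMultiplicity r p = 1) :
    rootMultiplicity ((r : ℂ)) (p.map Complex.ofRealHom) = 1 := by
  have hdvd : (X - C r) ∣ p := by
    have := Polynomial.pow_rootMultiplicity_dvd p r
    rwa [h1, pow_one] at this
  obtain ⟨q, hq⟩ := hdvd
  have hqr : q.eval r ≠ 0 := by
    intro h0
    have : (X - C r) ∣ q := Polynomial.dvd_iff_isRoot.mpr h0
    obtain ⟨q', hq'⟩ := this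
    have h2 : (X - C r) ^ 2 ∣ p := ⟨q', by rw [hq, hq', sq, mul_assoc]⟩
    have := (Polynomial.le_rootMultiplicity_iff hp).mpr h2
    omega
  have hmap : p.map Complex.ofRealHom = (X - C (r:ℂ)) * q.map Complex.ofRealHom := by
    rw [hq, Polynomial.map_mul, Polynomial.map_sub, Polynomial.map_X, Polynomial.map_C]
    rfl
  have hqC : (q.map Complex.ofRealHom).eval (r:ℂ) ≠ 0 := by
    have h2 : (q.map Complex.ofRealHom).eval ((Complex.ofRealHom : ℝ →+* ℂ) r) =
        Complex.ofRealHom (q.eval r) := by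
      rw [Polynomial.eval_map, Polynomial.eval₂_hom]
    have h3 : ((r : ℂ)) = (Complex.ofRealHom : ℝ →+* ℂ) r := rfl
    rw [h3, h2]
    simpa using hqr
  have hne : (X - C (r:ℂ)) * q.map Complex.ofRealHom ≠ 0 := by
    rw [← hmap]
    simpa using hp
  rw [hmap, Polynomial.rootMultiplicity_mul hne, Polynomial.rootMultiplicity_X_sub_C_self,
    Polynomial.rootMultiplicity_eq_zero hqC]

lemma pf_isroot (hn : 0 < n) (M : Matrix (Fin n) (Fin n) ℝ)
    (hM : ∀ i j, 0 ≤ M i j) (hirr : ∀ i j, ∃ k : ℕ, 1 ≤ k ∧ 0 < (M ^ k) i j) :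
    ((M.map fun a => (a : ℂ)).charpoly).IsRoot ((pfR n M : ℝ) : ℂ) := by
  obtain ⟨hrpos, x, hx, heig⟩ := pf_exists hn M hM hirr
  have hxne : x ≠ 0 := fun h0 => by
    have := hx ⟨0, hn⟩; rw [h0] at this; simp at this
  have hdet : ((pfR n M) • (1 : Matrix (Fin n) (Fin n) ℝ) - M).det = 0 := by
    rw [← Matrix.exists_mulVec_eq_zero_iff]
    exact ⟨x, hxne, by
      rw [Matrix.sub_mulVec, Matrix.smul_mulVec, Matrix.one_mulVec, heig, sub_self]⟩
  have hreal : M.charpoly.eval (pfR n M) = 0 := by rw [charpoly_eval]; exact hdet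
  have hmapeq : (M.map fun a => (a : ℂ)) = M.map ⇑Complex.ofRealHom := rfl
  have h3 : ((pfR n M : ℝ) : ℂ) = (Complex.ofRealHom : ℝ →+* ℂ) (pfR n M) := rfl
  rw [Polynomial.IsRoot, hmapeq, Matrix.charpoly_map, h3, Polynomial.eval_map,
    Polynomial.eval₂_hom, hreal, map_zero]


end PFAux

/-- Perron–Frobenius. For a nonnegative irreducible matrix `M ∈ ℝ^{n×n}`,
`n ≥ 2`: (i) the spectral radius `r = ρ(M)` (the maximum modulus of the complex eigenvalues,
i.e. of the roots of the characteristic polynomial) is strictly positive and is itself an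
eigenvalue of `M`; (ii) there is an entrywise strictly positive eigenvector `x` with
`Mx = ρ(M)x`; (iii) `ρ(M)` is an algebraically simple eigenvalue (a simple root of the
characteristic polynomial). -/
theorem perron_frobenius_irreducible (n : ℕ) (hn : 2 ≤ n) (M : Matrix (Fin n) (Fin n) ℝ)
    (hnonneg : ∀ i j, 0 ≤ M i j)
    (hirr : ∀ i j, ∃ k : ℕ, 1 ≤ k ∧ 0 < (M ^ k) i j) :
    ∃ r : ℝ, 0 < r ∧
      (∀ μ : ℂ, ((M.map fun a => (a : ℂ)).charpoly).IsRoot μ → ‖μ‖ ≤ r) ∧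
      ((M.map fun a => (a : ℂ)).charpoly).IsRoot (r : ℂ) ∧
      (∃ x : Fin n → ℝ, (∀ i, 0 < x i) ∧ M *ᵥ x = r • x) ∧
      rootMultiplicity ((r : ℂ)) ((M.map fun a => (a : ℂ)).charpoly) = 1 := by
  have hn0 : 0 < n := by omega
  obtain ⟨hrpos, x, hx, heig⟩ := pf_exists hn0 M hnonneg hirr
  -- transpose data
  have hMT : ∀ i j, 0 ≤ Mᵀ i j := fun i j => hnonneg j i
  have hirrT : ∀ i j, ∃ k : ℕ, 1 ≤ k ∧ 0 < (Mᵀ ^ k) i j := by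
    intro i j
    obtain ⟨k, hk1, hk⟩ := hirr j i
    exact ⟨k, hk1, by rwa [← Matrix.transpose_pow, Matrix.transpose_apply]⟩
  obtain ⟨hrpos', u, hu, huleft⟩ := pf_exists hn0 Mᵀ hMT hirrT
  -- the two charpolys agree
  have hchT : ((Mᵀ.map fun a => (a : ℂ)).charpoly) = ((M.map fun a => (a : ℂ)).charpoly) := by
    rw [Matrix.transpose_map, charpoly_transpose']
  -- pfR n Mᵀ = pfR n M
  have hreq : pfR n Mᵀ = pfR n M := by
    have h1 : pfR n Mᵀ ≤ pfR n M := by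
      have hroot := pf_isroot hn0 Mᵀ hMT hirrT
      rw [hchT] at hroot
      have := pf_root_bound hn0 M hnonneg hroot
      rwa [Complex.norm_real, Real.norm_eq_abs, abs_of_pos hrpos'] at this
    have h2 : pfR n M ≤ pfR n Mᵀ := by
      have hroot := pf_isroot hn0 M hnonneg hirr
      rw [← hchT] at hroot
      have := pf_root_bound hn0 Mᵀ hMT hroot
      rwa [Complex.norm_real, Real.norm_eq_abs, abs_of_pos hrpos] at this
    exact le_antisymm h1 h2
  rw [hreq] at huleft
  refine ⟨pfR n M, hrpos, fun mu hmu => pf_root_bound hn0 M hnonneg hmu,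
    pf_isroot hn0 M hnonneg hirr, ⟨x, hx, heig⟩, ?_⟩
  have hmult : rootMultiplicity (pfR n M) M.charpoly = 1 :=
    pf_mult_one hn0 M hnonneg hirr hx heig hu huleft
  have hmapeq : (M.map fun a => (a : ℂ)) = M.map ⇑Complex.ofRealHom := rfl
  rw [hmapeq, Matrix.charpoly_map]
  exact mult_map_one (Matrix.charpoly_monic M).ne_zero hmult
end
end

section
/- Let X, E ∈ ℂ^{n×n} and let λ be an algebraically simple eigenvalue of X (a simple root of the characteristic polynomial), with left eigenvector w (wᵀX = λwᵀ, w ≠ 0) and right eigenvector v (Xv = λv, v ≠ 0). Then wᵀv ≠ 0, and for every ε > 0 there exists δ > 0 such that for every t ∈ ℂ with |t| < δ, the matrix X + tE has exactly one eigenvalue λ(t) satisfying |λ(t) − λ − t·(wᵀEv)/(wᵀv)| ≤ |t|ε. -/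
noncomputable section
open scoped BigOperators
open Matrix Polynomial


lemma det_updateColumn_sum_eq_trace {n : ℕ} (A B : Matrix (Fin n) (Fin n) ℂ) :
    ∑ j, (A.updateCol j (fun i => B i j)).det = Matrix.trace (A.adjugate * B) := by
  have h : ∀ j, (A.updateCol j (fun i => B i j)).det = (A.adjugate *ᵥ fun i => B i j) j := by
    intro j
    rw [← Matrix.cramer_eq_adjugate_mulVec, Matrix.cramer_apply]
  simp only [h, Matrix.trace, Matrix.diag, Matrix.mul_apply, Matrix.mulVec, dotProduct]


lemma derivative_finset_prod' {ι : Type*} [DecidableEq ι] (s : Finset ι) (f : ι → ℂ[X]) :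
    Polynomial.derivative (∏ i ∈ s, f i)
      = ∑ j ∈ s, (∏ i ∈ s.erase j, f i) * Polynomial.derivative (f j) := by
  rw [Finset.prod_eq_multiset_prod, Polynomial.derivative_prod]
  rw [Finset.sum_eq_multiset_sum]
  refine congrArg Multiset.sum (Multiset.map_congr rfl fun j hj => ?_)
  congr 1

lemma jacobi {n : ℕ} (A B : Matrix (Fin n) (Fin n) ℂ) :
    (Polynomial.derivative
        ((A.map Polynomial.C + (Polynomial.X : ℂ[X]) • B.map Polynomial.C).det)).eval 0
      = Matrix.trace (A.adjugate * B) := by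
  classical
  rw [Matrix.det_apply']
  rw [← det_updateColumn_sum_eq_trace]
  have hentry : ∀ i j : Fin n,
      (A.map Polynomial.C + (Polynomial.X : ℂ[X]) • B.map Polynomial.C) i j
        = Polynomial.C (A i j) + Polynomial.X * Polynomial.C (B i j) := by
    intro i j
    simp [Matrix.add_apply, Matrix.smul_apply, Matrix.map_apply, smul_eq_mul]
  simp only [hentry]
  rw [map_sum Polynomial.derivative, Polynomial.eval_finset_sum]
  have key : ∀ σ : Equiv.Perm (Fin n),
      (Polynomial.derivative (((Equiv.Perm.sign σ : ℤ) : ℂ[X]) *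
          ∏ i, (Polynomial.C (A (σ i) i) + Polynomial.X * Polynomial.C (B (σ i) i)))).eval 0
        = ∑ j, (((Equiv.Perm.sign σ : ℤ) : ℂ)) *
            ((∏ i ∈ Finset.univ.erase j, A (σ i) i) * B (σ j) j) := by
    intro σ
    rw [Polynomial.derivative_mul, Polynomial.derivative_intCast, zero_mul, zero_add]
    rw [derivative_finset_prod']
    rw [Polynomial.eval_mul, Polynomial.eval_intCast, Polynomial.eval_finset_sum,
      Finset.mul_sum]
    refine Finset.sum_congr rfl fun j _ => ?_
    rw [Polynomial.eval_mul]
    congr 1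
    congr 1
    · rw [Polynomial.eval_prod]
      refine Finset.prod_congr rfl fun i _ => by simp
    · simp
  simp only [key]
  rw [Finset.sum_comm]
  refine Finset.sum_congr rfl fun j _ => ?_
  rw [Matrix.det_apply']
  refine Finset.sum_congr rfl fun σ _ => ?_
  rw [← Finset.mul_prod_erase Finset.univ _ (Finset.mem_univ j)]
  rw [Matrix.updateCol_apply]
  simp only [if_pos rfl]
  have : ∏ i ∈ Finset.univ.erase j, A.updateCol j (fun i => B i j) (σ i) i
      = ∏ i ∈ Finset.univ.erase j, A (σ i) i := by
    refine Finset.prod_congr rfl fun i hi => ?_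
    rw [Matrix.updateCol_apply, if_neg (Finset.mem_erase.mp hi).1]
  rw [this]
  push_cast
  ring

lemma kernel_unique {n : ℕ} (M : Matrix (Fin n) (Fin n) ℂ) (hadj : M.adjugate ≠ 0)
    (v : Fin n → ℂ) (hv : v ≠ 0) (hMv : M *ᵥ v = 0) (x : Fin n → ℂ) (hMx : M *ᵥ x = 0) :
    ∃ c : ℂ, x = c • v := by
  by_contra hc
  push_neg at hc
  apply hadj
  ext i j
  have hx0 : x ≠ 0 := fun h => hc 0 (by simp [h])
  obtain ⟨y, hy0, hMy, hyi⟩ : ∃ y : Fin n → ℂ, y ≠ 0 ∧ M *ᵥ y = 0 ∧ y i = 0 := by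
    by_cases hvi : v i = 0
    · exact ⟨v, hv, hMv, hvi⟩
    · refine ⟨x i • v - v i • x, ?_, ?_, ?_⟩
      · intro h
        have h2 : x i • v = v i • x := sub_eq_zero.mp h
        apply hc (x i / v i)
        funext k
        have h3 := congrFun h2 k
        simp only [Pi.smul_apply, smul_eq_mul] at h3 ⊢
        field_simp
        linear_combination -h3
      · rw [Matrix.mulVec_sub, Matrix.mulVec_smul, Matrix.mulVec_smul, hMv, hMx, smul_zero,
          smul_zero, sub_zero]
      · simp [mul_comm]
  have hdet : (M.updateRow j (Pi.single i 1)).det = 0 := by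
    rw [← Matrix.exists_mulVec_eq_zero_iff]
    refine ⟨y, hy0, ?_⟩
    ext k
    by_cases hk : k = j
    · subst hk
      simp [Matrix.mulVec, dotProduct, Matrix.updateRow_self, Pi.single_apply, hyi]
    · have := congrFun hMy k
      simpa [Matrix.mulVec, dotProduct, Matrix.updateRow_ne hk] using this
  rw [Matrix.adjugate_apply, hdet]
  simp

lemma adjugate_structure {n : ℕ} (M : Matrix (Fin n) (Fin n) ℂ)
    (v w : Fin n → ℂ) (hv : v ≠ 0) (hw : w ≠ 0)
    (hMv : M *ᵥ v = 0) (hwM : w ᵥ* M = 0) (hdet : M.det = 0)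
    (htr : Matrix.trace M.adjugate ≠ 0) :
    ∃ κ : ℂ, κ ≠ 0 ∧ ∀ i j, M.adjugate i j = κ * v i * w j := by
  have hadj : M.adjugate ≠ 0 := by
    intro h; exact htr (by simp [h])
  have hMadj : M * M.adjugate = 0 := by rw [Matrix.mul_adjugate, hdet, zero_smul]
  have hadjM : M.adjugate * M = 0 := by rw [Matrix.adjugate_mul, hdet, zero_smul]
  have hcol : ∀ j, M *ᵥ (fun i => M.adjugate i j) = 0 := by
    intro j
    ext k
    have := congrFun (congrFun hMadj k) j
    simpa [Matrix.mul_apply, Matrix.mulVec, dotProduct] using this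
  choose c hc using fun j => kernel_unique M hadj v hv hMv _ (hcol j)
  have hentry : ∀ i j, M.adjugate i j = c j * v i := by
    intro i j
    have := congrFun (hc j) i
    simpa using this
  obtain ⟨i0, hi0⟩ := Function.ne_iff.mp hv
  simp only [Pi.zero_apply] at hi0
  have hcM : c ᵥ* M = 0 := by
    ext k
    have h := congrFun (congrFun hadjM i0) k
    simp only [Matrix.mul_apply, Matrix.zero_apply] at h
    have h2 : ∑ j, c j * v i0 * M j k = 0 := by
      rw [← h]; exact Finset.sum_congr rfl fun j _ => by rw [hentry i0 j]
    have h3 : v i0 * ∑ j, c j * M j k = 0 := by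
      rw [Finset.mul_sum, ← h2]; exact Finset.sum_congr rfl fun j _ => by ring
    have := mul_eq_zero.mp h3
    simp only [Matrix.vecMul, dotProduct, Pi.zero_apply]
    tauto
  have hadjT : Mᵀ.adjugate ≠ 0 := by
    rw [← Matrix.adjugate_transpose]
    intro h
    apply hadj
    ext i j
    exact congrFun (congrFun h j) i
  have hwT : Mᵀ *ᵥ w = 0 := by rw [Matrix.mulVec_transpose, hwM]
  have hcT : Mᵀ *ᵥ c = 0 := by rw [Matrix.mulVec_transpose, hcM]
  obtain ⟨κ, hκ⟩ := kernel_unique Mᵀ hadjT w hw hwT c hcT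
  refine ⟨κ, ?_, ?_⟩
  · intro h
    apply hadj
    ext i j
    rw [hentry i j, congrFun hκ j]
    simp [h]
  · intro i j
    rw [hentry i j, congrFun hκ j]
    simp [Pi.smul_apply, smul_eq_mul]
    ring

lemma eval_decomp {R : Type*} [CommRing R] (P : R[X]) (x : R) :
    P.eval x = P.coeff 0 + x * P.divX.eval x := by
  calc P.eval x = (Polynomial.X * P.divX + Polynomial.C (P.coeff 0)).eval x := by
        rw [Polynomial.X_mul_divX_add]
    _ = P.coeff 0 + x * P.divX.eval x := by
        simp only [Polynomial.eval_add, Polynomial.eval_mul, Polynomial.eval_X, Polynomial.eval_C]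
        ring

lemma cont_eval2 (P : Polynomial (Polynomial ℂ)) :
    Continuous fun p : ℂ × ℂ => (P.eval (Polynomial.C p.1)).eval p.2 := by
  induction P using Polynomial.induction_on' with
  | add p q hp hq =>
    simp only [Polynomial.eval_add]
    exact hp.add hq
  | monomial k a =>
    simp only [Polynomial.eval_monomial, ← Polynomial.C_pow, Polynomial.eval_mul,
      Polynomial.eval_C]
    exact ((Polynomial.continuous a).comp continuous_snd).mul ((continuous_fst).pow k)

lemma cont_eval2' (P : Polynomial (Polynomial ℂ)) :
    Continuous fun p : ℂ × ℂ => ((P.eval (Polynomial.C p.1)).derivative).eval p.2 := by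
  induction P using Polynomial.induction_on' with
  | add p q hp hq =>
    simp only [Polynomial.eval_add, Polynomial.derivative_add]
    exact hp.add hq
  | monomial k a =>
    simp only [Polynomial.eval_monomial, ← Polynomial.C_pow, Polynomial.derivative_mul,
      Polynomial.derivative_C, mul_zero, add_zero, Polynomial.eval_add, Polynomial.eval_mul,
      Polynomial.eval_C]
    exact ((Polynomial.continuous a.derivative).comp continuous_snd).mul ((continuous_fst).pow k)

lemma poly_expand (Q : Polynomial (Polynomial ℂ)) (t u : ℂ) :
    (Q.eval (Polynomial.C t)).eval u =
      (Q.coeff 0).coeff 0 + ((Q.coeff 0).divX.coeff 0) * u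
        + u ^ 2 * (((Q.coeff 0).divX.divX).eval u)
        + t * ((Q.divX.coeff 0).coeff 0)
        + t * u * (((Q.divX.coeff 0).divX).eval u)
        + t ^ 2 * (((Q.divX.divX).eval (Polynomial.C t)).eval u) := by
  have h1 : Q.eval (Polynomial.C t) = Q.coeff 0 + Polynomial.C t * (Q.divX.eval (Polynomial.C t)) :=
    eval_decomp Q (Polynomial.C t)
  have h2 : Q.divX.eval (Polynomial.C t)
      = Q.divX.coeff 0 + Polynomial.C t * (Q.divX.divX.eval (Polynomial.C t)) :=
    eval_decomp Q.divX (Polynomial.C t)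
  rw [h1, h2]
  simp only [Polynomial.eval_add, Polynomial.eval_mul, Polynomial.eval_C]
  rw [eval_decomp (Q.coeff 0) u, eval_decomp (Q.coeff 0).divX u,
    eval_decomp (Q.divX.coeff 0) u]
  ring

lemma multiset_prod_lower (s : Multiset ℂ) (r : ℝ) (hr : 0 ≤ r)
    (h : ∀ x ∈ s, r ≤ ‖x‖) : r ^ (Multiset.card s) ≤ ‖s.prod‖ := by
  induction s using Multiset.induction_on with
  | empty => simp
  | cons a s ih =>
    rw [Multiset.prod_cons, norm_mul, Multiset.card_cons, pow_succ']
    exact mul_le_mul (h a (Multiset.mem_cons_self a s))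
      (ih fun x hx => h x (Multiset.mem_cons_of_mem hx)) (pow_nonneg hr _)
      (norm_nonneg _)



lemma det_map_eq {R S : Type*} [CommRing R] [CommRing S] (f : R →+* S) {m : ℕ}
    (A : Matrix (Fin m) (Fin m) R) : f A.det = (A.map f).det := by
  rw [RingHom.map_det, RingHom.mapMatrix_apply]

set_option maxHeartbeats 2000000 in
/-- eigenvalue perturbation for a simple eigenvalue. Let `λ` be an
algebraically simple eigenvalue of `X ∈ ℂ^{n×n}` with left eigenvector `w` and right
eigenvector `v`. Then `wᵀv ≠ 0`, and for every `ε > 0` there is `δ > 0` such that for all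
`t ∈ ℂ` with `|t| < δ` the matrix `X + tE` has exactly one eigenvalue `z` with
`|z - λ - t (wᵀEv)/(wᵀv)| ≤ |t| ε`. -/
theorem simple_eigenvalue_perturbation (n : ℕ) (X E : Matrix (Fin n) (Fin n) ℂ)
    (lam : ℂ) (w v : Fin n → ℂ)
    (hsimple : rootMultiplicity lam X.charpoly = 1)
    (hw : w ≠ 0) (hw_eig : w ᵥ* X = lam • w)
    (hv : v ≠ 0) (hv_eig : X *ᵥ v = lam • v) :
    w ⬝ᵥ v ≠ 0 ∧
    ∀ ε : ℝ, 0 < ε → ∃ δ : ℝ, 0 < δ ∧ ∀ t : ℂ, ‖t‖ < δ →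
      ∃! z : ℂ, ((X + t • E).charpoly).IsRoot z ∧
        ‖z - lam - t * (w ⬝ᵥ (E *ᵥ v)) / (w ⬝ᵥ v)‖ ≤ ‖t‖ * ε := by
  classical
  have hn : 0 < n := by
    obtain ⟨i, -⟩ := Function.ne_iff.mp hw
    exact i.pos
  -- basic facts about the simple root
  have hp0ne : X.charpoly ≠ 0 := X.charpoly_monic.ne_zero
  obtain ⟨q, hq, hqnd⟩ := X.charpoly.exists_eq_pow_rootMultiplicity_mul_and_not_dvd hp0ne lam
  rw [hsimple, pow_one] at hq
  have hroot : X.charpoly.eval lam = 0 := by rw [hq]; simp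
  have hqlam : q.eval lam ≠ 0 := fun h => hqnd (Polynomial.dvd_iff_isRoot.mpr h)
  have hd0 : X.charpoly.derivative.eval lam ≠ 0 := by
    have : X.charpoly.derivative.eval lam = q.eval lam := by
      rw [hq]; simp [Polynomial.derivative_mul]
    rw [this]; exact hqlam
  set d : ℂ := X.charpoly.derivative.eval lam with hddef
  set M : Matrix (Fin n) (Fin n) ℂ := lam • 1 - X with hMdef
  have hMv : M *ᵥ v = 0 := by
    rw [hMdef, Matrix.sub_mulVec, Matrix.smul_mulVec, Matrix.one_mulVec, hv_eig, sub_self]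
  have hwM : w ᵥ* M = 0 := by
    ext k
    have h := congrFun hw_eig k
    simp only [Matrix.vecMul, dotProduct, Pi.smul_apply, smul_eq_mul] at h ⊢
    simp only [hMdef, Matrix.sub_apply, Matrix.smul_apply, Matrix.one_apply, smul_eq_mul,
      mul_sub, Finset.sum_sub_distrib, mul_ite, mul_one, mul_zero, Finset.sum_ite_eq',
      Finset.mem_univ, if_true, Pi.zero_apply]
    linear_combination -h
  -- the two-variable polynomial Q(t, u) = det((lam+u)•1 - X - t•E)
  set N : Matrix (Fin n) (Fin n) (Polynomial (Polynomial ℂ)) :=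
    Matrix.of (fun i j =>
      (if i = j then Polynomial.C (Polynomial.C lam + Polynomial.X) else 0)
        - Polynomial.C (Polynomial.C (X i j))
        - Polynomial.X * Polynomial.C (Polynomial.C (E i j))) with hNdef
  set Q : Polynomial (Polynomial ℂ) := N.det with hQdef
  -- evaluation identity
  have hF : ∀ t z : ℂ, (Q.eval (Polynomial.C t)).eval (z - lam) = ((X + t • E).charpoly).eval z := by
    intro t z
    have h1 : ((X + t • E).charpoly).eval z
        = ((charmatrix (X + t • E)).map (Polynomial.evalRingHom z)).det := by
      rw [Matrix.charpoly, ← Polynomial.coe_evalRingHom, det_map_eq]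
    have h2 : (Q.eval (Polynomial.C t)).eval (z - lam)
        = (N.map ((Polynomial.evalRingHom (z - lam)).comp
            (Polynomial.evalRingHom (Polynomial.C t)))).det := by
      have h3 : (Q.eval (Polynomial.C t)).eval (z - lam)
          = ((Polynomial.evalRingHom (z - lam)).comp
              (Polynomial.evalRingHom (Polynomial.C t))) Q := by
        simp [RingHom.comp_apply]
      rw [h3, hQdef, det_map_eq]
    rw [h1, h2]
    congr 1
    ext i j
    by_cases h : i = j
    · subst h
      simp [hNdef, charmatrix_apply_eq, Matrix.add_apply, Matrix.smul_apply, smul_eq_mul]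
      ring
    · simp [hNdef, charmatrix_apply_ne _ _ _ h, Matrix.add_apply, Matrix.smul_apply,
        smul_eq_mul, if_neg h]
      ring
  -- q0 = charpoly composed with shift
  have hq0comp : Q.coeff 0 = X.charpoly.comp (Polynomial.X + Polynomial.C lam) := by
    have h1 : Q.coeff 0 = (N.map (Polynomial.evalRingHom (0 : Polynomial ℂ))).det := by
      have h3 : Q.coeff 0 = (Polynomial.evalRingHom (0 : Polynomial ℂ)) Q := by
        simp [Polynomial.coeff_zero_eq_eval_zero]
      rw [h3, hQdef, det_map_eq]
    have h2 : X.charpoly.comp (Polynomial.X + Polynomial.C lam)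
        = ((charmatrix X).map
            (Polynomial.eval₂RingHom Polynomial.C (Polynomial.X + Polynomial.C lam))).det := by
      have h3 : X.charpoly.comp (Polynomial.X + Polynomial.C lam)
          = (Polynomial.eval₂RingHom Polynomial.C (Polynomial.X + Polynomial.C lam))
              X.charpoly := by
        simp [Polynomial.coe_eval₂RingHom, Polynomial.comp]
      rw [h3, Matrix.charpoly, det_map_eq]
    rw [h1, h2]
    congr 1
    ext i j
    by_cases h : i = j
    · subst h
      simp [hNdef, charmatrix_apply_eq]
      ring
    · simp [hNdef, charmatrix_apply_ne _ _ _ h, if_neg h]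
  have ha0 : (Q.coeff 0).coeff 0 = 0 := by
    rw [Polynomial.coeff_zero_eq_eval_zero, hq0comp, Polynomial.eval_comp]
    simpa using hroot
  have hcoeff1 : ∀ P : Polynomial ℂ, P.derivative.eval 0 = P.divX.coeff 0 := by
    intro P
    rw [Polynomial.coeff_divX, ← Polynomial.coeff_zero_eq_eval_zero, Polynomial.coeff_derivative]
    simp
  have ha1 : (Q.coeff 0).divX.coeff 0 = d := by
    rw [← hcoeff1, hq0comp, Polynomial.derivative_comp]
    simp [Polynomial.eval_comp, hddef]
  -- trace formula for d
  have htrM : d = Matrix.trace M.adjugate := by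
    have h1 : Q.coeff 0
        = (M.map Polynomial.C
            + (Polynomial.X : ℂ[X]) • (1 : Matrix (Fin n) (Fin n) ℂ).map Polynomial.C).det := by
      have h3 : Q.coeff 0 = (Polynomial.evalRingHom (0 : Polynomial ℂ)) Q := by
        simp [Polynomial.coeff_zero_eq_eval_zero]
      rw [h3, hQdef, det_map_eq]
      · congr 1
        ext i j
        by_cases h : i = j
        · subst h
          simp [hNdef, hMdef, Matrix.add_apply, Matrix.smul_apply, Matrix.map_apply,
            Matrix.sub_apply, Matrix.one_apply, smul_eq_mul, Polynomial.coe_evalRingHom]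
          ring
        · simp [hNdef, hMdef, Matrix.add_apply, Matrix.smul_apply, Matrix.map_apply,
            Matrix.sub_apply, Matrix.one_apply, smul_eq_mul, if_neg h,
            Polynomial.coe_evalRingHom]
    have h2 := jacobi M 1
    rw [← h1, hcoeff1, ha1, Matrix.mul_one] at h2
    exact h2
  have hdetM : M.det = 0 := by
    have h1 : X.charpoly.eval lam = ((charmatrix X).map (Polynomial.evalRingHom lam)).det := by
      rw [Matrix.charpoly, ← Polynomial.coe_evalRingHom, det_map_eq]
    have h2 : M = (charmatrix X).map (Polynomial.evalRingHom lam) := by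
      ext i j
      by_cases h : i = j
      · subst h
        simp [hMdef, charmatrix_apply_eq, Matrix.sub_apply, Matrix.smul_apply, Matrix.one_apply]
      · simp [hMdef, charmatrix_apply_ne _ _ _ h, Matrix.sub_apply, Matrix.smul_apply,
          Matrix.one_apply, if_neg h]
    rw [h2, ← h1, hroot]
  have htradj : Matrix.trace M.adjugate ≠ 0 := by rw [← htrM]; exact hd0
  obtain ⟨κ, hκ0, hκ⟩ := adjugate_structure M v w hv hw hMv hwM hdetM htradj
  have htraceval : Matrix.trace M.adjugate = κ * (w ⬝ᵥ v) := by
    simp only [Matrix.trace, Matrix.diag, hκ, dotProduct, Finset.mul_sum]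
    exact Finset.sum_congr rfl fun i _ => by ring
  have hwv : w ⬝ᵥ v ≠ 0 := by
    intro h
    apply htradj
    rw [htraceval, h, mul_zero]
  have hdval : d = κ * (w ⬝ᵥ v) := by rw [htrM, htraceval]
  have htraceE : Matrix.trace (M.adjugate * E) = κ * (w ⬝ᵥ (E *ᵥ v)) := by
    simp only [Matrix.trace, Matrix.diag, Matrix.mul_apply, hκ, dotProduct,
      Matrix.mulVec, Finset.mul_sum]
    rw [Finset.sum_comm]
    refine Finset.sum_congr rfl fun j _ => Finset.sum_congr rfl fun i _ => by ring
  -- b0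
  set b0 : ℂ := (Q.divX.coeff 0).coeff 0 with hb0def
  have hb0 : b0 = -(κ * (w ⬝ᵥ (E *ᵥ v))) := by
    have h1 : Q.map (Polynomial.evalRingHom (0 : ℂ))
        = (M.map Polynomial.C + (Polynomial.X : ℂ[X]) • ((-E).map Polynomial.C)).det := by
      have h4 : Q.map (Polynomial.evalRingHom (0 : ℂ))
          = (Polynomial.mapRingHom (Polynomial.evalRingHom (0 : ℂ))) Q := by
        simp [Polynomial.coe_mapRingHom]
      rw [h4, hQdef, det_map_eq]
      congr 1
      ext i j
      by_cases h : i = j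
      · subst h
        simp [hNdef, hMdef, Matrix.add_apply, Matrix.smul_apply, Matrix.map_apply,
          Matrix.sub_apply, Matrix.one_apply, Matrix.neg_apply, smul_eq_mul]
        ring
      · simp [hNdef, hMdef, Matrix.add_apply, Matrix.smul_apply, Matrix.map_apply,
          Matrix.sub_apply, Matrix.one_apply, Matrix.neg_apply, smul_eq_mul, if_neg h]
        ring
    have h2 : b0 = (Q.map (Polynomial.evalRingHom (0 : ℂ))).divX.coeff 0 := by
      rw [hb0def]
      rw [Polynomial.coeff_divX, Polynomial.coeff_divX, Polynomial.coeff_map,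
        Polynomial.coeff_zero_eq_eval_zero]
      rfl
    have h3 := jacobi M (-E)
    rw [← h1, hcoeff1] at h3
    rw [h2, h3, Matrix.mul_neg, Matrix.trace_neg, htraceE]
  -- the target first-order coefficient
  set c : ℂ := (w ⬝ᵥ (E *ᵥ v)) / (w ⬝ᵥ v) with hcdef
  have hcd : c = -b0 / d := by
    rw [hcdef, hb0, hdval, neg_neg, mul_div_mul_left _ _ hκ0]
  clear_value N Q M d b0 c
  refine ⟨hwv, ?_⟩
  intro ε hε
  have hdpos : (0:ℝ) < ‖d‖ := norm_pos_iff.mpr hd0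
  -- uniform bounds for the remainder polynomials
  obtain ⟨B1, hB1⟩ := (isCompact_closedBall (0:ℂ) 1).exists_bound_of_continuousOn
    (Polynomial.continuous ((Q.coeff 0).divX.divX)).continuousOn
  obtain ⟨B2, hB2⟩ := (isCompact_closedBall (0:ℂ) 1).exists_bound_of_continuousOn
    (Polynomial.continuous ((Q.divX.coeff 0).divX)).continuousOn
  obtain ⟨B3, hB3⟩ := ((isCompact_closedBall (0:ℂ) 1).prod
    (isCompact_closedBall (0:ℂ) 1)).exists_bound_of_continuousOn
    (cont_eval2 Q.divX.divX).continuousOn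
  set B : ℝ := max 1 (max B1 (max B2 B3)) with hBdef
  have hBpos : (0:ℝ) < B := lt_of_lt_of_le one_pos (le_max_left _ _)
  have hRB : ∀ u : ℂ, ‖u‖ ≤ 1 → ‖((Q.coeff 0).divX.divX).eval u‖ ≤ B := by
    intro u hu
    refine le_trans (hB1 u ?_) (le_trans (le_max_left _ _) (le_max_right _ _))
    simpa [Metric.mem_closedBall, dist_zero_right] using hu
  have hSB : ∀ u : ℂ, ‖u‖ ≤ 1 → ‖((Q.divX.coeff 0).divX).eval u‖ ≤ B := by
    intro u hu
    refine le_trans (hB2 u ?_)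
      (le_trans (le_trans (le_max_left _ _) (le_max_right _ _)) (le_max_right _ _))
    simpa [Metric.mem_closedBall, dist_zero_right] using hu
  have hTB : ∀ t u : ℂ, ‖t‖ ≤ 1 → ‖u‖ ≤ 1 →
      ‖((Q.divX.divX).eval (Polynomial.C t)).eval u‖ ≤ B := by
    intro t u ht hu
    refine le_trans (hB3 (t, u) ?_)
      (le_trans (le_trans (le_max_right _ _) (le_max_right _ _)) (le_max_right _ _))
    constructor <;> simpa [Metric.mem_closedBall, dist_zero_right] using (by assumption : _)
  -- derivative control near (0,0)
  obtain ⟨r1, hr1pos, hr1⟩ := Metric.continuousAt_iff.mp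
    ((cont_eval2' Q).continuousAt (x := ((0:ℂ), (0:ℂ)))) (‖d‖/2) (by positivity)
  have hf00 : ((Q.eval (Polynomial.C (0:ℂ))).derivative).eval (0:ℂ) = d := by
    have hq00 : Q.eval (0 : Polynomial ℂ) = Q.coeff 0 :=
      (Polynomial.coeff_zero_eq_eval_zero Q).symm
    rw [Polynomial.C_0, hq00, hcoeff1, ha1]
  set rphi : ℝ := min (r1/2) 1 with hrphidef
  have hrphipos : 0 < rphi := lt_min (by linarith) one_pos
  have hPhibound : ∀ s u : ℂ, ‖s‖ ≤ rphi → ‖u‖ ≤ rphi →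
      ‖((Q.eval (Polynomial.C s)).derivative).eval u - d‖ ≤ ‖d‖/2 := by
    intro s u hs hu
    have hdist : dist ((s, u) : ℂ × ℂ) ((0, 0) : ℂ × ℂ) < r1 := by
      rw [Prod.dist_eq]
      have h1 : dist s 0 < r1 := by
        rw [dist_zero_right]; exact lt_of_le_of_lt (le_trans hs (min_le_left _ _)) (by linarith)
      have h2 : dist u 0 < r1 := by
        rw [dist_zero_right]; exact lt_of_le_of_lt (le_trans hu (min_le_left _ _)) (by linarith)
      exact max_lt h1 h2
    have h3 := hr1 hdist
    dsimp only at h3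
    rw [hf00, dist_eq_norm] at h3
    exact h3.le
  -- constants
  set L : ℝ := 2 * (‖b0‖ + B) / ‖d‖ with hLdef
  have hb0B : (0:ℝ) < ‖b0‖ + B := add_pos_of_nonneg_of_pos (norm_nonneg _) hBpos
  have hLpos : 0 < L := div_pos (by linarith) hdpos
  have hL1pos : (0:ℝ) < (L^2 + L + 1) * B := by nlinarith [sq_nonneg L]
  set r0 : ℝ := min rphi (min 1 (‖d‖/(4*B))) with hr0def
  have hr0pos : 0 < r0 :=
    lt_min hrphipos (lt_min one_pos (div_pos hdpos (by linarith)))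
  have hr0le1 : r0 ≤ 1 := le_trans (min_le_right _ _) (min_le_left _ _)
  have hr0lephi : r0 ≤ rphi := min_le_left _ _
  have hr0B : r0 * B ≤ ‖d‖/4 := by
    have h1 : r0 ≤ ‖d‖/(4*B) := le_trans (min_le_right _ _) (min_le_right _ _)
    calc r0 * B ≤ (‖d‖/(4*B)) * B := mul_le_mul_of_nonneg_right h1 hBpos.le
      _ = ‖d‖/4 := by field_simp
  set δ : ℝ := min (min r0 (‖d‖/(4*B)))
    (min (r0^n/(‖b0‖ + B)) (min (ε*‖d‖/((L^2 + L + 1)*B)) (r0/(ε + ‖c‖ + 1)))) with hδdef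
  have hδpos : 0 < δ := by
    refine lt_min (lt_min hr0pos (div_pos hdpos (by linarith))) (lt_min ?_ (lt_min ?_ ?_))
    · exact div_pos (pow_pos hr0pos n) hb0B
    · exact div_pos (mul_pos hε hdpos) hL1pos
    · exact div_pos hr0pos (by positivity)
  have hδ1 : δ ≤ r0 := le_trans (min_le_left _ _) (min_le_left _ _)
  have hδ2 : δ ≤ ‖d‖/(4*B) := le_trans (min_le_left _ _) (min_le_right _ _)
  have hδ3 : δ ≤ r0^n/(‖b0‖ + B) := le_trans (min_le_right _ _) (min_le_left _ _)
  have hδ4 : δ ≤ ε*‖d‖/((L^2 + L + 1)*B) :=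
    le_trans (min_le_right _ _) (le_trans (min_le_right _ _) (min_le_left _ _))
  have hδ5 : δ ≤ r0/(ε + ‖c‖ + 1) :=
    le_trans (min_le_right _ _) (le_trans (min_le_right _ _) (min_le_right _ _))
  clear_value B L r0 rphi δ
  refine ⟨δ, hδpos, ?_⟩
  intro t habs
  have ht : ‖t‖ < δ := by exact habs
  have hδr0 : δ ≤ r0 := hδ1
  have ht1 : ‖t‖ ≤ 1 := (lt_of_lt_of_le ht (le_trans hδr0 hr0le1)).le
  have htphi : ‖t‖ ≤ rphi := (lt_of_lt_of_le ht (le_trans hδr0 hr0lephi)).le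
  have htB : ‖t‖ * B ≤ ‖d‖/4 := by
    have h1 : ‖t‖ ≤ ‖d‖/(4*B) := (lt_of_lt_of_le ht hδ2).le
    calc ‖t‖ * B ≤ (‖d‖/(4*B)) * B := mul_le_mul_of_nonneg_right h1 hBpos.le
      _ = ‖d‖/4 := by field_simp
  -- expansion with identified coefficients
  have hFexp : ∀ u' : ℂ, (Q.eval (Polynomial.C t)).eval u' =
      d * u' + u'^2 * (((Q.coeff 0).divX.divX).eval u')
      + t * b0 + t * u' * (((Q.divX.coeff 0).divX).eval u')
      + t^2 * (((Q.divX.divX).eval (Polynomial.C t)).eval u') := by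
    intro u'
    rw [poly_expand Q t u', ha0, ha1, ← hb0def]
    ring
  -- existence of a root close to lam
  have hdeg : ((X + t • E).charpoly).natDegree = n := by
    rw [Matrix.charpoly_natDegree_eq_dim]; exact Fintype.card_fin n
  have hsplits := IsAlgClosed.splits ((X + t • E).charpoly)
  have hprodform := Polynomial.Splits.eq_prod_roots_of_monic
    hsplits (X + t • E).charpoly_monic
  have hcard : Multiset.card ((X + t • E).charpoly).roots = n := by
    have h1 := (Polynomial.splits_iff_card_roots).mp hsplits
    rw [hdeg] at h1
    exact h1
  have hevalbound : ‖((X + t • E).charpoly).eval lam‖ ≤ (‖b0‖ + B) * ‖t‖ := by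
    rw [← hF t lam, sub_self, hFexp 0]
    have hT0 : ‖((Q.divX.divX).eval (Polynomial.C t)).eval (0:ℂ)‖ ≤ B :=
      hTB t 0 ht1 (by simp)
    have h1 : d * 0 + (0:ℂ)^2 * (((Q.coeff 0).divX.divX).eval 0)
        + t * b0 + t * 0 * (((Q.divX.coeff 0).divX).eval 0)
        + t^2 * (((Q.divX.divX).eval (Polynomial.C t)).eval 0)
        = t * b0 + t^2 * (((Q.divX.divX).eval (Polynomial.C t)).eval 0) := by ring
    rw [h1]
    calc ‖t * b0 + t^2 * (((Q.divX.divX).eval (Polynomial.C t)).eval 0)‖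
        ≤ ‖t * b0‖ + ‖t^2 * (((Q.divX.divX).eval (Polynomial.C t)).eval 0)‖ := norm_add_le _ _
      _ = ‖t‖ * ‖b0‖ + ‖t‖^2 * ‖((Q.divX.divX).eval (Polynomial.C t)).eval 0‖ := by
          rw [norm_mul, norm_mul, norm_pow]
      _ ≤ ‖t‖ * ‖b0‖ + ‖t‖ * B := by
          have i1 : ‖t‖^2 * ‖((Q.divX.divX).eval (Polynomial.C t)).eval (0:ℂ)‖ ≤ ‖t‖^2 * B :=
            mul_le_mul_of_nonneg_left hT0 (sq_nonneg _)
          have i2 : ‖t‖ * ‖t‖ ≤ ‖t‖ * 1 := mul_le_mul_of_nonneg_left ht1 (norm_nonneg t)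
          have i3 : ‖t‖^2 * B ≤ ‖t‖ * B := by
            calc ‖t‖^2 * B = ‖t‖*‖t‖*B := by ring
              _ ≤ ‖t‖*1*B := mul_le_mul_of_nonneg_right i2 hBpos.le
              _ = ‖t‖ * B := by ring
          linarith
      _ = (‖b0‖ + B) * ‖t‖ := by ring
  have hex : ∃ z0 ∈ ((X + t • E).charpoly).roots, ‖lam - z0‖ ≤ r0 := by
    by_contra hcon
    push_neg at hcon
    have hlow : r0^n ≤ ‖((X + t • E).charpoly).eval lam‖ := by
      have hmap : Multiset.map (Polynomial.eval lam)
          (Multiset.map (fun a => Polynomial.X - Polynomial.C a) ((X + t • E).charpoly).roots)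
          = Multiset.map (fun a => lam - a) ((X + t • E).charpoly).roots := by
        rw [Multiset.map_map]
        exact Multiset.map_congr rfl fun a _ => by simp
      have hlow2 := multiset_prod_lower
        (Multiset.map (fun a => lam - a) ((X + t • E).charpoly).roots) r0 hr0pos.le ?_
      · rw [Multiset.card_map, hcard] at hlow2
        calc r0^n ≤ ‖(Multiset.map (fun a => lam - a)
              ((X + t • E).charpoly).roots).prod‖ := hlow2
          _ = ‖((X + t • E).charpoly).eval lam‖ := by
              congr 1
              conv_rhs => rw [hprodform]
              rw [Polynomial.eval_multiset_prod, hmap]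
      · intro x hx
        obtain ⟨a, ha, rfl⟩ := Multiset.mem_map.mp hx
        exact (hcon a ha).le
    have hupp : ‖((X + t • E).charpoly).eval lam‖ < r0^n := by
      refine lt_of_le_of_lt hevalbound ?_
      have h1 : ‖t‖ < r0^n/(‖b0‖ + B) := lt_of_lt_of_le ht hδ3
      calc (‖b0‖ + B) * ‖t‖ < (‖b0‖ + B) * (r0^n/(‖b0‖ + B)) :=
            mul_lt_mul_of_pos_left h1 hb0B
        _ = r0^n := by field_simp
    linarith
  obtain ⟨μ, hμmem, hμd⟩ := hex
  have hμroot : ((X + t • E).charpoly).IsRoot μ := (Polynomial.mem_roots'.mp hμmem).2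
  have hμu : ‖μ - lam‖ ≤ r0 := by rw [norm_sub_rev]; exact hμd
  have hFμ : (Q.eval (Polynomial.C t)).eval (μ - lam) = 0 := by rw [hF t μ]; exact hμroot
  -- the key quantitative estimate
  have hkey : ∀ u' : ℂ, ‖u'‖ ≤ r0 → (Q.eval (Polynomial.C t)).eval u' = 0 →
      ‖u' - t * c‖ ≤ ‖t‖ * ε := by
    intro u' hu' hzero
    have hu1 : ‖u'‖ ≤ 1 := le_trans hu' hr0le1
    have hexp := hFexp u'
    rw [hzero] at hexp
    have hRU : ‖((Q.coeff 0).divX.divX).eval u'‖ ≤ B := hRB u' hu1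
    have hSU : ‖((Q.divX.coeff 0).divX).eval u'‖ ≤ B := hSB u' hu1
    have hTU : ‖((Q.divX.divX).eval (Polynomial.C t)).eval u'‖ ≤ B := hTB t u' ht1 hu1
    set RU := ((Q.coeff 0).divX.divX).eval u' with hRUdef
    set SU := ((Q.divX.coeff 0).divX).eval u' with hSUdef
    set TU := ((Q.divX.divX).eval (Polynomial.C t)).eval u' with hTUdef
    have heq : d * u' = -(t * b0) - (u'^2*RU + t*u'*SU + t^2*TU) := by
      linear_combination -hexp
    have hnorm1 : ‖d‖ * ‖u'‖ ≤ ‖b0‖ * ‖t‖ + (‖u'‖^2*B + ‖t‖*‖u'‖*B + ‖t‖^2*B) := by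
      calc ‖d‖ * ‖u'‖ = ‖d * u'‖ := (norm_mul _ _).symm
        _ = ‖-(t * b0) - (u'^2*RU + t*u'*SU + t^2*TU)‖ := by rw [heq]
        _ ≤ ‖t * b0‖ + ‖u'^2*RU + t*u'*SU + t^2*TU‖ := by
            refine le_trans (norm_sub_le _ _) ?_
            rw [norm_neg]
        _ ≤ ‖t * b0‖ + (‖u'^2*RU‖ + ‖t*u'*SU‖ + ‖t^2*TU‖) :=
            add_le_add_right (norm_add₃_le) _
        _ ≤ ‖b0‖ * ‖t‖ + (‖u'‖^2*B + ‖t‖*‖u'‖*B + ‖t‖^2*B) := by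
            rw [norm_mul, norm_mul, norm_mul, norm_mul, norm_mul, norm_pow, norm_pow]
            have e1 : ‖u'‖^2 * ‖RU‖ ≤ ‖u'‖^2*B :=
              mul_le_mul_of_nonneg_left hRU (by positivity)
            have e2 : ‖t‖*‖u'‖*‖SU‖ ≤ ‖t‖*‖u'‖*B :=
              mul_le_mul_of_nonneg_left hSU (by positivity)
            have e3 : ‖t‖^2*‖TU‖ ≤ ‖t‖^2*B :=
              mul_le_mul_of_nonneg_left hTU (by positivity)
            nlinarith [norm_nonneg t, norm_nonneg b0]
    have hboot : ‖u'‖ ≤ L * ‖t‖ := by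
      have e1 : ‖u'‖^2*B ≤ ‖u'‖ * (‖d‖/4) := by
        have i1 : ‖u'‖ * ‖u'‖ ≤ ‖u'‖ * r0 := mul_le_mul_of_nonneg_left hu' (norm_nonneg u')
        have i2 : ‖u'‖ * ‖u'‖ * B ≤ ‖u'‖ * r0 * B := mul_le_mul_of_nonneg_right i1 hBpos.le
        have i3 : ‖u'‖ * (r0 * B) ≤ ‖u'‖ * (‖d‖/4) :=
          mul_le_mul_of_nonneg_left hr0B (norm_nonneg u')
        calc ‖u'‖^2*B = ‖u'‖ * ‖u'‖ * B := by ring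
          _ ≤ ‖u'‖ * r0 * B := i2
          _ = ‖u'‖ * (r0 * B) := by ring
          _ ≤ ‖u'‖ * (‖d‖/4) := i3
      have e2 : ‖t‖*‖u'‖*B ≤ ‖u'‖ * (‖d‖/4) := by
        have i1 : ‖u'‖ * (‖t‖ * B) ≤ ‖u'‖ * (‖d‖/4) :=
          mul_le_mul_of_nonneg_left htB (norm_nonneg u')
        calc ‖t‖*‖u'‖*B = ‖u'‖*(‖t‖*B) := by ring
          _ ≤ ‖u'‖ * (‖d‖/4) := i1
      have e3 : ‖t‖^2*B ≤ ‖t‖*B := by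
        have i1 : ‖t‖*‖t‖ ≤ ‖t‖*1 := mul_le_mul_of_nonneg_left ht1 (norm_nonneg t)
        calc ‖t‖^2*B = ‖t‖*‖t‖*B := by ring
          _ ≤ ‖t‖*1*B := mul_le_mul_of_nonneg_right i1 hBpos.le
          _ = ‖t‖*B := by ring
      have e4 : ‖d‖ * ‖u'‖ ≤ (‖b0‖ + B) * ‖t‖ + ‖u'‖ * (‖d‖/2) := by linarith
      rw [hLdef, div_mul_eq_mul_div, le_div_iff₀ hdpos]
      linarith
    have h7 : (u' - t*c) * d = -(u'^2*RU + t*u'*SU + t^2*TU) := by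
      have h8 : t*c*d = -(t*b0) := by
        rw [hcd]
        field_simp
      linear_combination -hexp - h8
    have h9 : ‖u' - t*c‖ * ‖d‖ = ‖u'^2*RU + t*u'*SU + t^2*TU‖ := by
      rw [← norm_mul, h7, norm_neg]
    have h10 : ‖u'^2*RU + t*u'*SU + t^2*TU‖ ≤ ‖t‖^2 * ((L^2 + L + 1) * B) := by
      calc ‖u'^2*RU + t*u'*SU + t^2*TU‖ ≤ ‖u'^2*RU‖ + ‖t*u'*SU‖ + ‖t^2*TU‖ := norm_add₃_le
        _ = ‖u'‖^2*‖RU‖ + ‖t‖*‖u'‖*‖SU‖ + ‖t‖^2*‖TU‖ := by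
            rw [norm_mul, norm_mul, norm_mul, norm_mul, norm_pow, norm_pow]
        _ ≤ ‖t‖^2 * ((L^2 + L + 1) * B) := by
            have e1 : ‖u'‖^2 ≤ (L*‖t‖)^2 := pow_le_pow_left₀ (norm_nonneg u') hboot 2
            have i1 : ‖u'‖^2 * ‖RU‖ ≤ (L*‖t‖)^2 * B :=
              mul_le_mul e1 hRU (norm_nonneg RU) (by positivity)
            have e2 : ‖t‖*‖u'‖ ≤ ‖t‖*(L*‖t‖) := mul_le_mul_of_nonneg_left hboot (norm_nonneg t)
            have i2 : ‖t‖*‖u'‖*‖SU‖ ≤ ‖t‖*(L*‖t‖)*B :=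
              mul_le_mul e2 hSU (norm_nonneg SU) (by positivity)
            have i3 : ‖t‖^2*‖TU‖ ≤ ‖t‖^2*B := mul_le_mul_of_nonneg_left hTU (sq_nonneg _)
            have e3 : (L*‖t‖)^2*B + ‖t‖*(L*‖t‖)*B + ‖t‖^2*B = ‖t‖^2*((L^2 + L + 1)*B) := by
              ring
            linarith
    have h11 : ‖t‖ * ((L^2 + L + 1) * B) ≤ ε * ‖d‖ := by
      have h12 : ‖t‖ ≤ ε*‖d‖/((L^2 + L + 1)*B) := (lt_of_lt_of_le ht hδ4).le
      calc ‖t‖ * ((L^2 + L + 1) * B) ≤ (ε*‖d‖/((L^2 + L + 1)*B)) * ((L^2 + L + 1) * B) :=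
            mul_le_mul_of_nonneg_right h12 hL1pos.le
        _ = ε * ‖d‖ := by field_simp
    rw [← mul_le_mul_iff_left₀ hdpos, h9]
    calc ‖u'^2*RU + t*u'*SU + t^2*TU‖ ≤ ‖t‖^2 * ((L^2 + L + 1) * B) := h10
      _ = ‖t‖ * (‖t‖ * ((L^2 + L + 1) * B)) := by ring
      _ ≤ ‖t‖ * (ε * ‖d‖) := mul_le_mul_of_nonneg_left h11 (norm_nonneg t)
      _ = ‖t‖ * ε * ‖d‖ := by ring
  -- uniqueness of roots in the ball
  have huniq : ∀ u1 u2 : ℂ, ‖u1‖ ≤ r0 → ‖u2‖ ≤ r0 →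
      (Q.eval (Polynomial.C t)).eval u1 = 0 → (Q.eval (Polynomial.C t)).eval u2 = 0 →
      u1 = u2 := by
    intro u1 u2 h1 h2 hf1 hf2
    have hder : ∀ x ∈ Metric.closedBall (0:ℂ) r0,
        HasDerivWithinAt (fun u => (Q.eval (Polynomial.C t)).eval u - d * u)
          ((Q.eval (Polynomial.C t)).derivative.eval x - d) (Metric.closedBall (0:ℂ) r0) x := by
      intro x _
      have hd1 : HasDerivAt (fun u : ℂ => (Q.eval (Polynomial.C t)).eval u - d * u)
          ((Q.eval (Polynomial.C t)).derivative.eval x - d) x := by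
        have hp := Polynomial.hasDerivAt (Q.eval (Polynomial.C t)) x
        have hl : HasDerivAt (fun u : ℂ => d * u) d x := by
          simpa using (hasDerivAt_id x).const_mul d
        exact hp.sub hl
      exact hd1.hasDerivWithinAt
    have hbound : ∀ x ∈ Metric.closedBall (0:ℂ) r0,
        ‖(Q.eval (Polynomial.C t)).derivative.eval x - d‖ ≤ ‖d‖/2 := by
      intro x hx
      rw [Metric.mem_closedBall, dist_zero_right] at hx
      exact hPhibound t x htphi (le_trans hx hr0lephi)
    have hmvt := (convex_closedBall (0:ℂ) r0).norm_image_sub_le_of_norm_hasDerivWithin_le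
      hder hbound (by simpa [Metric.mem_closedBall, dist_zero_right] using h2)
      (by simpa [Metric.mem_closedBall, dist_zero_right] using h1)
    rw [hf1, hf2] at hmvt
    have h3 : ‖d * (u2 - u1)‖ ≤ ‖d‖/2 * ‖u1 - u2‖ := by
      have e : (0:ℂ) - d * u1 - (0 - d * u2) = d * (u2 - u1) := by ring
      rw [← e]
      exact hmvt
    rw [norm_mul, norm_sub_rev u2 u1] at h3
    have h4 : ‖u1 - u2‖ = 0 := by nlinarith [norm_nonneg (u1 - u2)]
    exact sub_eq_zero.mp (norm_eq_zero.mp h4)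
  -- assemble
  refine ⟨μ, ⟨hμroot, ?_⟩, ?_⟩
  · have hk := hkey (μ - lam) hμu hFμ
    rw [mul_div_assoc, ← hcdef]
    exact hk
  · rintro z ⟨hz, hzb⟩
    rw [mul_div_assoc, ← hcdef] at hzb
    have hzu : ‖z - lam‖ ≤ r0 := by
      have h1 : ‖z - lam‖ ≤ ‖z - lam - t*c‖ + ‖t*c‖ := by
        have h2 := norm_add_le (z - lam - t*c) (t*c)
        rw [sub_add_cancel] at h2
        exact h2
      have h3 : ‖t*c‖ = ‖t‖*‖c‖ := norm_mul _ _
      have hδle : δ ≤ r0/(ε + ‖c‖ + 1) := hδ5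
      have h4 : ‖t‖ * (ε + ‖c‖) ≤ r0 := by
        have h5 : ‖t‖ ≤ r0/(ε + ‖c‖ + 1) := (lt_of_lt_of_le ht hδle).le
        have h6 : (0:ℝ) < ε + ‖c‖ + 1 := by positivity
        rw [div_eq_mul_inv] at h5
        have h7 : ‖t‖ * (ε + ‖c‖) ≤ r0 * (ε + ‖c‖ + 1)⁻¹ * (ε + ‖c‖) :=
          mul_le_mul_of_nonneg_right h5 (by positivity)
        have h8 : r0 * (ε + ‖c‖ + 1)⁻¹ * (ε + ‖c‖) ≤ r0 := by
          rw [mul_assoc]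
          have h9 : (ε + ‖c‖ + 1)⁻¹ * (ε + ‖c‖) ≤ 1 := by
            rw [inv_mul_le_iff₀ h6]
            linarith
          nlinarith [hr0pos.le]
        linarith
      calc ‖z - lam‖ ≤ ‖z - lam - t*c‖ + ‖t‖*‖c‖ := by rw [← h3]; exact h1
        _ ≤ ‖t‖ * ε + ‖t‖*‖c‖ := by linarith [hzb]
        _ = ‖t‖ * (ε + ‖c‖) := by ring
        _ ≤ r0 := h4
    have hFz : (Q.eval (Polynomial.C t)).eval (z - lam) = 0 := by rw [hF t z]; exact hz
    exact sub_left_inj.mp (huniq (z - lam) (μ - lam) hzu hμu hFz hFμ)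
end
end

section
/- Under Assumption 2 and one DGT step with stepsize 0 < α ≤ 1/L₁, the iterates satisfy ‖x_{k+1} − x*‖ ≤ (1 − μα)‖x_k − x*‖ + αL₁‖σ_k − 𝒥σ_k‖ + αL₃‖y_k − 𝒥y_k‖. -/
noncomputable section
open scoped BigOperators

/-- The stacked decision space `ℝⁿ = ℝ^{n₁} × ⋯ × ℝ^{n_N}` with the stacked Euclidean norm
`‖x‖² = Σᵢ ‖xᵢ‖²`. -/
abbrev StackedX (N : ℕ) (nn : Fin N → ℕ) :=
  PiLp 2 (fun i => EuclideanSpace ℝ (Fin (nn i)))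

/-- The stacked aggregate space `ℝ^{Nd}` with the stacked Euclidean norm. -/
abbrev StackedY (N d : ℕ) := PiLp 2 (fun _ : Fin N => EuclideanSpace ℝ (Fin d))

/-- The averaging operator `𝒥 z = 1_N ⊗ ((1/N) Σᵢ zᵢ)`. -/
def Jmap {N d : ℕ} (z : StackedY N d) : StackedY N d :=
  WithLp.toLp 2 (fun _ => (N : ℝ)⁻¹ • ∑ j, z j)

/-- The stacked map `(x,y) ↦ ∇₁f(x,y) + ∇φ(x)(1_N ⊗ (1/N)Σᵢ ∇₂fᵢ(xᵢ,yᵢ))`, where `∇φᵢ(xᵢ)`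
acts as the adjoint (transposed Jacobian) of the derivative of `φᵢ`. -/
def combinedGrad {N d : ℕ} {nn : Fin N → ℕ}
    (φ : ∀ i, EuclideanSpace ℝ (Fin (nn i)) → EuclideanSpace ℝ (Fin d))
    (g1 : ∀ i, EuclideanSpace ℝ (Fin (nn i)) → EuclideanSpace ℝ (Fin d) →
      EuclideanSpace ℝ (Fin (nn i)))
    (g2 : ∀ i, EuclideanSpace ℝ (Fin (nn i)) → EuclideanSpace ℝ (Fin d) →
      EuclideanSpace ℝ (Fin d))
    (x : StackedX N nn) (y : StackedY N d) : StackedX N nn :=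
  WithLp.toLp 2 (fun i => g1 i (x i) (y i) +
    ContinuousLinearMap.adjoint (fderiv ℝ (φ i) (x i)) ((N : ℝ)⁻¹ • ∑ j, g2 j (x j) (y j)))

/-- The stacked map `(x,y) ↦ ∇₂f(x,y) = col(∇₂f₁(x₁,y₁),…,∇₂f_N(x_N,y_N))`. -/
def stackedGrad2 {N d : ℕ} {nn : Fin N → ℕ}
    (g2 : ∀ i, EuclideanSpace ℝ (Fin (nn i)) → EuclideanSpace ℝ (Fin d) →
      EuclideanSpace ℝ (Fin d))
    (x : StackedX N nn) (y : StackedY N d) : StackedY N d :=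
  WithLp.toLp 2 (fun i => g2 i (x i) (y i))

local notation "⟪" x ", " y "⟫" => @inner ℝ _ _ x y

section AuxLemmas

variable {H : Type*} [NormedAddCommGroup H] [InnerProductSpace ℝ H] [CompleteSpace H]

lemma dgt_grad_inner_eq (F : H → ℝ) (x v : H) : ⟪gradient F x, v⟫ = fderiv ℝ F x v :=
  InnerProductSpace.toDual_symm_apply

lemma sq_norm_identity (μ : ℝ) (a b : H) :
    μ/2*‖a-b‖^2 = μ/2*‖a‖^2 - μ/2*‖b‖^2 - μ*⟪b, a-b⟫ := by
  have h1 : ‖a - b‖^2 = ‖a‖^2 - 2*⟪a,b⟫ + ‖b‖^2 := norm_sub_sq_real a b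
  have h2 : ⟪b, a - b⟫ = ⟪a,b⟫ - ‖b‖^2 := by
    rw [inner_sub_right, real_inner_comm b a, real_inner_self_eq_norm_sq]
  rw [h1, h2]; ring

lemma descent_lemma (F : H → ℝ) (hd : Differentiable ℝ F) (L : ℝ) (hL : 0 ≤ L)
    (hsm : ∀ x y : H, ‖gradient F x - gradient F y‖ ≤ L * ‖x - y‖) (a b : H) :
    F a ≤ F b + ⟪gradient F b, a - b⟫ + L / 2 * ‖a - b‖ ^ 2 := by
  set w := a - b with hw
  set ψ : ℝ → ℝ := fun t => F (b + t • w) - t * ⟪gradient F b, w⟫ - L/2 * t^2 * ‖w‖^2 with hψ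
  have hline : ∀ t : ℝ, HasDerivAt (fun t : ℝ => b + t • w) w t := by
    intro t
    simpa using ((hasDerivAt_id t).smul_const w).const_add b
  have hF' : ∀ t : ℝ, HasDerivAt (fun t => F (b + t • w)) ⟪gradient F (b + t • w), w⟫ t := by
    intro t
    have h1 := ((hd (b + t • w)).hasFDerivAt).comp_hasDerivAt t (hline t)
    rw [dgt_grad_inner_eq]; exact h1
  have hψ' : ∀ t : ℝ, HasDerivAt ψ
      (⟪gradient F (b + t • w), w⟫ - ⟪gradient F b, w⟫ - L * t * ‖w‖^2) t := by
    intro t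
    have h2 : HasDerivAt (fun t : ℝ => t * ⟪gradient F b, w⟫) ⟪gradient F b, w⟫ t := by
      simpa using (hasDerivAt_id t).mul_const ⟪gradient F b, w⟫
    have h3 : HasDerivAt (fun t : ℝ => L/2 * t^2 * ‖w‖^2) (L * t * ‖w‖^2) t := by
      have := ((hasDerivAt_pow 2 t).const_mul (L/2)).mul_const (‖w‖^2)
      convert this using 1
      · rfl
      · rfl
      · push_cast; ring
    exact ((hF' t).sub h2).sub h3
  have hanti : AntitoneOn ψ (Set.Icc 0 1) := by
    apply antitoneOn_of_deriv_nonpos (convex_Icc 0 1)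
    · exact Continuous.continuousOn (by
        have : Continuous ψ := by
          have : Differentiable ℝ ψ := fun t => (hψ' t).differentiableAt
          exact this.continuous
        exact this)
    · intro t _
      exact (hψ' t).differentiableAt.differentiableWithinAt
    · intro t ht
      rw [interior_Icc] at ht
      rw [(hψ' t).deriv]
      have hb : ‖gradient F (b + t • w) - gradient F b‖ ≤ L * (t * ‖w‖) := by
        have := hsm (b + t • w) b
        simpa [norm_smul, abs_of_nonneg (le_of_lt ht.1)] using this
      have hcs : ⟪gradient F (b + t • w) - gradient F b, w⟫ ≤ L * t * ‖w‖^2 := by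
        have h6 := real_inner_le_norm (gradient F (b + t • w) - gradient F b) w
        nlinarith [mul_le_mul_of_nonneg_right hb (norm_nonneg w)]
      have : ⟪gradient F (b + t • w), w⟫ - ⟪gradient F b, w⟫ ≤ L * t * ‖w‖^2 := by
        rw [← inner_sub_left]; exact hcs
      linarith
  have h01 : ψ 1 ≤ ψ 0 := hanti (by norm_num) (by norm_num) (by norm_num)
  have e1 : ψ 1 = F a - ⟪gradient F b, w⟫ - L/2 * ‖w‖^2 := by
    simp [hψ, hw]
  have e0 : ψ 0 = F b := by simp [hψ]
  rw [e1, e0] at h01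
  linarith

lemma coco_lemma (hh : H → ℝ) (h' : H → H) (C : ℝ)
    (hconv : ∀ a b : H, hh b + ⟪h' b, a - b⟫ ≤ hh a)
    (hdesc : ∀ a b : H, hh a ≤ hh b + ⟪h' b, a - b⟫ + C/2 * ‖a - b‖^2)
    (x y : H) (t : ℝ) (ht : 0 ≤ t) :
    (2*t - C*t^2) * ‖h' x - h' y‖^2 ≤ ⟪h' x - h' y, x - y⟫ := by
  set u := h' x - h' y with hu
  have huu : ⟪h' x, u⟫ - ⟪h' y, u⟫ = ‖u‖^2 := by
    rw [← inner_sub_left, ← hu, real_inner_self_eq_norm_sq]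
  have h1 := hconv (y + t • u) x
  have h2 := hdesc (y + t • u) y
  have h3 := hconv (x - t • u) y
  have h4 := hdesc (x - t • u) x
  have e1 : ⟪h' x, (y + t • u) - x⟫ = ⟪h' x, y - x⟫ + t * ⟪h' x, u⟫ := by
    rw [add_sub_right_comm, inner_add_right, inner_smul_right]
  have e2 : ⟪h' y, (y + t • u) - y⟫ = t * ⟪h' y, u⟫ := by
    rw [add_sub_cancel_left, inner_smul_right]
  have e2n : ‖(y + t • u) - y‖^2 = t^2 * ‖u‖^2 := by
    rw [add_sub_cancel_left, norm_smul, Real.norm_eq_abs, abs_of_nonneg ht, mul_pow]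
  have e3 : ⟪h' y, (x - t • u) - y⟫ = ⟪h' y, x - y⟫ - t * ⟪h' y, u⟫ := by
    rw [sub_right_comm, inner_sub_right, inner_smul_right]
  have e4 : ⟪h' x, (x - t • u) - x⟫ = - (t * ⟪h' x, u⟫) := by
    rw [sub_sub_cancel_left, inner_neg_right, inner_smul_right]
  have e4n : ‖(x - t • u) - x‖^2 = t^2 * ‖u‖^2 := by
    rw [sub_sub_cancel_left, norm_neg, norm_smul, Real.norm_eq_abs, abs_of_nonneg ht, mul_pow]
  have exy : ⟪u, x - y⟫ = ⟪h' x, x - y⟫ - ⟪h' y, x - y⟫ := inner_sub_left _ _ _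
  have exy2 : ⟪h' x, y - x⟫ = - ⟪h' x, x - y⟫ := by
    rw [← inner_neg_right, neg_sub]
  rw [e1, exy2] at h1
  rw [e2, e2n] at h2
  rw [e3] at h3
  rw [e4, e4n] at h4
  rw [exy]
  have h5 : t * ⟪h' x, u⟫ - t * ⟪h' y, u⟫ = t * ‖u‖^2 := by rw [← mul_sub, huu]
  nlinarith [le_trans h1 h2, le_trans h3 h4, h5]

lemma le_of_sq_le_sq' {a b : ℝ} (ha : 0 ≤ a) (hb : 0 ≤ b) (h : a^2 ≤ b^2) : a ≤ b := by
  nlinarith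

lemma gd_contract (F : H → ℝ) (hd : Differentiable ℝ F) (μ L α : ℝ)
    (hμ : 0 < μ) (hμL : μ ≤ L)
    (hsc : ∀ x y : H, F x ≥ F y + ⟪gradient F y, x - y⟫ + μ / 2 * ‖x - y‖ ^ 2)
    (hsm : ∀ x y : H, ‖gradient F x - gradient F y‖ ≤ L * ‖x - y‖)
    (xstar : H) (hstar : gradient F xstar = 0)
    (hα0 : 0 < α) (hαL : α * L ≤ 1) (x : H) :
    ‖x - α • gradient F x - xstar‖ ≤ (1 - μ * α) * ‖x - xstar‖ := by
  have hL : 0 < L := lt_of_lt_of_le hμ hμL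
  set C := L - μ with hCdef
  have hC : 0 ≤ C := sub_nonneg.2 hμL
  set hh : H → ℝ := fun z => F z - μ/2 * ‖z‖^2 with hhdef
  set h' : H → H := fun z => gradient F z - μ • z with h'def
  have hconv : ∀ a b : H, hh b + ⟪h' b, a - b⟫ ≤ hh a := by
    intro a b
    have h1 := hsc a b
    have key : ⟪gradient F b - μ • b, a - b⟫
        = ⟪gradient F b, a - b⟫ - μ * ⟪b, a - b⟫ := by
      rw [inner_sub_left, real_inner_smul_left]
    have id1 := sq_norm_identity μ a b
    simp only [hhdef, h'def]
    rw [key]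
    linarith
  have hdesc : ∀ a b : H, hh a ≤ hh b + ⟪h' b, a - b⟫ + C/2 * ‖a - b‖^2 := by
    intro a b
    have h1 := descent_lemma F hd L hL.le hsm a b
    have key : ⟪gradient F b - μ • b, a - b⟫
        = ⟪gradient F b, a - b⟫ - μ * ⟪b, a - b⟫ := by
      rw [inner_sub_left, real_inner_smul_left]
    have id1 := sq_norm_identity μ a b
    simp only [hhdef, h'def, hCdef]
    rw [key]
    linarith
  set Δ : H := x - xstar with hΔdef
  set g : H := gradient F x with hgdef
  set u : H := g - μ • Δ with hudef
  have hβ : 0 ≤ 1 - μ * α := by nlinarith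
  have hu' : h' x - h' xstar = u := by
    simp only [h'def, hudef, hgdef, hΔdef, hstar]
    module
  have key : ∀ t : ℝ, 0 ≤ t → (2*t - C*t^2) * ‖u‖^2 ≤ ⟪u, Δ⟫ := by
    intro t ht
    have h := coco_lemma hh h' C hconv hdesc x xstar t ht
    rwa [hu'] at h
  have hrw : x - α • gradient F x - xstar = (1 - μ * α) • Δ - α • u := by
    simp only [hudef, hgdef, hΔdef]
    module
  rw [hrw]
  by_cases hu0 : u = 0
  · rw [hu0, smul_zero, sub_zero, norm_smul, Real.norm_eq_abs, abs_of_nonneg hβ]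
  · have hun : 0 < ‖u‖ := norm_pos_iff.2 hu0
    have hCpos : 0 < C := by
      rcases lt_or_eq_of_le hC with h | h
      · exact h
      · exfalso
        set t0 : ℝ := (‖Δ‖ + 1) / ‖u‖ with ht0def
        have ht0 : 0 ≤ t0 := by positivity
        have hk := key t0 ht0
        have hcs := real_inner_le_norm u Δ
        have ht0u : t0 * ‖u‖ = ‖Δ‖ + 1 := by
          rw [ht0def, div_mul_cancel₀ _ hun.ne']
        rw [← h] at hk
        nlinarith [norm_nonneg Δ, sq_nonneg ‖u‖]
    have hk2 : ‖u‖^2 ≤ C * ⟪u, Δ⟫ := by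
      have h := key (1/C) (by positivity)
      have e : (2*(1/C) - C*(1/C)^2) = 1/C := by
        field_simp
        ring
      rw [e] at h
      calc ‖u‖^2 = C * ((1/C) * ‖u‖^2) := by field_simp
        _ ≤ C * ⟪u, Δ⟫ := mul_le_mul_of_nonneg_left h hCpos.le
    have hiΔ : 0 ≤ ⟪u, Δ⟫ := by
      by_contra hneg
      push_neg at hneg
      nlinarith [sq_nonneg ‖u‖]
    have h2βC : α * C ≤ 2 * (1 - μ * α) := by nlinarith
    have hcore : α^2 * ‖u‖^2 ≤ 2 * (1 - μ * α) * α * ⟪u, Δ⟫ := by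
      nlinarith [mul_le_mul_of_nonneg_left hk2 (sq_nonneg α),
        mul_nonneg (mul_nonneg (sub_nonneg.2 h2βC) hα0.le) hiΔ]
    have hnorm : ‖(1 - μ * α) • Δ - α • u‖^2
        = (1 - μ*α)^2 * ‖Δ‖^2 - 2*((1 - μ*α)*α) * ⟪u, Δ⟫ + α^2 * ‖u‖^2 := by
      rw [norm_sub_sq_real, norm_smul, norm_smul, real_inner_smul_left, real_inner_smul_right,
        Real.norm_eq_abs, Real.norm_eq_abs, abs_of_nonneg hβ, abs_of_nonneg hα0.le,
        mul_pow, mul_pow, real_inner_comm Δ u]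
      ring
    have hsq : ‖(1 - μ * α) • Δ - α • u‖^2 ≤ ((1 - μ*α) * ‖Δ‖)^2 := by
      rw [hnorm]
      have e2 : ((1 - μ*α) * ‖Δ‖)^2 = (1 - μ*α)^2 * ‖Δ‖^2 := by ring
      rw [e2]
      linarith [hcore]
    exact le_of_sq_le_sq' (norm_nonneg _) (mul_nonneg hβ (norm_nonneg Δ)) hsq


end AuxLemmas

lemma dgt_gradF_eq {N d : ℕ} {nn : Fin N → ℕ}
    (φ : ∀ i, EuclideanSpace ℝ (Fin (nn i)) → EuclideanSpace ℝ (Fin d))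
    (f : ∀ i, EuclideanSpace ℝ (Fin (nn i)) → EuclideanSpace ℝ (Fin d) → ℝ)
    (hφdiff : ∀ i, Differentiable ℝ (φ i))
    (hfdiff : ∀ i, Differentiable ℝ
      (fun p : EuclideanSpace ℝ (Fin (nn i)) × EuclideanSpace ℝ (Fin d) => f i p.1 p.2))
    (g1 : ∀ i, EuclideanSpace ℝ (Fin (nn i)) → EuclideanSpace ℝ (Fin d) →
      EuclideanSpace ℝ (Fin (nn i)))
    (g2 : ∀ i, EuclideanSpace ℝ (Fin (nn i)) → EuclideanSpace ℝ (Fin d) →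
      EuclideanSpace ℝ (Fin d))
    (hg1 : ∀ i u s, g1 i u s = gradient (fun z => f i z s) u)
    (hg2 : ∀ i u s, g2 i u s = gradient (f i u) s)
    (x : StackedX N nn) :
    gradient (fun x : StackedX N nn => ∑ i, f i (x i) ((N : ℝ)⁻¹ • ∑ j, φ j (x j))) x
      = combinedGrad φ g1 g2 x (WithLp.toLp 2 (fun _ => (N : ℝ)⁻¹ • ∑ j, φ j (x j))) := by
  classical
  let E := fun i => EuclideanSpace ℝ (Fin (nn i))
  let Y := EuclideanSpace ℝ (Fin d)
  set s : Y := (N : ℝ)⁻¹ • ∑ j, φ j (x j) with hs_def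
  set Dφ : ∀ j, E j →L[ℝ] Y := fun j => fderiv ℝ (φ j) (x j) with hDφ
  set pr : ∀ i, StackedX N nn →L[ℝ] E i := fun i => PiLp.proj 2 _ i with hpr
  set Ds : StackedX N nn →L[ℝ] Y := (N : ℝ)⁻¹ • ∑ j, (Dφ j).comp (pr j) with hDs
  have hs : HasFDerivAt (fun x : StackedX N nn => (N : ℝ)⁻¹ • ∑ j, φ j (x j)) Ds x := by
    have h1 : ∀ j, HasFDerivAt (fun x : StackedX N nn => φ j (x j)) ((Dφ j).comp (pr j)) x :=
      fun j => HasFDerivAt.comp (𝕜 := ℝ) x ((hφdiff j (x j)).hasFDerivAt) (pr j).hasFDerivAt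
    exact (HasFDerivAt.fun_sum (fun j _ => h1 j)).fun_const_smul ((N : ℝ)⁻¹)
  have hti : ∀ i, HasFDerivAt (fun x : StackedX N nn => f i (x i) ((N : ℝ)⁻¹ • ∑ j, φ j (x j)))
      ((fderiv ℝ (fun p : E i × Y => f i p.1 p.2) (x i, s)).comp ((pr i).prod Ds)) x := by
    intro i
    have hp : HasFDerivAt (fun x : StackedX N nn =>
        ((x i, (N : ℝ)⁻¹ • ∑ j, φ j (x j)) : E i × Y)) ((pr i).prod Ds) x :=
      (pr i).hasFDerivAt.prodMk hs
    exact ((hfdiff i (x i, s)).hasFDerivAt).comp x hp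
  have hT : HasFDerivAt (fun x : StackedX N nn => ∑ i, f i (x i) ((N : ℝ)⁻¹ • ∑ j, φ j (x j)))
      (∑ i, (fderiv ℝ (fun p : E i × Y => f i p.1 p.2) (x i, s)).comp ((pr i).prod Ds)) x :=
    HasFDerivAt.fun_sum (fun i _ => hti i)
  have hpart : ∀ i (a : E i) (b : Y), fderiv ℝ (fun p : E i × Y => f i p.1 p.2) (x i, s) (a, b)
      = ⟪g1 i (x i) s, a⟫ + ⟪g2 i (x i) s, b⟫ := by
    intro i a b
    set D := fderiv ℝ (fun p : E i × Y => f i p.1 p.2) (x i, s) with hD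
    have hA : HasFDerivAt (fun z : E i => f i z s)
        (D.comp (ContinuousLinearMap.inl ℝ (E i) Y)) (x i) :=
      by have := ((hfdiff i (x i, s)).hasFDerivAt).comp (x i) (hasFDerivAt_prodMk_left (𝕜 := ℝ) (x i) s); exact this
    have hB : HasFDerivAt (fun w : Y => f i (x i) w)
        (D.comp (ContinuousLinearMap.inr ℝ (E i) Y)) s :=
      ((hfdiff i (x i, s)).hasFDerivAt).comp s (hasFDerivAt_prodMk_right (𝕜 := ℝ) (x i) s)
    have e1 : ⟪g1 i (x i) s, a⟫ = D (a, 0) := by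
      rw [hg1, dgt_grad_inner_eq, hA.fderiv]
      rfl
    have e2 : ⟪g2 i (x i) s, b⟫ = D (0, b) := by
      rw [hg2, dgt_grad_inner_eq, hB.fderiv]
      rfl
    have e3 : ((a, b) : E i × Y) = (a, 0) + (0, b) := by simp
    rw [e1, e2, e3, map_add]
  apply ext_inner_right ℝ
  intro v
  rw [dgt_grad_inner_eq, hT.fderiv, ContinuousLinearMap.sum_apply]
  have hDsv : ∀ v : StackedX N nn, Ds v = (N : ℝ)⁻¹ • ∑ j, Dφ j (v j) := by
    intro v
    simp [hDs, hpr, ContinuousLinearMap.sum_apply, PiLp.proj_apply]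
  have lhs_eq : ∑ i, ((fderiv ℝ (fun p : E i × Y => f i p.1 p.2) (x i, s)).comp
      ((pr i).prod Ds)) v
      = ∑ i, (⟪g1 i (x i) s, v i⟫ + ⟪g2 i (x i) s, (N : ℝ)⁻¹ • ∑ j, Dφ j (v j)⟫) := by
    refine Finset.sum_congr rfl (fun i _ => ?_)
    rw [ContinuousLinearMap.comp_apply, ContinuousLinearMap.prod_apply, ← hDsv v]
    exact hpart i (pr i v) (Ds v)
  rw [lhs_eq]
  have rhs_eq : ⟪combinedGrad φ g1 g2 x (WithLp.toLp 2 (fun _ => s)), v⟫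
      = ∑ i, (⟪g1 i (x i) s, v i⟫ + ⟪(N : ℝ)⁻¹ • ∑ j, g2 j (x j) s, Dφ i (v i)⟫) := by
    rw [PiLp.inner_apply]
    refine Finset.sum_congr rfl (fun i _ => ?_)
    rw [combinedGrad]
    rw [inner_add_left, ContinuousLinearMap.adjoint_inner_left]
  rw [rhs_eq, Finset.sum_add_distrib, Finset.sum_add_distrib]
  congr 1
  have l1 : ∀ i, ⟪g2 i (x i) s, (N : ℝ)⁻¹ • ∑ j, Dφ j (v j)⟫
      = ∑ j, (N : ℝ)⁻¹ * ⟪g2 i (x i) s, Dφ j (v j)⟫ := by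
    intro i
    rw [real_inner_smul_right, inner_sum, Finset.mul_sum]
  have l2 : ∀ i, ⟪(N : ℝ)⁻¹ • ∑ j, g2 j (x j) s, Dφ i (v i)⟫
      = ∑ j, (N : ℝ)⁻¹ * ⟪g2 j (x j) s, Dφ i (v i)⟫ := by
    intro i
    rw [real_inner_smul_left, sum_inner, Finset.mul_sum]
  simp_rw [l1, l2]
  exact Finset.sum_comm


set_option maxHeartbeats 1000000 in
/-- Under Assumption 2 and one DGT step with stepsize `0 < α ≤ 1/L₁`,
`‖x_{k+1} - x*‖ ≤ (1 - μα)‖x_k - x*‖ + αL₁‖σ_k - 𝒥σ_k‖ + αL₃‖y_k - 𝒥y_k‖`. -/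
theorem dgt_onestep_optimality_gap (N d : ℕ) (hN : 0 < N) (nn : Fin N → ℕ)
    (φ : ∀ i, EuclideanSpace ℝ (Fin (nn i)) → EuclideanSpace ℝ (Fin d))
    (f : ∀ i, EuclideanSpace ℝ (Fin (nn i)) → EuclideanSpace ℝ (Fin d) → ℝ)
    (hφdiff : ∀ i, Differentiable ℝ (φ i))
    (hfdiff : ∀ i, Differentiable ℝ
      (fun p : EuclideanSpace ℝ (Fin (nn i)) × EuclideanSpace ℝ (Fin d) => f i p.1 p.2))
    -- the partial gradients ∇₁fᵢ and ∇₂fᵢ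
    (g1 : ∀ i, EuclideanSpace ℝ (Fin (nn i)) → EuclideanSpace ℝ (Fin d) →
      EuclideanSpace ℝ (Fin (nn i)))
    (g2 : ∀ i, EuclideanSpace ℝ (Fin (nn i)) → EuclideanSpace ℝ (Fin d) →
      EuclideanSpace ℝ (Fin d))
    (hg1 : ∀ i u s, g1 i u s = gradient (fun z => f i z s) u)
    (hg2 : ∀ i u s, g2 i u s = gradient (f i u) s)
    -- the global objective f(x) = Σᵢ fᵢ(xᵢ, σ(x)) with σ(x) = (1/N)Σᵢ φᵢ(xᵢ)
    (F : StackedX N nn → ℝ)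
    (hF : ∀ x : StackedX N nn, F x = ∑ i, f i (x i) ((N : ℝ)⁻¹ • ∑ j, φ j (x j)))
    -- Assumption 2
    (μ L₁ L₂ L₃ : ℝ) (hμ : 0 < μ) (hL₁ : 0 < L₁) (hL₂ : 0 < L₂) (hL₃ : 0 < L₃)
    (hFdiff : Differentiable ℝ F)
    (hsc : ∀ x y : StackedX N nn,
      F x ≥ F y + (inner ℝ (gradient F y) (x - y) : ℝ) + μ / 2 * ‖x - y‖ ^ 2)
    (hsmooth : ∀ x y : StackedX N nn, ‖gradient F x - gradient F y‖ ≤ L₁ * ‖x - y‖)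
    (hGlip : ∀ (x x' : StackedX N nn) (y y' : StackedY N d),
      ‖combinedGrad φ g1 g2 x y - combinedGrad φ g1 g2 x' y'‖ ≤ L₁ * (‖x - x'‖ + ‖y - y'‖))
    (hG2lip : ∀ (x x' : StackedX N nn) (y y' : StackedY N d),
      ‖stackedGrad2 g2 x y - stackedGrad2 g2 x' y'‖ ≤ L₂ * (‖x - x'‖ + ‖y - y'‖))
    (hφbound : ∀ (i : Fin N) (xi : EuclideanSpace ℝ (Fin (nn i))), ‖fderiv ℝ (φ i) xi‖ ≤ L₃)
    -- the weight matrix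
    (A : Matrix (Fin N) (Fin N) ℝ)
    (hA0 : ∀ i j, 0 ≤ A i j)
    (hrow : ∀ i, ∑ j, A i j = 1) (hcol : ∀ j, ∑ i, A i j = 1)
    -- the minimizer of F
    (xstar : StackedX N nn) (hmin : ∀ z, F xstar ≤ F z)
    -- one DGT step
    (α : ℝ) (hα0 : 0 < α) (hα1 : α ≤ 1 / L₁)
    (xk xk1 : StackedX N nn) (σk σk1 yk yk1 : StackedY N d)
    (htrackσ : (N : ℝ)⁻¹ • ∑ i, σk i = (N : ℝ)⁻¹ • ∑ i, φ i (xk i))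
    (htracky : (N : ℝ)⁻¹ • ∑ i, yk i = (N : ℝ)⁻¹ • ∑ i, g2 i (xk i) (σk i))
    (hxup : ∀ i, xk1 i = xk i - α • (g1 i (xk i) (σk i) +
      ContinuousLinearMap.adjoint (fderiv ℝ (φ i) (xk i)) (yk i)))
    (hσup : ∀ i, σk1 i = ∑ j, A i j • σk j + φ i (xk1 i) - φ i (xk i))
    (hyup : ∀ i, yk1 i = ∑ j, A i j • yk j + g2 i (xk1 i) (σk1 i) - g2 i (xk i) (σk i)) :
    ‖xk1 - xstar‖ ≤ (1 - μ * α) * ‖xk - xstar‖ + α * L₁ * ‖σk - Jmap σk‖ + α * L₃ * ‖yk - Jmap yk‖ := by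
  -- trivial space case
  by_cases htriv : ∀ z : StackedX N nn, z = 0
  · have h1 : xk1 - xstar = 0 := by rw [htriv xk1, htriv xstar, sub_zero]
    have h2 : xk - xstar = 0 := by rw [htriv xk, htriv xstar, sub_zero]
    have hn1 : ‖xk1 - xstar‖ = (0:ℝ) := by rw [h1]; exact norm_zero
    have hn2 : ‖xk - xstar‖ = (0:ℝ) := by rw [h2]; exact norm_zero
    rw [hn1, hn2, mul_zero]
    positivity
  push_neg at htriv
  obtain ⟨v, hv⟩ := htriv
  have hvn : 0 < ‖v‖ := norm_pos_iff.2 hv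
  -- μ ≤ L₁
  have hμL : μ ≤ L₁ := by
    have h1 := hsc (xstar + v) xstar
    have h2 := hsc xstar (xstar + v)
    rw [add_sub_cancel_left] at h1
    rw [sub_add_cancel_left, inner_neg_right, norm_neg] at h2
    have h3 : μ * ‖v‖^2 ≤ ⟪gradient F (xstar + v) - gradient F xstar, v⟫ := by
      rw [inner_sub_left]
      linarith
    have h4 := real_inner_le_norm (gradient F (xstar + v) - gradient F xstar) v
    have h5 := hsmooth (xstar + v) xstar
    rw [add_sub_cancel_left] at h5
    nlinarith [mul_le_mul_of_nonneg_right h5 (norm_nonneg v), mul_pos hvn hvn, sq_nonneg ‖v‖]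
  -- gradient vanishes at the minimizer
  have hgradzero : gradient F xstar = 0 := by
    have hloc : IsLocalMin F xstar := Filter.Eventually.of_forall hmin
    have hf0 : fderiv ℝ F xstar = 0 := hloc.fderiv_eq_zero
    simp [gradient, hf0]
  -- identify the gradient of F via the chain rule
  have hJσ : Jmap σk = (WithLp.toLp 2 (fun _ => (N : ℝ)⁻¹ • ∑ j, φ j (xk j)) : StackedY N d) := by
    ext i : 1
    simp only [Jmap]
    rw [htrackσ]
  have hgradF : gradient F xk = combinedGrad φ g1 g2 xk (Jmap σk) := by
    rw [hJσ, show F = (fun x : StackedX N nn =>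
      ∑ i, f i (x i) ((N : ℝ)⁻¹ • ∑ j, φ j (x j))) from funext hF]
    exact dgt_gradF_eq φ f hφdiff hfdiff g1 g2 hg1 hg2 xk
  set w : StackedY N d := yk - Jmap yk with hwdef
  set Ead : StackedX N nn :=
    WithLp.toLp 2 (fun i => ContinuousLinearMap.adjoint (fderiv ℝ (φ i) (xk i)) (w i)) with hEdef
  set G : StackedX N nn := gradient F xk with hGdef
  set C1 : StackedX N nn := combinedGrad φ g1 g2 xk σk with hC1def
  -- the one-step decomposition
  have hdecomp : xk1 - xstar = (xk - α • G - xstar) - α • (C1 - G) - α • Ead := by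
    ext i : 1
    have hJy : (Jmap yk) i = (N : ℝ)⁻¹ • ∑ j, g2 j (xk j) (σk j) := by
      simp only [Jmap]
      rw [htracky]
    have hEi : Ead i = ContinuousLinearMap.adjoint (fderiv ℝ (φ i) (xk i)) (yk i)
        - ContinuousLinearMap.adjoint (fderiv ℝ (φ i) (xk i))
          ((N : ℝ)⁻¹ • ∑ j, g2 j (xk j) (σk j)) := by
      simp only [hEdef, hwdef]
      rw [show (yk - Jmap yk) i = yk i - (Jmap yk) i from rfl, hJy, map_sub]
    have hC1i : C1 i = g1 i (xk i) (σk i)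
        + ContinuousLinearMap.adjoint (fderiv ℝ (φ i) (xk i))
          ((N : ℝ)⁻¹ • ∑ j, g2 j (xk j) (σk j)) := rfl
    have lhs : (xk1 - xstar) i = xk i - α • (g1 i (xk i) (σk i) +
        ContinuousLinearMap.adjoint (fderiv ℝ (φ i) (xk i)) (yk i)) - xstar i := by
      rw [show (xk1 - xstar) i = xk1 i - xstar i from rfl, hxup i]
    have rhs : ((xk - α • G - xstar) - α • (C1 - G) - α • Ead) i
        = xk i - α • G i - xstar i - α • (C1 i - G i) - α • Ead i := rfl
    rw [lhs, rhs, hEi, hC1i]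
    module
  -- bound each term
  have hαL : α * L₁ ≤ 1 := (le_div_iff₀ hL₁).mp hα1
  have hb1 : ‖xk - α • G - xstar‖ ≤ (1 - μ * α) * ‖xk - xstar‖ := by
    exact gd_contract F hFdiff μ L₁ α hμ hμL hsc hsmooth xstar hgradzero hα0 hαL xk
  have hb2 : ‖C1 - G‖ ≤ L₁ * ‖σk - Jmap σk‖ := by
    rw [hC1def, hgradF]
    have h := hGlip xk xk σk (Jmap σk)
    simpa using h
  have hb3 : ‖Ead‖ ≤ L₃ * ‖w‖ := by
    have hsq : ‖Ead‖^2 ≤ (L₃ * ‖w‖)^2 := by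
      rw [PiLp.norm_sq_eq_of_L2 _ Ead]
      calc ∑ i, ‖Ead i‖^2 ≤ ∑ i, (L₃ * ‖w i‖)^2 := by
            refine Finset.sum_le_sum (fun i _ => ?_)
            have h1 : ‖Ead i‖ ≤ L₃ * ‖w i‖ := by
              have h2 := (ContinuousLinearMap.adjoint (fderiv ℝ (φ i) (xk i))).le_opNorm (w i)
              have h3 : ‖ContinuousLinearMap.adjoint (fderiv ℝ (φ i) (xk i))‖
                  = ‖fderiv ℝ (φ i) (xk i)‖ :=
                LinearIsometryEquiv.norm_map ContinuousLinearMap.adjoint (fderiv ℝ (φ i) (xk i))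
              have h4 := hφbound i (xk i)
              have h5 := norm_nonneg (w i)
              refine h2.trans ?_
              rw [h3]
              exact mul_le_mul_of_nonneg_right h4 h5
            exact pow_le_pow_left₀ (norm_nonneg _) h1 2
        _ = (L₃ * ‖w‖)^2 := by
            have h6 : ‖w‖^2 = ∑ i, ‖w i‖^2 := PiLp.norm_sq_eq_of_L2 _ w
            simp only [mul_pow]
            rw [← Finset.mul_sum, ← h6]
    exact le_of_sq_le_sq' (norm_nonneg _) (mul_nonneg hL₃.le (norm_nonneg _)) hsq
  -- combine
  calc ‖xk1 - xstar‖ = ‖(xk - α • G - xstar) - α • (C1 - G) - α • Ead‖ := by rw [hdecomp]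
    _ ≤ ‖(xk - α • G - xstar) - α • (C1 - G)‖ + ‖α • Ead‖ := norm_sub_le _ _
    _ ≤ ‖xk - α • G - xstar‖ + ‖α • (C1 - G)‖ + ‖α • Ead‖ := by
        have := norm_sub_le (xk - α • G - xstar) (α • (C1 - G))
        linarith
    _ ≤ (1 - μ * α) * ‖xk - xstar‖ + α * L₁ * ‖σk - Jmap σk‖ + α * L₃ * ‖yk - Jmap yk‖ := by
        rw [norm_smul, norm_smul, Real.norm_eq_abs, abs_of_nonneg hα0.le]
        have h7 : α * ‖C1 - G‖ ≤ α * (L₁ * ‖σk - Jmap σk‖) :=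
          mul_le_mul_of_nonneg_left hb2 hα0.le
        have h8 : α * ‖Ead‖ ≤ α * (L₃ * ‖w‖) := mul_le_mul_of_nonneg_left hb3 hα0.le
        rw [hwdef] at h8
        linarith
end
end

section
/- Suppose each φ_i is differentiable with ‖∇φ_i(x_i)‖ ≤ L₃ (operator norm) for all x_i and i, A is nonnegative doubly stochastic with ρ := ‖A − J‖, and for any x_k, x_{k+1} ∈ ℝ^n and σ_k ∈ ℝ^{Nd} set σ_{i,k+1} := Σ_{j=1}^N a_{ij}σ_{j,k} + φ_i(x_{i,k+1}) − φ_i(x_{i,k}). Then ‖σ_{k+1} − 𝒥σ_{k+1}‖ ≤ ρ‖σ_k − 𝒥σ_k‖ + L₃‖x_{k+1} − x_k‖. -/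
noncomputable section
open scoped BigOperators

lemma matVec_stacked_le {N d : ℕ} (M : Matrix (Fin N) (Fin N) ℝ) (w v : StackedY N d)
    (hv : ∀ i, v i = ∑ j, M i j • w j) :
    ‖v‖ ≤ ‖LinearMap.toContinuousLinearMap (Matrix.toEuclideanLin M)‖ * ‖w‖ := by
  set c := ‖LinearMap.toContinuousLinearMap (Matrix.toEuclideanLin M)‖ with hc
  have hc0 : 0 ≤ c := norm_nonneg _
  have e1 := PiLp.norm_sq_eq_of_L2 (fun _ : Fin N => EuclideanSpace ℝ (Fin d)) v
  have e2 := PiLp.norm_sq_eq_of_L2 (fun _ : Fin N => EuclideanSpace ℝ (Fin d)) w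
  simp only [hv] at e1
  have hsq : ‖v‖ ^ 2 ≤ (c * ‖w‖) ^ 2 := by
    rw [e1, mul_pow, e2]
    have key : ∀ i : Fin N, ‖(∑ j, M i j • w j : EuclideanSpace ℝ (Fin d))‖ ^ 2
        = ∑ k : Fin d, (∑ j, M i j * w j k) ^ 2 := by
      intro i
      rw [EuclideanSpace.norm_eq, Real.sq_sqrt (by positivity)]
      refine Finset.sum_congr rfl fun k _ => ?_
      rw [Real.norm_eq_abs, sq_abs]
      congr 1
      calc (∑ x, M i x • w x : EuclideanSpace ℝ (Fin d)) k
          = (∑ x, (WithLp.linearEquiv 2 ℝ (Fin d → ℝ)) (M i x • w x)) k :=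
            by exact congrFun (map_sum (WithLp.linearEquiv 2 ℝ (Fin d → ℝ)) (fun x => M i x • w x) Finset.univ) k
        _ = ∑ x, M i x * w x k := by rw [Finset.sum_apply]; rfl
    calc ∑ i, ‖(∑ j, M i j • w j : EuclideanSpace ℝ (Fin d))‖ ^ 2
        = ∑ i, ∑ k : Fin d, (∑ j, M i j * w j k) ^ 2 :=
          Finset.sum_congr rfl fun i _ => key i
      _ = ∑ k : Fin d, ∑ i, (M.mulVec (fun j => w j k) i) ^ 2 := by
          rw [Finset.sum_comm]; rfl
      _ ≤ ∑ k : Fin d, c ^ 2 * ∑ j, (w j k) ^ 2 := by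
          refine Finset.sum_le_sum fun k _ => ?_
          have h1 := (LinearMap.toContinuousLinearMap (Matrix.toEuclideanLin M)).le_opNorm
            ((WithLp.equiv 2 (Fin N → ℝ)).symm (fun j => w j k))
          have h2 : ‖Matrix.toEuclideanLin M ((WithLp.equiv 2 (Fin N → ℝ)).symm (fun j => w j k))‖ ^ 2
              = ∑ i, (M.mulVec (fun j => w j k) i) ^ 2 := by
            rw [EuclideanSpace.norm_eq, Real.sq_sqrt (by positivity)]
            refine Finset.sum_congr rfl fun i _ => ?_
            rw [Real.norm_eq_abs, sq_abs]; rfl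
          have h3 : ‖((WithLp.equiv 2 (Fin N → ℝ)).symm (fun j => w j k) : EuclideanSpace ℝ (Fin N))‖ ^ 2
              = ∑ j, (w j k) ^ 2 := by
            rw [EuclideanSpace.norm_eq, Real.sq_sqrt (by positivity)]
            refine Finset.sum_congr rfl fun j _ => ?_
            rw [Real.norm_eq_abs, sq_abs]; rfl
          have h4 := pow_le_pow_left₀ (norm_nonneg _) h1 2
          rw [mul_pow, h3] at h4
          calc ∑ i, (M.mulVec (fun j => w j k) i) ^ 2 = _ := h2.symm
            _ ≤ _ := h4
      _ = c ^ 2 * ∑ j, ‖w j‖ ^ 2 := by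
          rw [← Finset.mul_sum, Finset.sum_comm]
          congr 1
          refine Finset.sum_congr rfl fun j _ => ?_
          rw [EuclideanSpace.norm_eq, Real.sq_sqrt (by positivity)]
          exact Finset.sum_congr rfl fun k _ => (sq_abs _).symm
  have := Real.sqrt_le_sqrt hsq
  rw [Real.sqrt_sq (norm_nonneg _), Real.sqrt_sq (mul_nonneg hc0 (norm_nonneg w))] at this
  exact this

lemma norm_sub_jmap_le {N d : ℕ} (z : StackedY N d) : ‖z - Jmap z‖ ≤ ‖z‖ := by
  have h : (inner ℝ (Jmap z) (z - Jmap z) : ℝ) = 0 := by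
    rw [PiLp.inner_apply]
    have : ∀ i : Fin N, (inner ℝ ((Jmap z) i) ((z - Jmap z) i) : ℝ)
        = inner ℝ ((N:ℝ)⁻¹ • ∑ j, z j) (z i) - inner ℝ ((N:ℝ)⁻¹ • ∑ j, z j) ((N:ℝ)⁻¹ • ∑ j, z j) := by
      intro i
      rw [PiLp.sub_apply]
      rw [inner_sub_right]
      rfl
    rw [Finset.sum_congr rfl fun i _ => this i, Finset.sum_sub_distrib, ← inner_sum,
      Finset.sum_const, Finset.card_univ, Fintype.card_fin]
    rw [real_inner_smul_left, real_inner_smul_left, real_inner_smul_right, nsmul_eq_mul]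
    rcases eq_or_ne (N:ℝ) 0 with h0 | h0
    · simp [h0]
    · field_simp
      ring
  have hsum : Jmap z + (z - Jmap z) = z := add_sub_cancel _ _
  have hpy := norm_add_sq_real (Jmap z) (z - Jmap z)
  rw [hsum, h] at hpy
  have hsq : ‖z - Jmap z‖ ^ 2 ≤ ‖z‖ ^ 2 := by nlinarith [sq_nonneg ‖Jmap z‖]
  have := Real.sqrt_le_sqrt hsq
  rwa [Real.sqrt_sq (norm_nonneg _), Real.sqrt_sq (norm_nonneg _)] at this

lemma stacked_l2_bound {N d : ℕ} {nn : Fin N → ℕ} (L : ℝ) (hL : 0 ≤ L)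
    (Δ : StackedY N d) (x : StackedX N nn) (h : ∀ i, ‖Δ i‖ ≤ L * ‖x i‖) : ‖Δ‖ ≤ L * ‖x‖ := by
  have e1 := PiLp.norm_sq_eq_of_L2 (fun _ : Fin N => EuclideanSpace ℝ (Fin d)) Δ
  have e2 := PiLp.norm_sq_eq_of_L2 (fun i : Fin N => EuclideanSpace ℝ (Fin (nn i))) x
  have hsq : ‖Δ‖ ^ 2 ≤ (L * ‖x‖) ^ 2 := by
    rw [e1, mul_pow, e2, Finset.mul_sum]
    refine Finset.sum_le_sum fun i _ => ?_
    have := pow_le_pow_left₀ (norm_nonneg (Δ i)) (h i) 2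
    rw [mul_pow] at this
    exact this
  have := Real.sqrt_le_sqrt hsq
  rwa [Real.sqrt_sq (norm_nonneg _), Real.sqrt_sq (mul_nonneg hL (norm_nonneg _))] at this

/-- If each `φᵢ` has `‖∇φᵢ‖ ≤ L₃`, `A` is nonnegative doubly stochastic with
`ρ = ‖A - J‖` (ℓ₂-operator norm), and `σ_{k+1,i} = Σⱼ a_{ij}σ_{k,j} + φᵢ(x_{k+1,i}) - φᵢ(x_{k,i})`,
then `‖σ_{k+1} - 𝒥σ_{k+1}‖ ≤ ρ‖σ_k - 𝒥σ_k‖ + L₃‖x_{k+1} - x_k‖`. -/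
theorem dgt_sigma_consensus_step (N d : ℕ) (hN : 0 < N) (nn : Fin N → ℕ) (L₃ : ℝ)
    (φ : ∀ i, EuclideanSpace ℝ (Fin (nn i)) → EuclideanSpace ℝ (Fin d))
    (hφdiff : ∀ i, Differentiable ℝ (φ i))
    (hφbound : ∀ (i : Fin N) (xi : EuclideanSpace ℝ (Fin (nn i))), ‖fderiv ℝ (φ i) xi‖ ≤ L₃)
    (A : Matrix (Fin N) (Fin N) ℝ)
    (hA0 : ∀ i j, 0 ≤ A i j)
    (hrow : ∀ i, ∑ j, A i j = 1) (hcol : ∀ j, ∑ i, A i j = 1)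
    (xk xk1 : StackedX N nn) (σk σk1 : StackedY N d)
    (hσup : ∀ i, σk1 i = ∑ j, A i j • σk j + φ i (xk1 i) - φ i (xk i)) :
    ‖σk1 - Jmap σk1‖ ≤ matrixL2OpNorm (A - consensusJ N) * ‖σk - Jmap σk‖ + L₃ * ‖xk1 - xk‖ := by
  classical
  have hNne : (N : ℝ) ≠ 0 := Nat.cast_ne_zero.mpr hN.ne'
  set M : Matrix (Fin N) (Fin N) ℝ := A - consensusJ N with hM
  set Δ : StackedY N d := WithLp.toLp 2 (fun i => φ i (xk1 i) - φ i (xk i)) with hΔdef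
  set u : StackedY N d := σk - Jmap σk with hu
  set q : StackedY N d := WithLp.toLp 2 (fun i => ∑ j, M i j • u j) with hqdef
  set r : StackedY N d := Δ - Jmap Δ with hr
  set S : EuclideanSpace ℝ (Fin d) := ∑ j, σk j with hS
  set T : EuclideanSpace ℝ (Fin d) := ∑ j, Δ j with hT
  have hσup' : ∀ i, σk1 i = ∑ j, A i j • σk j + Δ i := by
    intro i; rw [hσup i, hΔdef, add_sub_assoc]
  have hS1 : ∑ m, σk1 m = S + T := by
    rw [Finset.sum_congr rfl fun m _ => hσup' m, Finset.sum_add_distrib, ← hT,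
      Finset.sum_comm]
    congr 1
    calc ∑ j, ∑ m, A m j • σk j = ∑ j, (∑ m, A m j) • σk j := by
          refine Finset.sum_congr rfl fun j _ => ?_
          rw [Finset.sum_smul]
      _ = S := by
          rw [hS]
          refine Finset.sum_congr rfl fun j _ => ?_
          rw [hcol j, one_smul]
  have hqi : ∀ i, q i = ∑ j, A i j • σk j - (N:ℝ)⁻¹ • S := by
    intro i
    have hMij : ∀ j, M i j = A i j - (N:ℝ)⁻¹ := by
      intro j; rw [hM]; simp [consensusJ, Matrix.sub_apply]
    have huj : ∀ j, u j = σk j - (N:ℝ)⁻¹ • S := by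
      intro j; rw [hu, PiLp.sub_apply]; rfl
    have expand : ∀ j, M i j • u j =
        (A i j • σk j - A i j • ((N:ℝ)⁻¹ • S)) - ((N:ℝ)⁻¹ • σk j - (N:ℝ)⁻¹ • ((N:ℝ)⁻¹ • S)) := by
      intro j
      rw [hMij j, huj j, sub_smul, smul_sub, smul_sub]
    calc q i = ∑ j, M i j • u j := rfl
      _ = ∑ j, ((A i j • σk j - A i j • ((N:ℝ)⁻¹ • S)) -
            ((N:ℝ)⁻¹ • σk j - (N:ℝ)⁻¹ • ((N:ℝ)⁻¹ • S))) :=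
          Finset.sum_congr rfl fun j _ => expand j
      _ = (∑ j, A i j • σk j - ∑ j, A i j • ((N:ℝ)⁻¹ • S)) -
            (∑ j, (N:ℝ)⁻¹ • σk j - ∑ j, (N:ℝ)⁻¹ • ((N:ℝ)⁻¹ • S)) := by
          rw [Finset.sum_sub_distrib, Finset.sum_sub_distrib, Finset.sum_sub_distrib]
      _ = ∑ j, A i j • σk j - (N:ℝ)⁻¹ • S := by
          rw [← Finset.sum_smul, hrow i, one_smul, ← Finset.smul_sum, ← hS,
            Finset.sum_const, Finset.card_univ, Fintype.card_fin, smul_smul]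
          have hns : (N : ℕ) • (((N:ℝ)⁻¹ * (N:ℝ)⁻¹) • S) = (N:ℝ)⁻¹ • S := by
            rw [← Nat.cast_smul_eq_nsmul ℝ, smul_smul]
            congr 1
            field_simp
          rw [hns]
          abel
  have hdecomp : σk1 - Jmap σk1 = q + r := by
    refine PiLp.ext fun i => ?_
    have hL : (σk1 - Jmap σk1) i = σk1 i - (N:ℝ)⁻¹ • (S + T) := by
      rw [PiLp.sub_apply]
      congr 1
      show (N:ℝ)⁻¹ • ∑ m, σk1 m = _
      rw [hS1]
    have hR : (q + r) i = q i + (Δ i - (N:ℝ)⁻¹ • T) := by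
      rfl
    rw [hL, hR, hσup' i, hqi i, smul_add]
    abel
  have hq_norm : ‖q‖ ≤ matrixL2OpNorm M * ‖u‖ := by
    rw [matrixL2OpNorm]
    exact matVec_stacked_le M u q fun i => rfl
  have hr_norm : ‖r‖ ≤ ‖Δ‖ := norm_sub_jmap_le Δ
  have hL3 : 0 ≤ L₃ := le_trans (norm_nonneg _) (hφbound ⟨0, hN⟩ 0)
  have hΔ_norm : ‖Δ‖ ≤ L₃ * ‖xk1 - xk‖ := by
    refine stacked_l2_bound L₃ hL3 Δ (xk1 - xk) fun i => ?_
    have hmv : ‖φ i (xk1 i) - φ i (xk i)‖ ≤ L₃ * ‖xk1 i - xk i‖ :=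
      convex_univ.norm_image_sub_le_of_norm_fderiv_le
        (fun x _ => (hφdiff i).differentiableAt) (fun x _ => hφbound i x)
        (Set.mem_univ _) (Set.mem_univ _)
    rw [PiLp.sub_apply]
    exact hmv
  calc ‖σk1 - Jmap σk1‖ = ‖q + r‖ := by rw [hdecomp]
    _ ≤ ‖q‖ + ‖r‖ := norm_add_le _ _
    _ ≤ matrixL2OpNorm M * ‖u‖ + L₃ * ‖xk1 - xk‖ :=
        add_le_add hq_norm (hr_norm.trans hΔ_norm)
end
end

section
/- Under Assumption 2 and one DGT step with stepsize α > 0, the iterates satisfy ‖σ_{k+1} − 𝒥σ_{k+1}‖ ≤ (ρ + αL₁L₃)‖σ_k − 𝒥σ_k‖ + αL₁L₃(1 + L₃)‖x_k − x*‖ + αL₃²‖y_k − 𝒥y_k‖, where ρ := ‖A − J‖. -/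
noncomputable section
open scoped BigOperators

open Finset in
private lemma stacked_norm_le' {ι : Type*} [Fintype ι] {E G : ι → Type*}
    [∀ i, SeminormedAddCommGroup (E i)] [∀ i, SeminormedAddCommGroup (G i)]
    (u : PiLp 2 E) (v : PiLp 2 G) (C : ℝ) (hC : 0 ≤ C)
    (h : ∀ i, ‖u i‖ ≤ C * ‖v i‖) : ‖u‖ ≤ C * ‖v‖ := by
  have h1 : ‖u‖ ^ 2 ≤ (C * ‖v‖) ^ 2 := by
    rw [PiLp.norm_sq_eq_of_L2, mul_pow, PiLp.norm_sq_eq_of_L2, Finset.mul_sum]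
    refine Finset.sum_le_sum fun i _ => ?_
    calc ‖u i‖ ^ 2 ≤ (C * ‖v i‖) ^ 2 := pow_le_pow_left₀ (norm_nonneg _) (h i) 2
      _ = C ^ 2 * ‖v i‖ ^ 2 := by ring
  exact le_of_pow_le_pow_left₀ two_ne_zero (by positivity) h1

open Finset in
private lemma norm_sub_Jmap_le' {N d : ℕ} (hN : 0 < N) (z : StackedY N d) :
    ‖z - Jmap z‖ ≤ ‖z‖ := by
  set m : EuclideanSpace ℝ (Fin d) := (N : ℝ)⁻¹ • ∑ j, z j with hm
  have hNz : (N : ℝ) ≠ 0 := Nat.cast_ne_zero.mpr hN.ne'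
  have hsum : ∑ j, z j = (N : ℝ) • m := by
    rw [hm, smul_smul, mul_inv_cancel₀ hNz, one_smul]
  have hinner : (inner ℝ z (Jmap z) : ℝ) = (N : ℝ) * ‖m‖ ^ 2 := by
    rw [PiLp.inner_apply]
    have h0 : ∀ i : Fin N, (inner ℝ (z i) (Jmap z i) : ℝ) = inner ℝ (z i) m := fun i => rfl
    simp_rw [h0]
    rw [← sum_inner, hsum, real_inner_smul_left, real_inner_self_eq_norm_sq]
  have hJ : ‖Jmap z‖ ^ 2 = (N : ℝ) * ‖m‖ ^ 2 := by
    rw [PiLp.norm_sq_eq_of_L2]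
    simp [Jmap, ← hm, card_univ]
  have key : ‖z - Jmap z‖ ^ 2 ≤ ‖z‖ ^ 2 := by
    have h1 := norm_sub_sq_real z (Jmap z)
    rw [h1, hinner, hJ]
    nlinarith [sq_nonneg ‖m‖, (Nat.cast_pos (α := ℝ)).mpr hN]
  exact le_of_pow_le_pow_left₀ two_ne_zero (norm_nonneg _) key

open Finset in
private lemma blockAct_norm_le' {N d : ℕ} (M : Matrix (Fin N) (Fin N) ℝ) (z w : StackedY N d)
    (hw : ∀ i, w i = ∑ j, M i j • z j) :
    ‖w‖ ≤ matrixL2OpNorm M * ‖z‖ := by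
  have hMnn : 0 ≤ matrixL2OpNorm M :=
    norm_nonneg (LinearMap.toContinuousLinearMap (Matrix.toEuclideanLin M))
  have h1 : ‖w‖ ^ 2 ≤ (matrixL2OpNorm M * ‖z‖) ^ 2 := by
    rw [PiLp.norm_sq_eq_of_L2]
    have hcomp : ∀ i : Fin N, ‖w i‖ ^ 2 = ∑ c : Fin d, (∑ j, M i j * z j c) ^ 2 := by
      intro i
      rw [PiLp.norm_sq_eq_of_L2]
      refine Finset.sum_congr rfl fun c _ => ?_
      have h2 : w i c = ∑ j, M i j * z j c := by
        rw [hw]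
        calc (∑ x, M i x • z x : EuclideanSpace ℝ (Fin d)) c
            = ∑ x, (M i x • z x : EuclideanSpace ℝ (Fin d)) c :=
              by rw [WithLp.ofLp_sum]; exact Finset.sum_apply c univ _
          _ = ∑ x, M i x * z x c := rfl
      rw [h2, Real.norm_eq_abs, sq_abs]
    simp_rw [hcomp]
    rw [Finset.sum_comm]
    have hc : ∀ c : Fin d, (∑ i : Fin N, (∑ j, M i j * z j c) ^ 2)
        ≤ (matrixL2OpNorm M) ^ 2 * ∑ j : Fin N, (z j c) ^ 2 := by
      intro c
      set zc : EuclideanSpace ℝ (Fin N) := WithLp.toLp 2 (fun j => z j c) with hzc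
      set T := LinearMap.toContinuousLinearMap (Matrix.toEuclideanLin M) with hT0
      have hTap : ∀ i, (T zc) i = ∑ j, M i j * z j c := by
        intro i
        show Matrix.toEuclideanLin M zc i = _
        rw [Matrix.toEuclideanLin_apply]
        simp [Matrix.mulVec, dotProduct, zc]
      have hle : ‖T zc‖ ≤ matrixL2OpNorm M * ‖zc‖ := T.le_opNorm zc
      have h2 : ‖T zc‖ ^ 2 ≤ (matrixL2OpNorm M * ‖zc‖) ^ 2 :=
        pow_le_pow_left₀ (norm_nonneg _) hle 2
      rw [PiLp.norm_sq_eq_of_L2] at h2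
      simp_rw [hTap] at h2
      calc ∑ i : Fin N, (∑ j, M i j * z j c) ^ 2
          = ∑ i : Fin N, ‖∑ j, M i j * z j c‖ ^ 2 := by
            simp [Real.norm_eq_abs, sq_abs]
        _ ≤ (matrixL2OpNorm M * ‖zc‖) ^ 2 := h2
        _ = (matrixL2OpNorm M) ^ 2 * ∑ j : Fin N, (z j c) ^ 2 := by
            rw [mul_pow, PiLp.norm_sq_eq_of_L2]
            simp [Real.norm_eq_abs, sq_abs, zc]
    calc ∑ c : Fin d, ∑ i : Fin N, (∑ j, M i j * z j c) ^ 2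
        ≤ ∑ c : Fin d, (matrixL2OpNorm M) ^ 2 * ∑ j : Fin N, (z j c) ^ 2 :=
          Finset.sum_le_sum fun c _ => hc c
      _ = (matrixL2OpNorm M) ^ 2 * ∑ j : Fin N, ∑ c : Fin d, (z j c) ^ 2 := by
          rw [← Finset.mul_sum, Finset.sum_comm]
      _ = (matrixL2OpNorm M * ‖z‖) ^ 2 := by
          rw [mul_pow, PiLp.norm_sq_eq_of_L2]
          congr 1
          refine Finset.sum_congr rfl fun j _ => ?_
          rw [PiLp.norm_sq_eq_of_L2]
          simp [Real.norm_eq_abs, sq_abs]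
  exact le_of_pow_le_pow_left₀ two_ne_zero (mul_nonneg hMnn (norm_nonneg _)) h1

open Finset ContinuousLinearMap in
private theorem grad_F_eq' (N d : ℕ) (nn : Fin N → ℕ)
    (φ : ∀ i, EuclideanSpace ℝ (Fin (nn i)) → EuclideanSpace ℝ (Fin d))
    (f : ∀ i, EuclideanSpace ℝ (Fin (nn i)) → EuclideanSpace ℝ (Fin d) → ℝ)
    (hφdiff : ∀ i, Differentiable ℝ (φ i))
    (hfdiff : ∀ i, Differentiable ℝ
      (fun p : EuclideanSpace ℝ (Fin (nn i)) × EuclideanSpace ℝ (Fin d) => f i p.1 p.2))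
    (g1 : ∀ i, EuclideanSpace ℝ (Fin (nn i)) → EuclideanSpace ℝ (Fin d) →
      EuclideanSpace ℝ (Fin (nn i)))
    (g2 : ∀ i, EuclideanSpace ℝ (Fin (nn i)) → EuclideanSpace ℝ (Fin d) →
      EuclideanSpace ℝ (Fin d))
    (hg1 : ∀ i u s, g1 i u s = gradient (fun z => f i z s) u)
    (hg2 : ∀ i u s, g2 i u s = gradient (f i u) s)
    (F : StackedX N nn → ℝ)
    (hF : ∀ x : StackedX N nn, F x = ∑ i, f i (x i) ((N : ℝ)⁻¹ • ∑ j, φ j (x j)))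
    (x : StackedX N nn) :
    gradient F x = combinedGrad φ g1 g2 x (WithLp.toLp 2 (fun _ => (N : ℝ)⁻¹ • ∑ j, φ j (x j))) := by
  classical
  set sb : EuclideanSpace ℝ (Fin d) := (N : ℝ)⁻¹ • ∑ j, φ j (x j) with hsb
  set S : StackedX N nn →L[ℝ] EuclideanSpace ℝ (Fin d) :=
    (N : ℝ)⁻¹ • ∑ j, (fderiv ℝ (φ j) (x j)).comp
      (PiLp.proj (𝕜 := ℝ) 2 _ j) with hS
  have hagg : HasFDerivAt (fun z : StackedX N nn => (N : ℝ)⁻¹ • ∑ j, φ j (z j)) S x := by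
    rw [hS]
    refine HasFDerivAt.const_smul ?_ ((N : ℝ)⁻¹)
    refine HasFDerivAt.fun_sum fun j _ => ?_
    have hproj : HasFDerivAt (fun z : StackedX N nn => z j)
        (PiLp.proj (𝕜 := ℝ) 2 (fun i => EuclideanSpace ℝ (Fin (nn i))) j) x := by
      have h : HasFDerivAt
          (⇑(PiLp.proj (𝕜 := ℝ) 2 (fun i => EuclideanSpace ℝ (Fin (nn i))) j))
          (PiLp.proj (𝕜 := ℝ) 2 (fun i => EuclideanSpace ℝ (Fin (nn i))) j) x :=
        ContinuousLinearMap.hasFDerivAt _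
      exact h.congr_of_eventuallyEq (Filter.Eventually.of_forall fun z => rfl)
    exact (hφdiff j (x j)).hasFDerivAt.comp x hproj
  set D : ∀ i, (EuclideanSpace ℝ (Fin (nn i)) × EuclideanSpace ℝ (Fin d)) →L[ℝ] ℝ :=
    fun i => fderiv ℝ (fun p : _ × _ => f i p.1 p.2) (x i, sb) with hD
  have hFd : HasFDerivAt F
      (∑ i, (D i).comp ((PiLp.proj (𝕜 := ℝ) 2 _ i).prod S)) x := by
    have hsum : HasFDerivAt (fun z : StackedX N nn =>
        ∑ i, f i (z i) ((N : ℝ)⁻¹ • ∑ j, φ j (z j)))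
        (∑ i, (D i).comp ((PiLp.proj (𝕜 := ℝ) 2 _ i).prod S)) x := by
      refine HasFDerivAt.fun_sum fun i _ => ?_
      have hinner : HasFDerivAt (fun z : StackedX N nn =>
          ((z i, (N : ℝ)⁻¹ • ∑ j, φ j (z j)) :
            EuclideanSpace ℝ (Fin (nn i)) × EuclideanSpace ℝ (Fin d)))
          ((PiLp.proj (𝕜 := ℝ) 2 _ i).prod S) x := by
        have hproj : HasFDerivAt (fun z : StackedX N nn => z i)
            (PiLp.proj (𝕜 := ℝ) 2 (fun k => EuclideanSpace ℝ (Fin (nn k))) i) x := by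
          have h : HasFDerivAt
              (⇑(PiLp.proj (𝕜 := ℝ) 2 (fun k => EuclideanSpace ℝ (Fin (nn k))) i))
              (PiLp.proj (𝕜 := ℝ) 2 (fun k => EuclideanSpace ℝ (Fin (nn k))) i) x :=
            ContinuousLinearMap.hasFDerivAt _
          exact h.congr_of_eventuallyEq (Filter.Eventually.of_forall fun z => rfl)
        exact hproj.prodMk hagg
      exact ((hfdiff i (x i, sb)).hasFDerivAt).comp x hinner
    refine hsum.congr_of_eventuallyEq ?_
    filter_upwards with z using (hF z)
  have hgrad := hFd.fderiv
  have hEval : ∀ v : StackedX N nn,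
      (inner ℝ (gradient F x) v : ℝ) = inner ℝ (combinedGrad φ g1 g2 x
        (WithLp.toLp 2 (fun _ => sb)) : StackedX N nn) v := by
    intro v
    have h1 : (inner ℝ (gradient F x) v : ℝ) = fderiv ℝ F x v := by
      rw [gradient]
      exact InnerProductSpace.toDual_symm_apply
    rw [h1, hgrad]
    have h2 : (∑ i, (D i).comp ((PiLp.proj (𝕜 := ℝ) 2 _ i).prod S)) v
        = ∑ i, D i (v i, S v) := by
      rw [ContinuousLinearMap.sum_apply]; rfl
    rw [h2]
    have hDab : ∀ (i) (a : EuclideanSpace ℝ (Fin (nn i))) (b : EuclideanSpace ℝ (Fin d)),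
        D i (a, b) = (inner ℝ (g1 i (x i) sb) a : ℝ) + inner ℝ (g2 i (x i) sb) b := by
      intro i a b
      have hpart1 : HasFDerivAt (fun z => f i z sb) ((D i).comp (inl ℝ _ _)) (x i) :=
        by have := ((hfdiff i (x i, sb)).hasFDerivAt).comp (x i) (hasFDerivAt_prodMk_left (𝕜 := ℝ) (x i) sb); exact this
      have hpart2 : HasFDerivAt (f i (x i)) ((D i).comp (inr ℝ _ _)) sb :=
        ((hfdiff i (x i, sb)).hasFDerivAt).comp sb (hasFDerivAt_prodMk_right (x i) sb)
      have e1 : (inner ℝ (g1 i (x i) sb) a : ℝ) = D i (a, 0) := by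
        rw [hg1, (hasFDerivAt_iff_hasGradientAt.mp hpart1).gradient,
          InnerProductSpace.toDual_symm_apply]
        rfl
      have e2 : (inner ℝ (g2 i (x i) sb) b : ℝ) = D i (0, b) := by
        rw [hg2, (hasFDerivAt_iff_hasGradientAt.mp hpart2).gradient,
          InnerProductSpace.toDual_symm_apply]
        rfl
      rw [e1, e2]
      have h3 : (a, b) = ((a, 0) : _ × _) + (0, b) := by simp
      rw [h3, map_add]
    simp_rw [hDab]
    rw [Finset.sum_add_distrib]
    have hRHS : (inner ℝ (combinedGrad φ g1 g2 x (WithLp.toLp 2 (fun _ => sb)) : StackedX N nn) v : ℝ)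
        = (∑ i, (inner ℝ (g1 i (x i) sb) (v i) : ℝ))
          + ∑ i, (inner ℝ (ContinuousLinearMap.adjoint (fderiv ℝ (φ i) (x i))
              ((N : ℝ)⁻¹ • ∑ j, g2 j (x j) sb)) (v i) : ℝ) := by
      rw [PiLp.inner_apply, ← Finset.sum_add_distrib]
      refine Finset.sum_congr rfl fun i _ => ?_
      rw [show (combinedGrad φ g1 g2 x (WithLp.toLp 2 (fun _ => sb)) : StackedX N nn) i
          = g1 i (x i) sb + ContinuousLinearMap.adjoint (fderiv ℝ (φ i) (x i))
            ((N : ℝ)⁻¹ • ∑ j, g2 j (x j) sb) from rfl, inner_add_left]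
    rw [hRHS]
    congr 1
    have hSv : S v = (N : ℝ)⁻¹ • ∑ j, fderiv ℝ (φ j) (x j) (v j) := by
      rw [hS, ContinuousLinearMap.smul_apply, ContinuousLinearMap.sum_apply]
      rfl
    calc ∑ i, (inner ℝ (g2 i (x i) sb) (S v) : ℝ)
        = inner ℝ (∑ i, g2 i (x i) sb) (S v) :=
          (sum_inner Finset.univ (fun i => g2 i (x i) sb) (S v)).symm
      _ = ∑ j, (inner ℝ ((N : ℝ)⁻¹ • ∑ i, g2 i (x i) sb)
            (fderiv ℝ (φ j) (x j) (v j)) : ℝ) := by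
          rw [hSv, real_inner_smul_right, inner_sum, Finset.mul_sum]
          refine Finset.sum_congr rfl fun j _ => ?_
          rw [real_inner_smul_left]
      _ = ∑ j, (inner ℝ (ContinuousLinearMap.adjoint (fderiv ℝ (φ j) (x j))
            ((N : ℝ)⁻¹ • ∑ i, g2 i (x i) sb)) (v j) : ℝ) := by
          simp_rw [ContinuousLinearMap.adjoint_inner_left]
  exact ext_inner_right ℝ hEval

set_option maxHeartbeats 1000000 in
/-- Under Assumption 2 and one DGT step with stepsize `α > 0`,
`‖σ_{k+1} - 𝒥σ_{k+1}‖ ≤ (ρ + αL₁L₃)‖σ_k - 𝒥σ_k‖ + αL₁L₃(1+L₃)‖x_k - x*‖ + αL₃²‖y_k - 𝒥y_k‖`,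
where `ρ = ‖A - J‖` is the ℓ₂-operator norm. -/
theorem dgt_onestep_sigma_consensus_bound (N d : ℕ) (hN : 0 < N) (nn : Fin N → ℕ)
    (φ : ∀ i, EuclideanSpace ℝ (Fin (nn i)) → EuclideanSpace ℝ (Fin d))
    (f : ∀ i, EuclideanSpace ℝ (Fin (nn i)) → EuclideanSpace ℝ (Fin d) → ℝ)
    (hφdiff : ∀ i, Differentiable ℝ (φ i))
    (hfdiff : ∀ i, Differentiable ℝ
      (fun p : EuclideanSpace ℝ (Fin (nn i)) × EuclideanSpace ℝ (Fin d) => f i p.1 p.2))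
    -- the partial gradients ∇₁fᵢ and ∇₂fᵢ
    (g1 : ∀ i, EuclideanSpace ℝ (Fin (nn i)) → EuclideanSpace ℝ (Fin d) →
      EuclideanSpace ℝ (Fin (nn i)))
    (g2 : ∀ i, EuclideanSpace ℝ (Fin (nn i)) → EuclideanSpace ℝ (Fin d) →
      EuclideanSpace ℝ (Fin d))
    (hg1 : ∀ i u s, g1 i u s = gradient (fun z => f i z s) u)
    (hg2 : ∀ i u s, g2 i u s = gradient (f i u) s)
    -- the global objective f(x) = Σᵢ fᵢ(xᵢ, σ(x)) with σ(x) = (1/N)Σᵢ φᵢ(xᵢ)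
    (F : StackedX N nn → ℝ)
    (hF : ∀ x : StackedX N nn, F x = ∑ i, f i (x i) ((N : ℝ)⁻¹ • ∑ j, φ j (x j)))
    -- Assumption 2
    (μ L₁ L₂ L₃ : ℝ) (hμ : 0 < μ) (hL₁ : 0 < L₁) (hL₂ : 0 < L₂) (hL₃ : 0 < L₃)
    (hFdiff : Differentiable ℝ F)
    (hsc : ∀ x y : StackedX N nn,
      F x ≥ F y + (inner ℝ (gradient F y) (x - y) : ℝ) + μ / 2 * ‖x - y‖ ^ 2)
    (hsmooth : ∀ x y : StackedX N nn, ‖gradient F x - gradient F y‖ ≤ L₁ * ‖x - y‖)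
    (hGlip : ∀ (x x' : StackedX N nn) (y y' : StackedY N d),
      ‖combinedGrad φ g1 g2 x y - combinedGrad φ g1 g2 x' y'‖ ≤ L₁ * (‖x - x'‖ + ‖y - y'‖))
    (hG2lip : ∀ (x x' : StackedX N nn) (y y' : StackedY N d),
      ‖stackedGrad2 g2 x y - stackedGrad2 g2 x' y'‖ ≤ L₂ * (‖x - x'‖ + ‖y - y'‖))
    (hφbound : ∀ (i : Fin N) (xi : EuclideanSpace ℝ (Fin (nn i))), ‖fderiv ℝ (φ i) xi‖ ≤ L₃)
    -- the weight matrix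
    (A : Matrix (Fin N) (Fin N) ℝ)
    (hA0 : ∀ i j, 0 ≤ A i j)
    (hrow : ∀ i, ∑ j, A i j = 1) (hcol : ∀ j, ∑ i, A i j = 1)
    -- the minimizer of F
    (xstar : StackedX N nn) (hmin : ∀ z, F xstar ≤ F z)
    -- one DGT step
    (α : ℝ) (hα0 : 0 < α)
    (xk xk1 : StackedX N nn) (σk σk1 yk yk1 : StackedY N d)
    (htrackσ : (N : ℝ)⁻¹ • ∑ i, σk i = (N : ℝ)⁻¹ • ∑ i, φ i (xk i))
    (htracky : (N : ℝ)⁻¹ • ∑ i, yk i = (N : ℝ)⁻¹ • ∑ i, g2 i (xk i) (σk i))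
    (hxup : ∀ i, xk1 i = xk i - α • (g1 i (xk i) (σk i) +
      ContinuousLinearMap.adjoint (fderiv ℝ (φ i) (xk i)) (yk i)))
    (hσup : ∀ i, σk1 i = ∑ j, A i j • σk j + φ i (xk1 i) - φ i (xk i))
    (hyup : ∀ i, yk1 i = ∑ j, A i j • yk j + g2 i (xk1 i) (σk1 i) - g2 i (xk i) (σk i)) :
    ‖σk1 - Jmap σk1‖ ≤ (matrixL2OpNorm (A - consensusJ N) + α * L₁ * L₃) * ‖σk - Jmap σk‖ +
      α * L₁ * L₃ * (1 + L₃) * ‖xk - xstar‖ + α * L₃ ^ 2 * ‖yk - Jmap yk‖ := by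
    classical
  have hNR : (N : ℝ) ≠ 0 := Nat.cast_ne_zero.mpr hN.ne'
  set ρ := matrixL2OpNorm (A - consensusJ N) with hρ
  set m : EuclideanSpace ℝ (Fin d) := (N : ℝ)⁻¹ • ∑ j, σk j with hm
  set Δ : StackedY N d := WithLp.toLp 2 (fun i => φ i (xk1 i) - φ i (xk i)) with hΔ
  set w : StackedY N d := WithLp.toLp 2 (fun i => ∑ j, (A - consensusJ N) i j • (σk - Jmap σk) j) with hwdef
  -- mean value inequality for each φ i
  have hmv : ∀ (i : Fin N) (a b : EuclideanSpace ℝ (Fin (nn i))),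
      ‖φ i b - φ i a‖ ≤ L₃ * ‖b - a‖ := by
    intro i a b
    exact convex_univ.norm_image_sub_le_of_norm_fderiv_le
      (fun x _ => hφdiff i x) (fun x _ => hφbound i x) (Set.mem_univ a) (Set.mem_univ b)
  -- Claim 1 : identity for the consensus error
  have hσk1i : ∀ i, σk1 i = (∑ j, A i j • σk j) + Δ i := by
    intro i
    rw [hσup i]
    show _ = _ + (φ i (xk1 i) - φ i (xk i))
    abel
  have hsum_col : (∑ i, ∑ j, A i j • σk j) = ∑ j, σk j := by
    rw [Finset.sum_comm]
    refine Finset.sum_congr rfl fun j _ => ?_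
    rw [← Finset.sum_smul, hcol, one_smul]
  have hJσk1 : ∀ i, Jmap σk1 i = m + Jmap Δ i := by
    intro i
    show (N : ℝ)⁻¹ • ∑ i', σk1 i' = m + (N : ℝ)⁻¹ • ∑ i', Δ i'
    have h1 : ∑ i', σk1 i' = (∑ j, σk j) + ∑ i', Δ i' := by
      rw [Finset.sum_congr rfl fun i' _ => hσk1i i', Finset.sum_add_distrib, hsum_col]
    rw [h1, smul_add, hm]
  have hw_i : ∀ i, w i = (∑ j, A i j • σk j) - m := by
    intro i
    show (∑ j, (A - consensusJ N) i j • (σk j - m)) = _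
    have h1 : ∀ j, (A - consensusJ N) i j • (σk j - m)
        = A i j • σk j - A i j • m - ((N : ℝ)⁻¹ • σk j - (N : ℝ)⁻¹ • m) := by
      intro j
      have h2 : (A - consensusJ N) i j = A i j - (N : ℝ)⁻¹ := by
        simp [consensusJ, Matrix.sub_apply]
      rw [h2, sub_smul, smul_sub, smul_sub]
    rw [Finset.sum_congr rfl fun j _ => h1 j, Finset.sum_sub_distrib,
      Finset.sum_sub_distrib, Finset.sum_sub_distrib, ← Finset.sum_smul, hrow, one_smul,
      ← Finset.smul_sum, ← Finset.smul_sum, ← hm]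
    have h3 : (∑ _j : Fin N, m) = (N : ℝ) • m := by
      rw [Finset.sum_const, Finset.card_univ, Fintype.card_fin,
        ← Nat.cast_smul_eq_nsmul ℝ]
    rw [h3, smul_smul, inv_mul_cancel₀ hNR, one_smul]
    abel
  have claim1 : σk1 - Jmap σk1 = w + (Δ - Jmap Δ) := by
    refine PiLp.ext fun i => ?_
    show σk1 i - Jmap σk1 i = w i + (Δ i - Jmap Δ i)
    rw [hσk1i i, hJσk1 i, hw_i i]
    abel
  -- Step B : contraction bound
  have hB : ‖σk1 - Jmap σk1‖ ≤ ρ * ‖σk - Jmap σk‖ + ‖Δ‖ := by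
    rw [claim1]
    calc ‖w + (Δ - Jmap Δ)‖ ≤ ‖w‖ + ‖Δ - Jmap Δ‖ := norm_add_le _ _
      _ ≤ ρ * ‖σk - Jmap σk‖ + ‖Δ‖ :=
        add_le_add (blockAct_norm_le' _ _ _ fun i => rfl) (norm_sub_Jmap_le' hN Δ)
  -- Step C : ‖Δ‖ ≤ L₃ ‖xk1 - xk‖
  have hC : ‖Δ‖ ≤ L₃ * ‖xk1 - xk‖ := by
    refine stacked_norm_le' Δ (xk1 - xk) L₃ hL₃.le fun i => ?_
    show ‖φ i (xk1 i) - φ i (xk i)‖ ≤ L₃ * ‖xk1 i - xk i‖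
    exact hmv i (xk i) (xk1 i)
  -- Step D : the update direction
  set Gv : StackedX N nn := WithLp.toLp 2 (fun i => g1 i (xk i) (σk i) +
    ContinuousLinearMap.adjoint (fderiv ℝ (φ i) (xk i)) (yk i)) with hGv
  have hxdiff : xk1 - xk = -(α • Gv) := by
    refine PiLp.ext fun i => ?_
    show xk1 i - xk i = -(α • Gv i)
    rw [hxup i]
    show xk i - α • Gv i - xk i = -(α • Gv i)
    abel
  have hDnorm : ‖xk1 - xk‖ = α * ‖Gv‖ := by
    rw [hxdiff, norm_neg, norm_smul, Real.norm_of_nonneg hα0.le]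
  -- Step E : split Gv
  set σstar : StackedY N d := WithLp.toLp 2 (fun _ => (N : ℝ)⁻¹ • ∑ j, φ j (xstar j)) with hσstar
  have hzero : combinedGrad φ g1 g2 xstar σstar = 0 := by
    have hloc : IsLocalMin F xstar := Filter.Eventually.of_forall fun z => hmin z
    have hf0 : fderiv ℝ F xstar = 0 := hloc.fderiv_eq_zero
    have h0 : gradient F xstar = 0 := by
      rw [gradient, hf0, map_zero]
    have h1 := grad_F_eq' N d nn φ f hφdiff hfdiff g1 g2 hg1 hg2 F hF xstar
    rw [h0] at h1
    exact h1.symm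
  set Ev : StackedX N nn := WithLp.toLp 2 (fun i =>
    ContinuousLinearMap.adjoint (fderiv ℝ (φ i) (xk i)) (yk i - Jmap yk i)) with hEv
  have hGvsplit : Gv = combinedGrad φ g1 g2 xk σk + Ev := by
    refine PiLp.ext fun i => ?_
    show Gv i = combinedGrad φ g1 g2 xk σk i + Ev i
    have hcgi : combinedGrad φ g1 g2 xk σk i = g1 i (xk i) (σk i) +
        ContinuousLinearMap.adjoint (fderiv ℝ (φ i) (xk i))
          ((N : ℝ)⁻¹ • ∑ j, g2 j (xk j) (σk j)) := rfl
    have hbar : ((N : ℝ)⁻¹ • ∑ j, g2 j (xk j) (σk j) : EuclideanSpace ℝ (Fin d))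
        = Jmap yk i := by
      show _ = (N : ℝ)⁻¹ • ∑ j, yk j
      rw [htracky]
    rw [hGv, hEv, hcgi, hbar]
    simp only [WithLp.ofLp_toLp]
    beta_reduce
    rw [map_sub]
    abel
  have hEnorm : ‖Ev‖ ≤ L₃ * ‖yk - Jmap yk‖ := by
    refine stacked_norm_le' Ev (yk - Jmap yk) L₃ hL₃.le fun i => ?_
    show ‖ContinuousLinearMap.adjoint (fderiv ℝ (φ i) (xk i)) (yk i - Jmap yk i)‖
      ≤ L₃ * ‖yk i - Jmap yk i‖
    calc ‖ContinuousLinearMap.adjoint (fderiv ℝ (φ i) (xk i)) (yk i - Jmap yk i)‖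
        ≤ ‖ContinuousLinearMap.adjoint (fderiv ℝ (φ i) (xk i))‖ * ‖yk i - Jmap yk i‖ :=
          ContinuousLinearMap.le_opNorm _ _
      _ ≤ L₃ * ‖yk i - Jmap yk i‖ := by
          refine mul_le_mul_of_nonneg_right ?_ (norm_nonneg _)
          rw [ContinuousLinearMap.adjoint.norm_map]
          exact hφbound i (xk i)
  -- distance from Jmap σk to σstar
  have hJσ : ‖Jmap σk - σstar‖ ≤ L₃ * ‖xk - xstar‖ := by
    set c : EuclideanSpace ℝ (Fin d) :=
      (N : ℝ)⁻¹ • ∑ j, (φ j (xk j) - φ j (xstar j)) with hc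
    have hcomp : ∀ i : Fin N, (Jmap σk - σstar) i = c := by
      intro i
      show m - ((N : ℝ)⁻¹ • ∑ j, φ j (xstar j)) = c
      rw [htrackσ, hc, ← smul_sub, ← Finset.sum_sub_distrib]
    have hsq : ‖Jmap σk - σstar‖ ^ 2 = (N : ℝ) * ‖c‖ ^ 2 := by
      rw [PiLp.norm_sq_eq_of_L2]
      simp_rw [hcomp]
      rw [Finset.sum_const, Finset.card_univ, Fintype.card_fin, nsmul_eq_mul]
    have hcbound : ‖c‖ ≤ (N : ℝ)⁻¹ * (L₃ * ∑ j, ‖xk j - xstar j‖) := by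
      rw [hc, norm_smul, Real.norm_of_nonneg (by positivity)]
      refine mul_le_mul_of_nonneg_left ?_ (by positivity)
      calc ‖∑ j, (φ j (xk j) - φ j (xstar j))‖
          ≤ ∑ j, ‖φ j (xk j) - φ j (xstar j)‖ := norm_sum_le _ _
        _ ≤ ∑ j, L₃ * ‖xk j - xstar j‖ :=
            Finset.sum_le_sum fun j _ => hmv j (xstar j) (xk j)
        _ = L₃ * ∑ j, ‖xk j - xstar j‖ := by rw [Finset.mul_sum]
    have hsum_sq : (∑ j, ‖xk j - xstar j‖) ^ 2 ≤ (N : ℝ) * ‖xk - xstar‖ ^ 2 := by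
      have h1 := sq_sum_le_card_mul_sum_sq
        (s := Finset.univ) (f := fun j : Fin N => ‖xk j - xstar j‖)
      have h2 : ‖xk - xstar‖ ^ 2 = ∑ j, ‖xk j - xstar j‖ ^ 2 := by
        rw [PiLp.norm_sq_eq_of_L2]
        rfl
      rw [h2]
      simpa [Finset.card_univ] using h1
    have final_sq : ‖Jmap σk - σstar‖ ^ 2 ≤ (L₃ * ‖xk - xstar‖) ^ 2 := by
      rw [hsq]
      have h3 : ‖c‖ ^ 2 ≤ ((N : ℝ)⁻¹ * (L₃ * ∑ j, ‖xk j - xstar j‖)) ^ 2 :=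
        pow_le_pow_left₀ (norm_nonneg _) hcbound 2
      have hNpos : (0 : ℝ) < (N : ℝ) := Nat.cast_pos.mpr hN
      calc (N : ℝ) * ‖c‖ ^ 2
          ≤ (N : ℝ) * ((N : ℝ)⁻¹ * (L₃ * ∑ j, ‖xk j - xstar j‖)) ^ 2 :=
            mul_le_mul_of_nonneg_left h3 hNpos.le
        _ = (N : ℝ)⁻¹ * L₃ ^ 2 * (∑ j, ‖xk j - xstar j‖) ^ 2 := by
            field_simp
        _ ≤ (N : ℝ)⁻¹ * L₃ ^ 2 * ((N : ℝ) * ‖xk - xstar‖ ^ 2) := by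
            refine mul_le_mul_of_nonneg_left hsum_sq (by positivity)
        _ = (L₃ * ‖xk - xstar‖) ^ 2 := by
            field_simp
    exact le_of_pow_le_pow_left₀ two_ne_zero (by positivity) final_sq
  -- norm of the combined gradient
  have hcgnorm : ‖combinedGrad φ g1 g2 xk σk‖
      ≤ L₁ * (‖xk - xstar‖ + (‖σk - Jmap σk‖ + L₃ * ‖xk - xstar‖)) := by
    have h1 : ‖combinedGrad φ g1 g2 xk σk‖
        = ‖combinedGrad φ g1 g2 xk σk - combinedGrad φ g1 g2 xstar σstar‖ := by
      rw [hzero, sub_zero]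
    rw [h1]
    refine le_trans (hGlip xk xstar σk σstar) ?_
    refine mul_le_mul_of_nonneg_left ?_ hL₁.le
    refine add_le_add_right ?_ _
    calc ‖σk - σstar‖ ≤ ‖σk - Jmap σk‖ + ‖Jmap σk - σstar‖ := by
          have h2 : σk - σstar = (σk - Jmap σk) + (Jmap σk - σstar) := by abel
          rw [h2]
          exact norm_add_le _ _
      _ ≤ ‖σk - Jmap σk‖ + L₃ * ‖xk - xstar‖ := add_le_add_right hJσ _
  have hGvtotal : ‖Gv‖ ≤ L₁ * (‖xk - xstar‖ + (‖σk - Jmap σk‖ + L₃ * ‖xk - xstar‖))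
      + L₃ * ‖yk - Jmap yk‖ := by
    calc ‖Gv‖ ≤ ‖combinedGrad φ g1 g2 xk σk‖ + ‖Ev‖ := by
          rw [hGvsplit]
          exact norm_add_le _ _
      _ ≤ _ := add_le_add hcgnorm hEnorm
  -- final assembly
  calc ‖σk1 - Jmap σk1‖ ≤ ρ * ‖σk - Jmap σk‖ + ‖Δ‖ := hB
    _ ≤ ρ * ‖σk - Jmap σk‖ + L₃ * ‖xk1 - xk‖ := add_le_add_right hC _
    _ = ρ * ‖σk - Jmap σk‖ + L₃ * (α * ‖Gv‖) := by rw [hDnorm]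
    _ ≤ ρ * ‖σk - Jmap σk‖ + L₃ * (α *
        (L₁ * (‖xk - xstar‖ + (‖σk - Jmap σk‖ + L₃ * ‖xk - xstar‖))
          + L₃ * ‖yk - Jmap yk‖)) := by
        refine add_le_add_right ?_ _
        exact mul_le_mul_of_nonneg_left
          (mul_le_mul_of_nonneg_left hGvtotal hα0.le) hL₃.le
    _ = (ρ + α * L₁ * L₃) * ‖σk - Jmap σk‖ +
        α * L₁ * L₃ * (1 + L₃) * ‖xk - xstar‖ + α * L₃ ^ 2 * ‖yk - Jmap yk‖ := by
        ring
end
end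

section
/- Suppose ∇_2 f is L₂-Lipschitz, each φ_i is differentiable with ‖∇φ_i(x_i)‖ ≤ L₃ for all x_i and i, A is nonnegative doubly stochastic, and for any x_k, x_{k+1} ∈ ℝ^n and σ_k ∈ ℝ^{Nd} set σ_{i,k+1} := Σ_{j=1}^N a_{ij}σ_{j,k} + φ_i(x_{i,k+1}) − φ_i(x_{i,k}). Then ‖∇_2 f(x_{k+1}, σ_{k+1}) − ∇_2 f(x_k, σ_k)‖ ≤ L₂(1 + L₃)‖x_{k+1} − x_k‖ + L₂‖A − I‖·‖σ_k − 𝒥σ_k‖, where ‖A − I‖ is the ℓ₂-operator norm. -/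
noncomputable section
open scoped BigOperators

lemma piLp2_norm_le_of_forall {ι : Type*} [Fintype ι] {E F : ι → Type*}
    [∀ i, SeminormedAddCommGroup (E i)] [∀ i, SeminormedAddCommGroup (F i)]
    (u : PiLp 2 E) (v : PiLp 2 F) (C : ℝ) (hC : 0 ≤ C) (h : ∀ i, ‖u i‖ ≤ C * ‖v i‖) :
    ‖u‖ ≤ C * ‖v‖ := by
  rw [PiLp.norm_eq_of_L2, PiLp.norm_eq_of_L2, ← Real.sqrt_sq hC, ← Real.sqrt_mul (by positivity)]
  apply Real.sqrt_le_sqrt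
  rw [Finset.mul_sum]
  apply Finset.sum_le_sum
  intro i _
  have := h i
  nlinarith [norm_nonneg (u i), norm_nonneg (v i)]

lemma euclid_sum_apply {N d : ℕ} (g : Fin N → EuclideanSpace ℝ (Fin d)) (l : Fin d) :
    (∑ j, g j) l = ∑ j, g j l := by
  induction (Finset.univ : Finset (Fin N)) using Finset.induction_on with
  | empty => simp
  | insert _ _ h ih => rw [Finset.sum_insert h, Finset.sum_insert h, ← ih]; rfl

lemma block_apply_norm_le {N d : ℕ} (M : Matrix (Fin N) (Fin N) ℝ) (z w : StackedY N d)
    (hwdef : ∀ i, w i = ∑ j, M i j • z j) :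
    ‖w‖ ≤ matrixL2OpNorm M * ‖z‖ := by
  have hM : 0 ≤ matrixL2OpNorm M := norm_nonneg _
  have hsq : ∀ (u : StackedY N d) (i : Fin N), ‖u i‖ ^ 2 = ∑ l, (u i l) ^ 2 := by
    intro u i
    rw [EuclideanSpace.norm_eq, Real.sq_sqrt (by positivity)]
    simp [Real.norm_eq_abs, sq_abs]
  have key : ‖w‖ ^ 2 ≤ (matrixL2OpNorm M * ‖z‖) ^ 2 := by
    rw [PiLp.norm_sq_eq_of_L2]
    calc ∑ i, ‖w i‖ ^ 2
        = ∑ i, ∑ l, (∑ j, M i j * z j l) ^ 2 := by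
          apply Finset.sum_congr rfl; intro i _
          rw [hsq w i]
          apply Finset.sum_congr rfl; intro l _
          rw [hwdef i, euclid_sum_apply]
          congr 1
      _ = ∑ l, ∑ i, (∑ j, M i j * z j l) ^ 2 := Finset.sum_comm
      _ ≤ ∑ l : Fin d, (matrixL2OpNorm M) ^ 2 * ∑ j, (z j l) ^ 2 := by
          apply Finset.sum_le_sum; intro l _
          set v : EuclideanSpace ℝ (Fin N) := (WithLp.equiv 2 _).symm (fun j => z j l) with hv
          have h1 : ‖Matrix.toEuclideanLin M v‖ ≤ matrixL2OpNorm M * ‖v‖ := by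
            have h := (LinearMap.toContinuousLinearMap (Matrix.toEuclideanLin M)).le_opNorm v
            rw [LinearMap.coe_toContinuousLinearMap'] at h
            exact h
          have hcomp : ∀ i, Matrix.toEuclideanLin M v i = ∑ j, M i j * z j l := by
            intro i
            rw [Matrix.toEuclideanLin_apply]
            simp [hv, Matrix.mulVec, dotProduct]
          have h2 : ‖Matrix.toEuclideanLin M v‖ ^ 2 = ∑ i, (∑ j, M i j * z j l) ^ 2 := by
            rw [EuclideanSpace.norm_eq, Real.sq_sqrt (by positivity)]
            apply Finset.sum_congr rfl; intro i _
            rw [hcomp i]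
            simp [Real.norm_eq_abs, sq_abs]
          have h3 : ‖v‖ ^ 2 = ∑ j, (z j l) ^ 2 := by
            rw [EuclideanSpace.norm_eq, Real.sq_sqrt (by positivity)]
            apply Finset.sum_congr rfl; intro j _
            simp [hv, Real.norm_eq_abs, sq_abs]
          calc ∑ i, (∑ j, M i j * z j l) ^ 2 = ‖Matrix.toEuclideanLin M v‖ ^ 2 := h2.symm
            _ ≤ (matrixL2OpNorm M * ‖v‖) ^ 2 := by
                nlinarith [norm_nonneg (Matrix.toEuclideanLin M v), norm_nonneg v, hM]
            _ = matrixL2OpNorm M ^ 2 * ‖v‖ ^ 2 := by ring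
            _ = matrixL2OpNorm M ^ 2 * ∑ j, (z j l) ^ 2 := by rw [h3]
      _ = (matrixL2OpNorm M) ^ 2 * ∑ j, ∑ l, (z j l) ^ 2 := by
          rw [← Finset.mul_sum, Finset.sum_comm]
      _ = (matrixL2OpNorm M) ^ 2 * ∑ j, ‖z j‖ ^ 2 := by
          congr 1; apply Finset.sum_congr rfl; intro j _; rw [hsq z j]
      _ = (matrixL2OpNorm M * ‖z‖) ^ 2 := by
          rw [mul_pow, PiLp.norm_sq_eq_of_L2 _ z]
  have h0 : 0 ≤ matrixL2OpNorm M * ‖z‖ := by positivity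
  nlinarith [norm_nonneg w]

lemma scalar_zero_of_neg_mul {c t : ℝ} (h : 0 ≤ c * t) (hc : c < 0) (ht : 0 ≤ t) : t = 0 :=
  le_antisymm (by nlinarith) ht


/-- If the stacked map `∇₂f` is `L₂`-Lipschitz, each `φᵢ` has `‖∇φᵢ‖ ≤ L₃`,
`A` is nonnegative doubly stochastic, and
`σ_{k+1,i} = Σⱼ a_{ij}σ_{k,j} + φᵢ(x_{k+1,i}) - φᵢ(x_{k,i})`, then
`‖∇₂f(x_{k+1},σ_{k+1}) - ∇₂f(x_k,σ_k)‖ ≤ L₂(1+L₃)‖x_{k+1} - x_k‖ + L₂‖A - I‖·‖σ_k - 𝒥σ_k‖`,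
with `‖A - I‖` the ℓ₂-operator norm. -/
theorem dgt_grad2_successive_step (N d : ℕ) (hN : 0 < N) (nn : Fin N → ℕ) (L₂ L₃ : ℝ)
    (φ : ∀ i, EuclideanSpace ℝ (Fin (nn i)) → EuclideanSpace ℝ (Fin d))
    (f : ∀ i, EuclideanSpace ℝ (Fin (nn i)) → EuclideanSpace ℝ (Fin d) → ℝ)
    (hφdiff : ∀ i, Differentiable ℝ (φ i))
    (hfdiff : ∀ i, Differentiable ℝ
      (fun p : EuclideanSpace ℝ (Fin (nn i)) × EuclideanSpace ℝ (Fin d) => f i p.1 p.2))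
    (g2 : ∀ i, EuclideanSpace ℝ (Fin (nn i)) → EuclideanSpace ℝ (Fin d) →
      EuclideanSpace ℝ (Fin d))
    (hg2 : ∀ i u s, g2 i u s = gradient (f i u) s)
    (hG2lip : ∀ (x x' : StackedX N nn) (y y' : StackedY N d),
      ‖stackedGrad2 g2 x y - stackedGrad2 g2 x' y'‖ ≤ L₂ * (‖x - x'‖ + ‖y - y'‖))
    (hφbound : ∀ (i : Fin N) (xi : EuclideanSpace ℝ (Fin (nn i))), ‖fderiv ℝ (φ i) xi‖ ≤ L₃)
    (A : Matrix (Fin N) (Fin N) ℝ)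
    (hA0 : ∀ i j, 0 ≤ A i j)
    (hrow : ∀ i, ∑ j, A i j = 1) (hcol : ∀ j, ∑ i, A i j = 1)
    (xk xk1 : StackedX N nn) (σk σk1 : StackedY N d)
    (hσup : ∀ i, σk1 i = ∑ j, A i j • σk j + φ i (xk1 i) - φ i (xk i)) :
    ‖stackedGrad2 g2 xk1 σk1 - stackedGrad2 g2 xk σk‖ ≤
      L₂ * (1 + L₃) * ‖xk1 - xk‖ + L₂ * matrixL2OpNorm (A - 1) * ‖σk - Jmap σk‖ := by
  have hL3 : 0 ≤ L₃ := le_trans (norm_nonneg _) (hφbound ⟨0, hN⟩ 0)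
  set u : StackedY N d := WithLp.toLp 2 (fun i => ∑ j, (A - 1) i j • ((σk - Jmap σk) j)) with hudef
  set w : StackedY N d := WithLp.toLp 2 (fun i => φ i (xk1 i) - φ i (xk i)) with hwdef
  -- u i computed
  have hui : ∀ i, u i = (∑ j, A i j • σk j) - σk i := by
    intro i
    have hJconst : ∀ j, (σk - Jmap σk) j = σk j - Jmap σk j := fun j => rfl
    have : u i = ∑ j, ((A i j - (1 : Matrix (Fin N) (Fin N) ℝ) i j) •
        (σk j - ((N : ℝ)⁻¹ • ∑ m, σk m))) := by
      rw [hudef]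
      show ∑ j, (A - 1) i j • ((σk - Jmap σk) j) = _
      apply Finset.sum_congr rfl; intro j _
      rfl
    rw [this]
    have expand : ∀ j, (A i j - (1 : Matrix (Fin N) (Fin N) ℝ) i j) •
        (σk j - ((N : ℝ)⁻¹ • ∑ m, σk m))
        = A i j • σk j - (1 : Matrix (Fin N) (Fin N) ℝ) i j • σk j
          - (A i j - (1 : Matrix (Fin N) (Fin N) ℝ) i j) • ((N : ℝ)⁻¹ • ∑ m, σk m) := by
      intro j
      rw [smul_sub, sub_smul]
    rw [Finset.sum_congr rfl (fun j _ => expand j), Finset.sum_sub_distrib,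
      Finset.sum_sub_distrib, ← Finset.sum_smul]
    have h1 : ∑ j, (A i j - (1 : Matrix (Fin N) (Fin N) ℝ) i j) = 0 := by
      rw [Finset.sum_sub_distrib, hrow i]
      simp [Matrix.one_apply]
    have h2 : ∑ j, (1 : Matrix (Fin N) (Fin N) ℝ) i j • σk j = σk i := by
      simp [Matrix.one_apply, ite_smul]
    rw [h1, h2, zero_smul, sub_zero]
  have heq : σk1 - σk = u + w := by
    refine PiLp.ext (fun i => ?_)
    show σk1 i - σk i = u i + w i
    have hwi : w i = φ i (xk1 i) - φ i (xk i) := rfl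
    rw [hσup i, hui i, hwi]
    abel
  have hu : ‖u‖ ≤ matrixL2OpNorm (A - 1) * ‖σk - Jmap σk‖ :=
    block_apply_norm_le (A - 1) (σk - Jmap σk) u (fun i => rfl)
  have hwb : ‖w‖ ≤ L₃ * ‖xk1 - xk‖ := by
    apply piLp2_norm_le_of_forall w (xk1 - xk) L₃ hL3
    intro i
    have hmvt : ‖φ i (xk1 i) - φ i (xk i)‖ ≤ L₃ * ‖xk1 i - xk i‖ :=
      (convex_univ).norm_image_sub_le_of_norm_fderiv_le
        (fun x _ => (hφdiff i).differentiableAt)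
        (fun x _ => hφbound i x) (Set.mem_univ _) (Set.mem_univ _)
    exact hmvt
  have hΔσ : ‖σk1 - σk‖ ≤ L₃ * ‖xk1 - xk‖ + matrixL2OpNorm (A - 1) * ‖σk - Jmap σk‖ := by
    rw [heq]
    calc ‖u + w‖ ≤ ‖u‖ + ‖w‖ := norm_add_le u w
      _ ≤ matrixL2OpNorm (A - 1) * ‖σk - Jmap σk‖ + L₃ * ‖xk1 - xk‖ := add_le_add hu hwb
      _ = _ := by ring
  have hmain := hG2lip xk1 xk σk1 σk
  by_cases hL2 : 0 ≤ L₂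
  · calc ‖stackedGrad2 g2 xk1 σk1 - stackedGrad2 g2 xk σk‖
        ≤ L₂ * (‖xk1 - xk‖ + ‖σk1 - σk‖) := hmain
      _ ≤ L₂ * (‖xk1 - xk‖ + (L₃ * ‖xk1 - xk‖ + matrixL2OpNorm (A - 1) * ‖σk - Jmap σk‖)) := by
          apply mul_le_mul_of_nonneg_left _ hL2
          exact add_le_add_right hΔσ _
      _ = L₂ * (1 + L₃) * ‖xk1 - xk‖ + L₂ * matrixL2OpNorm (A - 1) * ‖σk - Jmap σk‖ := by ring
  · push_neg at hL2
    -- L₂ < 0 forces all the relevant norms to vanish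
    have hx0 : ‖xk1 - xk‖ = 0 := by
      have h := hG2lip xk1 xk σk σk
      rw [show ‖σk - σk‖ = (0 : ℝ) by rw [sub_self, norm_zero]] at h
      have h' : (0 : ℝ) ≤ L₂ * (‖xk1 - xk‖ + 0) := le_trans (norm_nonneg _) h
      rw [add_zero] at h'
      exact scalar_zero_of_neg_mul h' hL2 (norm_nonneg _)
    have hσ0 : ‖σk1 - σk‖ = 0 := by
      have h := hG2lip xk xk σk1 σk
      rw [show ‖xk - xk‖ = (0 : ℝ) by rw [sub_self, norm_zero]] at h
      have h' : (0 : ℝ) ≤ L₂ * (0 + ‖σk1 - σk‖) := le_trans (norm_nonneg _) h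
      rw [zero_add] at h'
      exact scalar_zero_of_neg_mul h' hL2 (norm_nonneg _)
    have hJ0 : ‖σk - Jmap σk‖ = 0 := by
      have h := hG2lip xk xk σk (Jmap σk)
      rw [show ‖xk - xk‖ = (0 : ℝ) by rw [sub_self, norm_zero]] at h
      have h' : (0 : ℝ) ≤ L₂ * (0 + ‖σk - Jmap σk‖) := le_trans (norm_nonneg _) h
      rw [zero_add] at h'
      exact scalar_zero_of_neg_mul h' hL2 (norm_nonneg _)
    rw [hx0, hJ0, mul_zero, mul_zero, add_zero]
    refine le_trans hmain ?_
    rw [hx0, hσ0]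
    norm_num
end
end
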